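/- arXiv:2110.09701 — 13 statements merged into one kernel-verified Lean document; each statement's English description precedes it below -/
import Mathlib

section
/- If H is an r-uniform hypergraph with n vertices and q ≥ 1 edges, and H admits at least r^{l-1} + 1 pairwise distinct r-partitions for some integer l ≥ 1, then there exists an r-partite r-uniform hypergraph with n − l vertices and exactly q edges. -/
section Aux
variable {V : Type} [DecidableEq V]

/-- A relative r-partition: blocks partition the finset `S`. -/
def RPartOn (r : ℕ) (H : Finset (Finset V)) (P : Finset (Finset V)) (S : Finset V) : Prop :=
  P.card = r ∧ (∀ b ∈ P, b.Nonempty) ∧ (∀ b ∈ P, b ⊆ S) ∧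
    (∀ v ∈ S, ∃! b, b ∈ P ∧ v ∈ b) ∧ ∀ e ∈ H, ∀ b ∈ P, (e ∩ b).card = 1

lemma block_eq {r : ℕ} {H P : Finset (Finset V)} {S : Finset V}
    (hP : RPartOn r H P S) {b b' : Finset V} (hb : b ∈ P) (hb' : b' ∈ P)
    {x : V} (hx : x ∈ b) (hx' : x ∈ b') : b = b' := by
  obtain ⟨c, -, hu⟩ := hP.2.2.2.1 x (hP.2.2.1 b hb hx)
  rw [hu b ⟨hb, hx⟩, hu b' ⟨hb', hx'⟩]

lemma edge_subset {r : ℕ} {H P : Finset (Finset V)} {S : Finset V}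
    (hP : RPartOn r H P S) {e : Finset V} (he : e ∈ H) (hcard : e.card = r) : e ⊆ S := by
  have hdisj : ∀ b ∈ P, ∀ b' ∈ P, b ≠ b' → Disjoint (e ∩ b) (e ∩ b') := by
    intro b hb b' hb' hne
    rw [Finset.disjoint_left]
    intro x hx hx'
    exact hne (block_eq hP hb hb' (Finset.mem_of_mem_inter_right hx)
      (Finset.mem_of_mem_inter_right hx'))
  have hsub : P.biUnion (fun b => e ∩ b) ⊆ e := by
    intro x hx
    obtain ⟨b, -, hx⟩ := Finset.mem_biUnion.mp hx
    exact Finset.mem_of_mem_inter_left hx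
  have hcardu : (P.biUnion (fun b => e ∩ b)).card = r := by
    rw [Finset.card_biUnion hdisj]
    rw [Finset.sum_congr rfl (fun b hb => hP.2.2.2.2 e he b hb), Finset.sum_const,
      hP.1, smul_eq_mul, mul_one]
  have heq : P.biUnion (fun b => e ∩ b) = e :=
    Finset.eq_of_subset_of_card_le hsub (by rw [hcardu, hcard])
  intro x hx
  rw [← heq] at hx
  obtain ⟨b, hb, hx⟩ := Finset.mem_biUnion.mp hx
  exact hP.2.2.1 b hb (Finset.mem_of_mem_inter_right hx)

open Classical in
/-- the representative in `e₀` of the block of `x` in partition `R`. -/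
noncomputable def repv (e₀ : Finset V) (R : Finset (Finset V)) (x : V) : V :=
  if h : ∃ y, ∃ b, b ∈ R ∧ x ∈ b ∧ e₀ ∩ b = {y} then h.choose else x

lemma repv_spec {r : ℕ} {H R : Finset (Finset V)} {S : Finset V}
    (hR : RPartOn r H R S) {e₀ : Finset V} (he : e₀ ∈ H) {x : V} (hx : x ∈ S) :
    ∃ b, b ∈ R ∧ x ∈ b ∧ e₀ ∩ b = {repv e₀ R x} := by
  classical
  obtain ⟨b, ⟨hbR, hxb⟩, -⟩ := hR.2.2.2.1 x hx
  obtain ⟨y, hy⟩ := Finset.card_eq_one.mp (hR.2.2.2.2 e₀ he b hbR)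
  have hex : ∃ y, ∃ b, b ∈ R ∧ x ∈ b ∧ e₀ ∩ b = {y} := ⟨y, b, hbR, hxb, hy⟩
  rw [repv, dif_pos hex]
  exact hex.choose_spec

lemma repv_mem_e₀ {r : ℕ} {H R : Finset (Finset V)} {S : Finset V}
    (hR : RPartOn r H R S) {e₀ : Finset V} (he : e₀ ∈ H) {x : V} (hx : x ∈ S) :
    repv e₀ R x ∈ e₀ := by
  obtain ⟨b, -, -, hb⟩ := repv_spec hR he hx
  have : repv e₀ R x ∈ e₀ ∩ b := by rw [hb]; exact Finset.mem_singleton_self _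
  exact Finset.mem_of_mem_inter_left this

lemma repv_eq_of_mem {r : ℕ} {H R : Finset (Finset V)} {S : Finset V}
    (hR : RPartOn r H R S) {e₀ : Finset V} (he : e₀ ∈ H) {x : V} (hx : x ∈ S)
    {b : Finset V} (hb : b ∈ R) (hxb : x ∈ b) {u : V} (hu : u ∈ e₀ ∩ b) :
    repv e₀ R x = u := by
  obtain ⟨b', hb', hxb', hrep⟩ := repv_spec hR he hx
  have hbb : b' = b := block_eq hR hb' hb hxb' hxb
  rw [hbb] at hrep
  rw [hrep] at hu
  exact (Finset.mem_singleton.mp hu).symm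

/-- if `w ∈ e₀` then its representative is itself -/
lemma repv_self {r : ℕ} {H R : Finset (Finset V)} {S : Finset V}
    (hR : RPartOn r H R S) {e₀ : Finset V} (he : e₀ ∈ H) {w : V} (hw : w ∈ S)
    (hwe : w ∈ e₀) : repv e₀ R w = w := by
  obtain ⟨b, hb, hwb, -⟩ := repv_spec hR he hw
  exact repv_eq_of_mem hR he hw hb hwb (Finset.mem_inter.mpr ⟨hwe, hwb⟩)

lemma repv_eq_of_sameblock {r : ℕ} {H R : Finset (Finset V)} {S : Finset V}
    (hR : RPartOn r H R S) {e₀ : Finset V} (he : e₀ ∈ H) {x y : V}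
    (hx : x ∈ S) (hy : y ∈ S) {b : Finset V} (hb : b ∈ R) (hxb : x ∈ b) (hyb : y ∈ b) :
    repv e₀ R x = repv e₀ R y := by
  obtain ⟨c, hc, hyc, hcrep⟩ := repv_spec hR he hy
  have : c = b := block_eq hR hc hb hyc hyb
  subst this
  exact repv_eq_of_mem hR he hx hc hxb (by rw [hcrep]; exact Finset.mem_singleton_self _)

lemma sameblock_of_repv_eq {r : ℕ} {H R : Finset (Finset V)} {S : Finset V}
    (hR : RPartOn r H R S) {e₀ : Finset V} (he : e₀ ∈ H) {x y : V}
    (hx : x ∈ S) (hy : y ∈ S) (h : repv e₀ R x = repv e₀ R y) :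
    ∃ b, b ∈ R ∧ x ∈ b ∧ y ∈ b := by
  obtain ⟨b, hb, hxb, hbrep⟩ := repv_spec hR he hx
  obtain ⟨c, hc, hyc, hcrep⟩ := repv_spec hR he hy
  have hm1 : repv e₀ R x ∈ e₀ ∩ b := by rw [hbrep]; exact Finset.mem_singleton_self _
  have hm2 : repv e₀ R x ∈ e₀ ∩ c := by rw [h, hcrep]; exact Finset.mem_singleton_self _
  have : b = c := block_eq hR hb hc
    (Finset.mem_of_mem_inter_right hm1) (Finset.mem_of_mem_inter_right hm2)
  exact ⟨b, hb, hxb, this ▸ hyc⟩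

/-- A partition is determined by its `repv` function. -/
lemma part_eq_of_repv_eq {r : ℕ} {H R R' : Finset (Finset V)} {S : Finset V}
    (hR : RPartOn r H R S) (hR' : RPartOn r H R' S) {e₀ : Finset V} (he : e₀ ∈ H)
    (h : ∀ x ∈ S, repv e₀ R x = repv e₀ R' x) : R = R' := by
  have key : ∀ (R₁ R₂ : Finset (Finset V)), RPartOn r H R₁ S → RPartOn r H R₂ S →
      (∀ x ∈ S, repv e₀ R₁ x = repv e₀ R₂ x) → R₁ ⊆ R₂ := by
    intro R₁ R₂ h₁ h₂ heq b hb
    obtain ⟨w, hwb⟩ := h₁.2.1 b hb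
    have hwS : w ∈ S := h₁.2.2.1 b hb hwb
    obtain ⟨b', hb', hwb'⟩ : ∃ b', b' ∈ R₂ ∧ w ∈ b' := by
      obtain ⟨b', ⟨hb', hwb'⟩, -⟩ := h₂.2.2.2.1 w hwS
      exact ⟨b', hb', hwb'⟩
    have hbeq : b = b' := by
      apply Finset.Subset.antisymm
      · intro x hxb
        have hxS : x ∈ S := h₁.2.2.1 b hb hxb
        have h1 : repv e₀ R₁ x = repv e₀ R₁ w := repv_eq_of_sameblock h₁ he hxS hwS hb hxb hwb
        have h2 : repv e₀ R₂ x = repv e₀ R₂ w := by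
          rw [← heq x hxS, ← heq w hwS]; exact h1
        obtain ⟨c, hc, hxc, hwc⟩ := sameblock_of_repv_eq h₂ he hxS hwS h2
        have : c = b' := block_eq h₂ hc hb' hwc hwb'
        exact this ▸ hxc
      · intro x hxb'
        have hxS : x ∈ S := h₂.2.2.1 b' hb' hxb'
        have h2 : repv e₀ R₂ x = repv e₀ R₂ w := repv_eq_of_sameblock h₂ he hxS hwS hb' hxb' hwb'
        have h1 : repv e₀ R₁ x = repv e₀ R₁ w := by
          rw [heq x hxS, heq w hwS]; exact h2
        obtain ⟨c, hc, hxc, hwc⟩ := sameblock_of_repv_eq h₁ he hxS hwS h1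
        have : c = b := block_eq h₁ hc hb hwc hwb
        exact this ▸ hxc
    rw [hbeq]; exact hb'
  exact Finset.Subset.antisymm (key R R' hR hR' h)
    (key R' R hR' hR (fun x hx => (h x hx).symm))

def mergeMap (u v : V) : V → V := fun x => if x = v then u else x

lemma mergeMap_img_of_notMem {u v : V} {e : Finset V} (hv : v ∉ e) :
    e.image (mergeMap u v) = e := by
  rw [Finset.image_congr (g := id), Finset.image_id]
  intro x hx
  simp only [mergeMap, id]
  rw [if_neg]
  rintro rfl; exact hv hx

lemma mergeMap_img_of_mem {u v : V} {e : Finset V} (hv : v ∈ e) (hu : u ∉ e) :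
    e.image (mergeMap u v) = insert u (e.erase v) := by
  ext x
  simp only [Finset.mem_image, Finset.mem_insert, Finset.mem_erase, mergeMap]
  constructor
  · rintro ⟨y, hy, rfl⟩
    by_cases h : y = v
    · subst h; rw [if_pos rfl]; exact Or.inl rfl
    · rw [if_neg h]; exact Or.inr ⟨h, hy⟩
  · rintro (rfl | ⟨hx, hxe⟩)
    · exact ⟨v, hv, if_pos rfl⟩
    · exact ⟨x, hxe, if_neg hx⟩

lemma mergeMap_card {u v : V} {e : Finset V} (hA : ¬(u ∈ e ∧ v ∈ e)) :
    (e.image (mergeMap u v)).card = e.card := by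
  by_cases hv : v ∈ e
  · have hu : u ∉ e := fun hu => hA ⟨hu, hv⟩
    rw [mergeMap_img_of_mem hv hu, Finset.card_insert_of_notMem
      (fun h => hu (Finset.mem_of_mem_erase h)), Finset.card_erase_of_mem hv]
    have : 1 ≤ e.card := Finset.card_pos.mpr ⟨v, hv⟩
    omega
  · rw [mergeMap_img_of_notMem hv]

lemma not_both {r : ℕ} {H P : Finset (Finset V)} {S : Finset V}
    (hP : RPartOn r H P S) {u v : V} (hne : u ≠ v)
    (hsame : ∃ b, b ∈ P ∧ u ∈ b ∧ v ∈ b) : ∀ e ∈ H, ¬(u ∈ e ∧ v ∈ e) := by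
  rintro e he ⟨hue, hve⟩
  obtain ⟨b, hb, hub, hvb⟩ := hsame
  have h1 : (e ∩ b).card = 1 := hP.2.2.2.2 e he b hb
  have : 1 < (e ∩ b).card :=
    Finset.one_lt_card.mpr ⟨u, Finset.mem_inter.mpr ⟨hue, hub⟩,
      v, Finset.mem_inter.mpr ⟨hve, hvb⟩, hne⟩
  omega

lemma merge_inj {r : ℕ} {H Q : Finset (Finset V)} {S : Finset V}
    (hQ : RPartOn r H Q S) {u v : V} (hne : u ≠ v) (huS : u ∈ S)
    (hsep : ∀ b ∈ Q, ¬(u ∈ b ∧ v ∈ b))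
    (hA : ∀ e ∈ H, ¬(u ∈ e ∧ v ∈ e)) :
    ∀ e ∈ H, ∀ e' ∈ H, e.image (mergeMap u v) = e'.image (mergeMap u v) → e = e' := by
  -- first, an asymmetric helper
  have key : ∀ e ∈ H, ∀ e' ∈ H, v ∈ e → v ∉ e' →
      e.image (mergeMap u v) ≠ e'.image (mergeMap u v) := by
    intro e he e' he' hv hv' hcontra
    have hu : u ∉ e := fun h => hA e he ⟨h, hv⟩
    rw [mergeMap_img_of_mem hv hu, mergeMap_img_of_notMem hv'] at hcontra
    -- u ∈ e'
    have hue' : u ∈ e' := by rw [← hcontra]; exact Finset.mem_insert_self _ _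
    -- the Q-block of u
    obtain ⟨bu, ⟨hbu, hubu⟩, -⟩ := hQ.2.2.2.1 u huS
    obtain ⟨w, hw⟩ := Finset.card_eq_one.mp (hQ.2.2.2.2 e he bu hbu)
    have hwmem : w ∈ e ∩ bu := hw ▸ Finset.mem_singleton_self w
    have hwe : w ∈ e := Finset.mem_of_mem_inter_left hwmem
    have hwbu : w ∈ bu := Finset.mem_of_mem_inter_right hwmem
    have hwv : w ≠ v := by rintro rfl; exact hsep bu hbu ⟨hubu, hwbu⟩
    have hwu : w ≠ u := by rintro rfl; exact hu hwe
    have hwe' : w ∈ e' := by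
      rw [← hcontra]
      exact Finset.mem_insert_of_mem (Finset.mem_erase.mpr ⟨hwv, hwe⟩)
    have : 1 < (e' ∩ bu).card := Finset.one_lt_card.mpr
      ⟨u, Finset.mem_inter.mpr ⟨hue', hubu⟩, w, Finset.mem_inter.mpr ⟨hwe', hwbu⟩,
        fun h => hwu h.symm⟩
    have h1 : (e' ∩ bu).card = 1 := hQ.2.2.2.2 e' he' bu hbu
    omega
  intro e he e' he' heq
  by_cases hv : v ∈ e <;> by_cases hv' : v ∈ e'
  · -- both contain v
    have hu : u ∉ e := fun h => hA e he ⟨h, hv⟩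
    have hu' : u ∉ e' := fun h => hA e' he' ⟨h, hv'⟩
    rw [mergeMap_img_of_mem hv hu, mergeMap_img_of_mem hv' hu'] at heq
    have he1 : e.erase v = e'.erase v := by
      have h1 : (insert u (e.erase v)).erase u = e.erase v :=
        Finset.erase_insert (fun h => hu (Finset.mem_of_mem_erase h))
      have h2 : (insert u (e'.erase v)).erase u = e'.erase v :=
        Finset.erase_insert (fun h => hu' (Finset.mem_of_mem_erase h))
      rw [← h1, ← h2, heq]
    rw [← Finset.insert_erase hv, ← Finset.insert_erase hv', he1]
  · exact absurd heq (key e he e' he' hv hv')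
  · exact absurd heq.symm (key e' he' e he hv' hv)
  · rw [mergeMap_img_of_notMem hv, mergeMap_img_of_notMem hv'] at heq
    exact heq

lemma lift_part {r : ℕ} {H R : Finset (Finset V)} {S : Finset V}
    (hH : ∀ e ∈ H, e.card = r)
    (hR : RPartOn r H R S) {u v : V} (hne : u ≠ v)
    (hsameR : ∃ b, b ∈ R ∧ u ∈ b ∧ v ∈ b)
    (hA : ∀ e ∈ H, ¬(u ∈ e ∧ v ∈ e)) :
    RPartOn r (H.image (fun e => e.image (mergeMap u v)))
      (R.image (fun b => b.erase v)) (S.erase v) := by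
  obtain ⟨buv, hbuv, hubuv, hvbuv⟩ := hsameR
  have huS : u ∈ S := hR.2.2.1 buv hbuv hubuv
  have hvS : v ∈ S := hR.2.2.1 buv hbuv hvbuv
  -- v belongs only to buv; u belongs only to buv
  have hvonly : ∀ b ∈ R, v ∈ b → b = buv := fun b hb hvb => block_eq hR hb hbuv hvb hvbuv
  have huonly : ∀ b ∈ R, u ∈ b → b = buv := fun b hb hub => block_eq hR hb hbuv hub hubuv
  have herase_inj : ∀ b ∈ R, ∀ b' ∈ R, b.erase v = b'.erase v → b = b' := by
    intro b hb b' hb' heq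
    by_cases h1 : v ∈ b <;> by_cases h2 : v ∈ b'
    · rw [hvonly b hb h1, hvonly b' hb' h2]
    · rw [hvonly b hb h1] at heq ⊢
      have : u ∈ buv.erase v := Finset.mem_erase.mpr ⟨hne, hubuv⟩
      rw [heq, Finset.erase_eq_of_notMem h2] at this
      rw [huonly b' hb' this] at h2
      exact absurd hvbuv h2
    · rw [hvonly b' hb' h2] at heq ⊢
      have : u ∈ buv.erase v := Finset.mem_erase.mpr ⟨hne, hubuv⟩
      rw [← heq, Finset.erase_eq_of_notMem h1] at this
      rw [huonly b hb this] at h1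
      exact absurd hvbuv h1
    · rwa [Finset.erase_eq_of_notMem h1, Finset.erase_eq_of_notMem h2] at heq
  refine ⟨?_, ?_, ?_, ?_, ?_⟩
  · rw [Finset.card_image_of_injOn (fun b hb b' hb' => herase_inj b hb b' hb'), hR.1]
  · intro c hc
    obtain ⟨b, hb, rfl⟩ := Finset.mem_image.mp hc
    by_cases h : v ∈ b
    · rw [hvonly b hb h]
      exact ⟨u, Finset.mem_erase.mpr ⟨hne, hubuv⟩⟩
    · rw [Finset.erase_eq_of_notMem h]
      exact hR.2.1 b hb
  · intro c hc
    obtain ⟨b, hb, rfl⟩ := Finset.mem_image.mp hc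
    exact Finset.erase_subset_erase v (hR.2.2.1 b hb)
  · intro x hx
    have hxS : x ∈ S := Finset.mem_of_mem_erase hx
    have hxv : x ≠ v := (Finset.mem_erase.mp hx).1
    obtain ⟨b, ⟨hb, hxb⟩, -⟩ := hR.2.2.2.1 x hxS
    refine ⟨b.erase v, ⟨Finset.mem_image_of_mem _ hb, Finset.mem_erase.mpr ⟨hxv, hxb⟩⟩, ?_⟩
    rintro c ⟨hc, hxc⟩
    obtain ⟨b', hb', rfl⟩ := Finset.mem_image.mp hc
    have hxb' : x ∈ b' := Finset.mem_of_mem_erase hxc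
    rw [block_eq hR hb' hb hxb' hxb]
  · intro e1 he1 c hc
    obtain ⟨e, he, rfl⟩ := Finset.mem_image.mp he1
    obtain ⟨b, hb, rfl⟩ := Finset.mem_image.mp hc
    by_cases hv : v ∈ e
    · have hu : u ∉ e := fun h => hA e he ⟨h, hv⟩
      rw [mergeMap_img_of_mem hv hu]
      by_cases hvb : v ∈ b
      · -- b = buv; the intersection is {u}
        have hbeq : b = buv := hvonly b hb hvb
        subst hbeq
        have hev : e ∩ b = {v} := by
          obtain ⟨y, hy⟩ := Finset.card_eq_one.mp (hR.2.2.2.2 e he b hb)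
          have : v ∈ e ∩ b := Finset.mem_inter.mpr ⟨hv, hvb⟩
          rw [hy] at this ⊢
          rw [Finset.mem_singleton.mp this]
        have : insert u (e.erase v) ∩ b.erase v = {u} := by
          apply Finset.eq_singleton_iff_unique_mem.mpr
          constructor
          · exact Finset.mem_inter.mpr ⟨Finset.mem_insert_self _ _,
              Finset.mem_erase.mpr ⟨hne, hubuv⟩⟩
          · intro x hxmem
            obtain ⟨hx1, hx2⟩ := Finset.mem_inter.mp hxmem
            rcases Finset.mem_insert.mp hx1 with rfl | hx1'
            · rfl
            · exfalso
              have : x ∈ e ∩ b := Finset.mem_inter.mpr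
                ⟨Finset.mem_of_mem_erase hx1', Finset.mem_of_mem_erase hx2⟩
              rw [hev] at this
              exact (Finset.mem_erase.mp hx2).1 (Finset.mem_singleton.mp this)
        rw [this, Finset.card_singleton]
      · -- v ∉ b hence u ∉ b, intersection unchanged
        have hub : u ∉ b := by
          intro h
          rw [huonly b hb h] at hvb
          exact hvb hvbuv
        rw [Finset.erase_eq_of_notMem hvb]
        have : insert u (e.erase v) ∩ b = e ∩ b := by
          ext x
          simp only [Finset.mem_inter, Finset.mem_insert, Finset.mem_erase]
          constructor
          · rintro ⟨rfl | ⟨hx1, hx2⟩, hxb⟩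
            · exact absurd hxb hub
            · exact ⟨hx2, hxb⟩
          · rintro ⟨hx1, hx2⟩
            refine ⟨Or.inr ⟨?_, hx1⟩, hx2⟩
            rintro rfl; exact hvb hx2
        rw [this]
        exact hR.2.2.2.2 e he b hb
    · rw [mergeMap_img_of_notMem hv]
      by_cases hvb : v ∈ b
      · have hbeq : b = buv := hvonly b hb hvb
        subst hbeq
        have : e ∩ b.erase v = e ∩ b := by
          ext x
          simp only [Finset.mem_inter, Finset.mem_erase]
          constructor
          · rintro ⟨hx1, -, hx2⟩; exact ⟨hx1, hx2⟩
          · rintro ⟨hx1, hx2⟩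
            exact ⟨hx1, fun h => hv (h ▸ hx1), hx2⟩
        rw [this]
        exact hR.2.2.2.2 e he b hb
      · rw [Finset.erase_eq_of_notMem hvb]
        exact hR.2.2.2.2 e he b hb

lemma lift_inj {r : ℕ} {H R R' : Finset (Finset V)} {S : Finset V}
    (hR : RPartOn r H R S) (hR' : RPartOn r H R' S) {u v : V} (hne : u ≠ v)
    (hsameR : ∃ b, b ∈ R ∧ u ∈ b ∧ v ∈ b) (hsameR' : ∃ b, b ∈ R' ∧ u ∈ b ∧ v ∈ b)
    (h : R.image (fun b => b.erase v) = R'.image (fun b => b.erase v)) : R = R' := by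
  have key : ∀ (R₁ R₂ : Finset (Finset V)), RPartOn r H R₁ S → RPartOn r H R₂ S →
      (∃ b, b ∈ R₁ ∧ u ∈ b ∧ v ∈ b) → (∃ b, b ∈ R₂ ∧ u ∈ b ∧ v ∈ b) →
      R₁.image (fun b => b.erase v) = R₂.image (fun b => b.erase v) → R₁ ⊆ R₂ := by
    rintro R₁ R₂ h₁ h₂ ⟨b₁, hb₁, hub₁, hvb₁⟩ ⟨b₂, hb₂, hub₂, hvb₂⟩ heq b hb
    have : b.erase v ∈ R₂.image (fun b => b.erase v) := heq ▸ Finset.mem_image_of_mem _ hb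
    obtain ⟨b', hb', hbb'⟩ := Finset.mem_image.mp this
    by_cases hu : u ∈ b
    · have hbe : b = b₁ := block_eq h₁ hb hb₁ hu hub₁
      subst hbe
      have huerase : u ∈ b'.erase v := hbb' ▸ Finset.mem_erase.mpr ⟨hne, hu⟩
      have hub' : u ∈ b' := Finset.mem_of_mem_erase huerase
      have hvb' : v ∈ b' := block_eq h₂ hb' hb₂ hub' hub₂ ▸ hvb₂
      have : b = b' := by
        rw [← Finset.insert_erase hvb₁, ← Finset.insert_erase hvb', hbb']
      exact this ▸ hb'
    · have hvb : v ∉ b := fun h => hu ((block_eq h₁ hb hb₁ h hvb₁) ▸ hub₁)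
      have h1 : b = b'.erase v := by rw [hbb', Finset.erase_eq_of_notMem hvb]
      have hub' : u ∉ b' := by
        intro h
        have : b' = b₂ := block_eq h₂ hb' hb₂ h hub₂
        subst this
        have : u ∈ b := by rw [h1]; exact Finset.mem_erase.mpr ⟨hne, h⟩
        exact hu this
      have hvb' : v ∉ b' := fun h => hub' ((block_eq h₂ hb' hb₂ h hvb₂) ▸ hub₂)
      rw [h1, Finset.erase_eq_of_notMem hvb']
      exact hb'
  have hsub := key R R' hR hR' hsameR hsameR' h
  have hsub' := key R' R hR' hR hsameR' hsameR h.symm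
  exact Finset.Subset.antisymm hsub hsub'


end Aux
section Main
variable {V : Type} [DecidableEq V]

lemma main_merge {r : ℕ} (hr : 2 ≤ r) :
    ∀ (k : ℕ) (S : Finset V) (H : Finset (Finset V)),
      (∀ e ∈ H, e.card = r) → H.Nonempty →
      ∀ (P : Fin (r ^ k + 1) → Finset (Finset V)), Function.Injective P →
      (∀ i, RPartOn r H (P i) S) →
      ∃ (H' P' : Finset (Finset V)) (S' : Finset V),
        S'.card + (k + 1) = S.card ∧ (∀ e ∈ H', e.card = r) ∧ H'.card = H.card ∧
          H'.Nonempty ∧ RPartOn r H' P' S' := by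
  intro k
  induction k with
  | zero =>
    intro S H hH hHne P hinj hP
    obtain ⟨e₀, he₀⟩ := id hHne
    have hpos : 1 < r ^ 0 + 1 := by simp
    have hne01 : P ⟨0, by omega⟩ ≠ P ⟨1, hpos⟩ := fun h => by
      have := hinj h
      simp only [Fin.mk.injEq] at this
      omega
    set i0 : Fin (r ^ 0 + 1) := ⟨0, by omega⟩ with hi0
    set i1 : Fin (r ^ 0 + 1) := ⟨1, hpos⟩ with hi1
    obtain ⟨w, hwS, hwne⟩ : ∃ w ∈ S, repv e₀ (P i0) w ≠ repv e₀ (P i1) w := by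
      by_contra hcon
      push_neg at hcon
      exact hne01 (part_eq_of_repv_eq (hP i0) (hP i1) he₀ hcon)
    set u := repv e₀ (P i0) w with hu
    have hue₀ : u ∈ e₀ := repv_mem_e₀ (hP i0) he₀ hwS
    obtain ⟨b0, hb0, hwb0, hb0rep⟩ := repv_spec (hP i0) he₀ hwS
    have hub0 : u ∈ b0 := by
      have : u ∈ e₀ ∩ b0 := by rw [hb0rep]; exact Finset.mem_singleton_self _
      exact Finset.mem_of_mem_inter_right this
    have hneuv : u ≠ w := by
      intro h
      exact hwne (h.trans (repv_self (hP i1) he₀ hwS (h ▸ hue₀)).symm)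
    have hsame0 : ∃ b, b ∈ P i0 ∧ u ∈ b ∧ w ∈ b := ⟨b0, hb0, hub0, hwb0⟩
    have hsep1 : ∀ b ∈ P i1, ¬(u ∈ b ∧ w ∈ b) := by
      rintro b hb ⟨hub, hwb⟩
      exact hwne (repv_eq_of_mem (hP i1) he₀ hwS hb hwb
        (Finset.mem_inter.mpr ⟨hue₀, hub⟩)).symm
    have huS : u ∈ S := (hP i0).2.2.1 b0 hb0 hub0
    have hA : ∀ e ∈ H, ¬(u ∈ e ∧ w ∈ e) := not_both (hP i0) hneuv hsame0
    refine ⟨H.image (fun e => e.image (mergeMap u w)),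
      (P i0).image (fun b => b.erase w), S.erase w, ?_, ?_, ?_, ?_, ?_⟩
    · rw [Finset.card_erase_of_mem hwS]
      have : 1 ≤ S.card := Finset.card_pos.mpr ⟨w, hwS⟩
      omega
    · intro e1 he1
      obtain ⟨e, he, rfl⟩ := Finset.mem_image.mp he1
      rw [mergeMap_card (hA e he)]
      exact hH e he
    · exact Finset.card_image_of_injOn
        (fun e he e' he' => merge_inj (hP i1) hneuv huS hsep1 hA e he e' he')
    · exact hHne.image _
    · exact lift_part hH (hP i0) hneuv hsame0 hA
  | succ k ih =>
    intro S H hH hHne P hinj hP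
    obtain ⟨e₀, he₀⟩ := id hHne
    have hrpos : 0 < r := by omega
    have hpos : 1 < r ^ (k + 1) + 1 := by
      have := Nat.one_le_two_pow (n := k + 1)
      have : 0 < r ^ (k + 1) := pow_pos hrpos _
      omega
    have hne01 : P ⟨0, by omega⟩ ≠ P ⟨1, hpos⟩ := fun h => by
      have := hinj h
      simp only [Fin.mk.injEq] at this
      omega
    set i0 : Fin (r ^ (k + 1) + 1) := ⟨0, by omega⟩ with hi0
    set i1 : Fin (r ^ (k + 1) + 1) := ⟨1, hpos⟩ with hi1
    obtain ⟨w, hwS, hwne⟩ : ∃ w ∈ S, repv e₀ (P i0) w ≠ repv e₀ (P i1) w := by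
      by_contra hcon
      push_neg at hcon
      exact hne01 (part_eq_of_repv_eq (hP i0) (hP i1) he₀ hcon)
    -- pigeonhole on values of repv at w
    have hmaps : ∀ i ∈ (Finset.univ : Finset (Fin (r ^ (k + 1) + 1))),
        repv e₀ (P i) w ∈ e₀ := fun i _ => repv_mem_e₀ (hP i) he₀ hwS
    have hmul : e₀.card * r ^ k < (Finset.univ : Finset (Fin (r ^ (k + 1) + 1))).card := by
      rw [hH e₀ he₀, Finset.card_univ, Fintype.card_fin, ← pow_succ']
      omega
    obtain ⟨x, hxe₀, hT⟩ := Finset.exists_lt_card_fiber_of_mul_lt_card_of_maps_to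
      (f := fun i => repv e₀ (P i) w) hmaps hmul
    set T := Finset.filter (fun i => repv e₀ (P i) w = x) Finset.univ with hTdef
    have hTcard : r ^ k + 1 ≤ T.card := hT
    -- an index whose value differs from x
    obtain ⟨j, hj⟩ : ∃ j, repv e₀ (P j) w ≠ x := by
      by_cases h0 : repv e₀ (P i0) w = x
      · exact ⟨i1, fun h => hwne (h0.trans h.symm)⟩
      · exact ⟨i0, h0⟩
    have hneuv : x ≠ w := by
      rintro rfl
      exact hj (repv_self (hP j) he₀ hwS hxe₀)
    have hsame : ∀ i ∈ T, ∃ b, b ∈ P i ∧ x ∈ b ∧ w ∈ b := by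
      intro i hi
      have hfi : repv e₀ (P i) w = x := (Finset.mem_filter.mp hi).2
      obtain ⟨b, hb, hwb, hbrep⟩ := repv_spec (hP i) he₀ hwS
      have : x ∈ e₀ ∩ b := by rw [hbrep, ← hfi]; exact Finset.mem_singleton_self _
      exact ⟨b, hb, Finset.mem_of_mem_inter_right this, hwb⟩
    have hsep : ∀ b ∈ P j, ¬(x ∈ b ∧ w ∈ b) := by
      rintro b hb ⟨hxb, hwb⟩
      exact hj (repv_eq_of_mem (hP j) he₀ hwS hb hwb (Finset.mem_inter.mpr ⟨hxe₀, hxb⟩))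
    obtain ⟨istar, histar⟩ : T.Nonempty := Finset.card_pos.mp (by omega)
    have hsame0 := hsame istar histar
    have hxS : x ∈ S := by
      obtain ⟨b, hb, hxb, -⟩ := hsame0
      exact (hP istar).2.2.1 b hb hxb
    have hA : ∀ e ∈ H, ¬(x ∈ e ∧ w ∈ e) := not_both (hP istar) hneuv hsame0
    set H2 := H.image (fun e => e.image (mergeMap x w)) with hH2
    have hH2unif : ∀ e ∈ H2, e.card = r := by
      intro e1 he1
      obtain ⟨e, he, rfl⟩ := Finset.mem_image.mp he1
      rw [mergeMap_card (hA e he)]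
      exact hH e he
    have hH2card : H2.card = H.card := Finset.card_image_of_injOn
      (fun e he e' he' => merge_inj (hP j) hneuv hxS hsep hA e he e' he')
    set emb := T.orderEmbOfCardLe hTcard with hemb
    have hembmem : ∀ i, emb i ∈ T := fun i => T.orderEmbOfCardLe_mem hTcard i
    set P2 : Fin (r ^ k + 1) → Finset (Finset V) :=
      fun i => (P (emb i)).image (fun b => b.erase w) with hP2def
    have hP2 : ∀ i, RPartOn r H2 (P2 i) (S.erase w) := fun i =>
      lift_part hH (hP (emb i)) hneuv (hsame (emb i) (hembmem i)) hA
    have hP2inj : Function.Injective P2 := by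
      intro i i' h
      have := lift_inj (hP (emb i)) (hP (emb i')) hneuv
        (hsame (emb i) (hembmem i)) (hsame (emb i') (hembmem i')) h
      exact emb.injective (hinj this)
    obtain ⟨H', P', S', hS'card, hH'unif, hH'card, hH'ne, hpart⟩ :=
      ih (S.erase w) H2 hH2unif (hHne.image _) P2 hP2inj hP2
    refine ⟨H', P', S', ?_, hH'unif, hH'card.trans hH2card, hH'ne, hpart⟩
    rw [Finset.card_erase_of_mem hwS] at hS'card
    have : 1 ≤ S.card := Finset.card_pos.mpr ⟨w, hwS⟩
    omega

end Main
/-- An `r`-uniform hypergraph: every edge has exactly `r` vertices. -/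
def IsRUniform {V : Type} [DecidableEq V] (r : ℕ) (H : Finset (Finset V)) : Prop :=
  ∀ e ∈ H, e.card = r

/-- An `r`-partition of an `r`-uniform hypergraph `H` on the vertex set `V`:
a partition of `V` into `r` nonempty blocks such that every edge of `H` meets
every block in exactly one vertex. -/
def IsRPartition {V : Type} [Fintype V] [DecidableEq V] (r : ℕ)
    (H : Finset (Finset V)) (P : Finset (Finset V)) : Prop :=
  P.card = r ∧ (∀ b ∈ P, b.Nonempty) ∧ (∀ v : V, ∃! b, b ∈ P ∧ v ∈ b) ∧
    ∀ e ∈ H, ∀ b ∈ P, (e ∩ b).card = 1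

lemma transport {V : Type} [DecidableEq V] {r m : ℕ} (hr : 1 ≤ r)
    {S' : Finset V} {H' P' : Finset (Finset V)} (hm : S'.card = m)
    (hH' : ∀ e ∈ H', e.card = r) (hpart : RPartOn r H' P' S') :
    ∃ H'' : Finset (Finset (Fin m)),
      IsRUniform r H'' ∧ H''.card = H'.card ∧ ∃ P'', IsRPartition r H'' P'' := by
  classical
  -- S' is nonempty
  obtain ⟨b₀, hb₀⟩ : P'.Nonempty := Finset.card_pos.mp (by rw [hpart.1]; omega)
  obtain ⟨x₀, hx₀b⟩ := hpart.2.1 b₀ hb₀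
  have hx₀ : x₀ ∈ S' := hpart.2.2.1 b₀ hb₀ hx₀b
  have hcards : Fintype.card {x // x ∈ S'} = m := by rw [Fintype.card_coe, hm]
  set ε := Fintype.equivFinOfCardEq hcards with hε
  set g : V → Fin m := fun x => if h : x ∈ S' then ε ⟨x, h⟩ else ε ⟨x₀, hx₀⟩ with hg
  have hgval : ∀ x (h : x ∈ S'), g x = ε ⟨x, h⟩ := by
    intro x h
    simp only [hg, dif_pos h]
  have hginj : ∀ a ∈ S', ∀ b ∈ S', g a = g b → a = b := by
    intro a ha b hb hab
    rw [hgval a ha, hgval b hb] at hab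
    have := ε.injective hab
    exact Subtype.ext_iff.mp this
  have hgsurj : ∀ y : Fin m, ∃ x, x ∈ S' ∧ g x = y := by
    intro y
    refine ⟨(ε.symm y).1, (ε.symm y).2, ?_⟩
    rw [hgval _ (ε.symm y).2]
    rw [show (⟨(ε.symm y).1, (ε.symm y).2⟩ : {x // x ∈ S'}) = ε.symm y from rfl]
    exact ε.apply_symm_apply y
  have hFcard : ∀ s : Finset V, s ⊆ S' → (s.image g).card = s.card := by
    intro s hs
    exact Finset.card_image_of_injOn (fun a ha b hb => hginj a (hs ha) b (hs hb))
  have hFinj : ∀ s : Finset V, s ⊆ S' → ∀ t : Finset V, t ⊆ S' →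
      s.image g = t.image g → s = t := by
    intro s hs t ht hst
    ext a
    constructor
    · intro ha
      have : g a ∈ t.image g := hst ▸ Finset.mem_image_of_mem g ha
      obtain ⟨b, hb, hba⟩ := Finset.mem_image.mp this
      rwa [hginj b (ht hb) a (hs ha) hba] at hb
    · intro ha
      have : g a ∈ s.image g := hst ▸ Finset.mem_image_of_mem g ha
      obtain ⟨b, hb, hba⟩ := Finset.mem_image.mp this
      rwa [hginj b (hs hb) a (ht ha) hba] at hb
  have hFinter : ∀ s : Finset V, s ⊆ S' → ∀ t : Finset V, t ⊆ S' →
      s.image g ∩ t.image g = (s ∩ t).image g := by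
    intro s hs t ht
    ext y
    simp only [Finset.mem_inter, Finset.mem_image]
    constructor
    · rintro ⟨⟨a, ha, rfl⟩, ⟨b, hb, hba⟩⟩
      have : b = a := hginj b (ht hb) a (hs ha) hba
      subst this
      exact ⟨b, ⟨ha, hb⟩, rfl⟩
    · rintro ⟨a, ⟨ha1, ha2⟩, rfl⟩
      exact ⟨⟨a, ha1, rfl⟩, ⟨a, ha2, rfl⟩⟩
  have hedge : ∀ e ∈ H', e ⊆ S' := fun e he => edge_subset hpart he (hH' e he)
  have hblock : ∀ b ∈ P', b ⊆ S' := hpart.2.2.1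
  refine ⟨H'.image (fun e => e.image g), ?_, ?_, P'.image (fun b => b.image g),
    ?_, ?_, ?_, ?_⟩
  · intro e1 he1
    obtain ⟨e, he, rfl⟩ := Finset.mem_image.mp he1
    rw [hFcard e (hedge e he)]
    exact hH' e he
  · exact Finset.card_image_of_injOn
      (fun e he e' he' h => hFinj e (hedge e he) e' (hedge e' he') h)
  · rw [Finset.card_image_of_injOn
      (fun b hb b' hb' h => hFinj b (hblock b hb) b' (hblock b' hb') h)]
    exact hpart.1
  · intro c hc
    obtain ⟨b, hb, rfl⟩ := Finset.mem_image.mp hc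
    exact (hpart.2.1 b hb).image g
  · intro y
    obtain ⟨x, hxS, rfl⟩ := hgsurj y
    obtain ⟨b, ⟨hb, hxb⟩, -⟩ := hpart.2.2.2.1 x hxS
    refine ⟨b.image g, ⟨Finset.mem_image_of_mem _ hb, Finset.mem_image_of_mem g hxb⟩, ?_⟩
    rintro c ⟨hc, hgxc⟩
    obtain ⟨b', hb', rfl⟩ := Finset.mem_image.mp hc
    obtain ⟨z, hzb', hz⟩ := Finset.mem_image.mp hgxc
    have : z = x := hginj z (hblock b' hb' hzb') x hxS hz
    subst this
    congr 1
    obtain ⟨c', -, huniq⟩ := hpart.2.2.2.1 z hxS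
    rw [huniq b' ⟨hb', hzb'⟩, huniq b ⟨hb, hxb⟩]
  · intro e1 he1 c hc
    obtain ⟨e, he, rfl⟩ := Finset.mem_image.mp he1
    obtain ⟨b, hb, rfl⟩ := Finset.mem_image.mp hc
    rw [hFinter e (hedge e he) b (hblock b hb),
      hFcard _ ((Finset.inter_subset_left).trans (hedge e he))]
    exact hpart.2.2.2.2 e he b hb

/-- If an `r`-uniform hypergraph with `n` vertices and `q ≥ 1` edges admits at least
`r^(l-1) + 1` pairwise distinct `r`-partitions for some `l ≥ 1`, then there exists an
`r`-partite `r`-uniform hypergraph with `n - l` vertices and exactly `q` edges. -/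
theorem exists_rPartite_hypergraph {V : Type} [Fintype V] [DecidableEq V]
    (r l n q : ℕ) (hl : 1 ≤ l) (hq : 1 ≤ q) (hn : Fintype.card V = n)
    (H : Finset (Finset V)) (hH : IsRUniform r H) (hcard : H.card = q)
    (P : Fin (r ^ (l - 1) + 1) → Finset (Finset V))
    (hinj : Function.Injective P) (hP : ∀ i, IsRPartition r H (P i)) :
    ∃ H' : Finset (Finset (Fin (n - l))),
      IsRUniform r H' ∧ H'.card = q ∧ ∃ P', IsRPartition r H' P' := by
  classical
  rcases Nat.lt_or_ge r 2 with h2 | h2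
  · interval_cases r
    · -- r = 0 : V is empty and H = {∅}
      have hP0 := hP ⟨0, Nat.succ_pos _⟩
      have hPempty : P ⟨0, Nat.succ_pos _⟩ = ∅ := Finset.card_eq_zero.mp hP0.1
      have hV : IsEmpty V := by
        constructor
        intro v
        obtain ⟨b, ⟨hb, -⟩, -⟩ := hP0.2.2.1 v
        rw [hPempty] at hb
        exact absurd hb (Finset.notMem_empty _)
      have hn0 : n = 0 := by rw [← hn]; exact Fintype.card_eq_zero
      have hHsub : H ⊆ {∅} := by
        intro e he
        rw [Finset.mem_singleton, ← Finset.card_eq_zero]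
        exact hH e he
      have hq1 : q = 1 := by
        have h1 : H.card ≤ 1 := le_trans (Finset.card_le_card hHsub) (by simp)
        omega
      refine ⟨{∅}, ?_, ?_, ∅, ?_, ?_, ?_, ?_⟩
      · intro e he
        rw [Finset.mem_singleton.mp he, Finset.card_empty]
      · rw [Finset.card_singleton, hq1]
      · exact Finset.card_empty
      · intro b hb
        exact absurd hb (Finset.notMem_empty _)
      · intro v
        have := v.isLt
        omega
      · intro e he b hb
        exact absurd hb (Finset.notMem_empty _)
    · -- r = 1 : all partitions are {univ}, contradicting injectivity
      exfalso
      have hpos : 1 < 1 ^ (l - 1) + 1 := by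
        rw [one_pow]
        omega
      have huniq : ∀ i, P i = {Finset.univ} := by
        intro i
        obtain ⟨b, hb⟩ := Finset.card_eq_one.mp (hP i).1
        have : b = Finset.univ := by
          apply Finset.eq_univ_of_forall
          intro v
          obtain ⟨b', ⟨hb', hvb'⟩, -⟩ := (hP i).2.2.1 v
          rw [hb, Finset.mem_singleton] at hb'
          rwa [← hb']
        rw [hb, this]
      have : P ⟨0, Nat.succ_pos _⟩ = P ⟨1, hpos⟩ := by rw [huniq, huniq]
      have := hinj this
      simp only [Fin.mk.injEq] at this
      omega
  · have hHne : H.Nonempty := Finset.card_pos.mp (by omega)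
    have hRP : ∀ i, RPartOn r H (P i) Finset.univ := by
      intro i
      exact ⟨(hP i).1, (hP i).2.1, fun b _ => Finset.subset_univ b,
        fun v _ => (hP i).2.2.1 v, (hP i).2.2.2⟩
    obtain ⟨H2, P2, S', hS'card, hH2unif, hH2card, -, hpart⟩ :=
      main_merge h2 (l - 1) Finset.univ H hH hHne P hinj hRP
    rw [Finset.card_univ, hn] at hS'card
    have hm : S'.card = n - l := by omega
    obtain ⟨H'', hunif, hcard'', P'', hpart''⟩ :=
      transport (by omega) hm hH2unif hpart
    exact ⟨H'', hunif, by rw [hcard'', hH2card, hcard], P'', hpart''⟩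
end

section
/- For integers 1 ≤ r ≤ n and 0 ≤ l ≤ n − r, the set D_r(T_n) of rank-r transformations contains an r^l × π_r(n−l) rectangular band; that is, there is an injective semigroup homomorphism from the r^l × π_r(n−l) rectangular band into T_n whose image consists of transformations of rank r. -/
/-- Multiplication of the full transformation semigroup: `(f * g) x = g (f x)`. -/
def tMul {n : ℕ} (f g : Fin n → Fin n) : Fin n → Fin n := fun x => g (f x)

/-- The rank of a transformation: the cardinality of its image. -/
def trank {n : ℕ} (f : Fin n → Fin n) : ℕ := (Finset.univ.image f).card

/-- `piComp r n` is `π_r(n)`: the maximum of `s₁ ⋯ s_r` over all compositions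
`(s₁, …, s_r)` of `n` of length `r` into positive parts. -/
noncomputable def piComp (r n : ℕ) : ℕ :=
  sSup {m | ∃ s : Fin r → ℕ, (∀ i, 1 ≤ s i) ∧ (∑ i, s i) = n ∧ m = ∏ i, s i}

lemma piComp_attained (r m : ℕ) (hr1 : 1 ≤ r) (hrm : r ≤ m) :
    ∃ s : Fin r → ℕ, (∀ i, 1 ≤ s i) ∧ (∑ i, s i) = m ∧ piComp r m = ∏ i, s i := by
  have hne : {x | ∃ s : Fin r → ℕ, (∀ i, 1 ≤ s i) ∧ (∑ i, s i) = m ∧ x = ∏ i, s i}.Nonempty := by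
    refine ⟨∏ i, (1 + if i = (⟨0, hr1⟩ : Fin r) then m - r else 0),
      fun i => 1 + if i = (⟨0, hr1⟩ : Fin r) then m - r else 0, fun i => Nat.le_add_right 1 _, ?_, rfl⟩
    rw [Finset.sum_add_distrib, Finset.sum_ite_eq' Finset.univ (⟨0, hr1⟩ : Fin r)]
    simp
    omega
  have hbdd : BddAbove {x | ∃ s : Fin r → ℕ, (∀ i, 1 ≤ s i) ∧ (∑ i, s i) = m ∧ x = ∏ i, s i} := by
    refine ⟨m ^ r, fun x hx => ?_⟩
    obtain ⟨s, hs1, hsum, rfl⟩ := hx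
    calc ∏ i, s i ≤ ∏ _i : Fin r, m := by
          refine Finset.prod_le_prod (fun i _ => Nat.zero_le _) (fun i _ => ?_)
          rw [← hsum]
          exact Finset.single_le_sum (fun j _ => Nat.zero_le _) (Finset.mem_univ i)
      _ = m ^ r := by simp
  obtain ⟨s, h1, h2, h3⟩ := Nat.sSup_mem hne hbdd
  exact ⟨s, h1, h2, h3⟩

/-- For `1 ≤ r ≤ n` and `0 ≤ l ≤ n - r`, the set of rank-`r` elements of `T_n` contains an
`r^l × π_r(n-l)` rectangular band: there is an injective semigroup homomorphism from the
`r^l × π_r(n-l)` rectangular band into `T_n` whose image consists of rank-`r` maps. -/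
theorem rectangular_band_in_Dr (n r l : ℕ) (hr1 : 1 ≤ r) (hrn : r ≤ n) (hl : l ≤ n - r) :
    ∃ φ : Fin (r ^ l) × Fin (piComp r (n - l)) → (Fin n → Fin n),
      Function.Injective φ ∧
      (∀ x y : Fin (r ^ l) × Fin (piComp r (n - l)), φ (x.1, y.2) = tMul (φ x) (φ y)) ∧
      ∀ x, trank (φ x) = r := by
  have hrm : r ≤ n - l := by omega
  obtain ⟨s, hs1, hssum, hsprod⟩ := piComp_attained r (n - l) hr1 hrm
  set X := (Fin l ⊕ (Σ i : Fin r, Fin (s i))) with hX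
  have cardX : Fintype.card X = Fintype.card (Fin n) := by
    simp [hX, Fintype.card_sum, Fintype.card_sigma, hssum]
    omega
  let e : X ≃ Fin n := Fintype.equivOfCardEq cardX
  let A : Fin (r ^ l) ≃ (Fin l → Fin r) := Fintype.equivOfCardEq (by simp)
  let B : Fin (piComp r (n - l)) ≃ (∀ i : Fin r, Fin (s i)) := Fintype.equivOfCardEq (by simp [hsprod])
  let φ' : (Fin l → Fin r) → (∀ i : Fin r, Fin (s i)) → X → X := fun a b x =>
    Sum.elim (fun j => Sum.inr (⟨a j, b (a j)⟩ : Σ i : Fin r, Fin (s i)))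
      (fun p : Σ i : Fin r, Fin (s i) => Sum.inr ⟨p.1, b p.1⟩) x
  refine ⟨fun p x => e (φ' (A p.1) (B p.2) (e.symm x)), ?_, ?_, ?_⟩
  · intro p q h
    have h' : ∀ w : X, φ' (A p.1) (B p.2) w = φ' (A q.1) (B q.2) w := by
      intro w
      have h2 := congrFun h (e w)
      simp only [e.symm_apply_apply] at h2
      exact e.injective h2
    have hb : B p.2 = B q.2 := by
      funext i
      have := h' (Sum.inr ⟨i, ⟨0, hs1 i⟩⟩)
      simp only [φ', Sum.elim_inr] at this
      exact eq_of_heq (Sigma.mk.inj_iff.mp (Sum.inr_injective this)).2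
    have ha : A p.1 = A q.1 := by
      funext j
      have := h' (Sum.inl j)
      simp only [φ', Sum.elim_inl] at this
      exact (Sigma.mk.inj_iff.mp (Sum.inr_injective this)).1
    exact Prod.ext (A.injective ha) (B.injective hb)
  · intro x y
    funext z
    simp only [tMul, e.symm_apply_apply]
    congr 1
    rcases e.symm z with j | ⟨i, k⟩ <;> simp [φ']
  · intro p
    have him : (Finset.univ.image fun x => e (φ' (A p.1) (B p.2) (e.symm x)))
        = Finset.univ.image (fun i : Fin r => e (Sum.inr ⟨i, (B p.2) i⟩)) := by
      ext y
      simp only [Finset.mem_image, Finset.mem_univ, true_and]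
      constructor
      · rintro ⟨x, rfl⟩
        rcases hw : e.symm x with j | ⟨i, k⟩
        · exact ⟨(A p.1) j, by simp [φ', hw]⟩
        · exact ⟨i, by simp [φ', hw]⟩
      · rintro ⟨i, rfl⟩
        exact ⟨e (Sum.inr ⟨i, ⟨0, hs1 i⟩⟩), by simp [φ']⟩
    rw [trank, him, Finset.card_image_of_injective _ (fun i i' hii => by
      have := e.injective hii
      simpa using congrArg Sigma.fst (Sum.inr_injective this))]
    simp
end

section
/- Let p, q ≥ 2 and 1 ≤ r ≤ n be integers, and let l be the least nonnegative integer with r^l ≥ p. If there is an injective semigroup homomorphism from the p×q rectangular band into T_n whose image consists of transformations of rank r, then r + l ≤ n and π_r(n − l) ≥ q. -/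
/-- If a `p × q` rectangular band (`p, q ≥ 2`) embeds in `T_n` via an injective semigroup
homomorphism whose image consists of rank-`r` transformations, then, with `l` the least
nonnegative integer with `r^l ≥ p`, we have `r + l ≤ n` and `π_r(n - l) ≥ q`. -/
theorem rectangular_band_embedding_bound (n p q r l : ℕ)
    (hp : 2 ≤ p) (hq : 2 ≤ q) (hr1 : 1 ≤ r) (hrn : r ≤ n)
    (hl : l = sInf {m | p ≤ r ^ m})
    (φ : Fin p × Fin q → (Fin n → Fin n))
    (hinj : Function.Injective φ)
    (hhom : ∀ x y : Fin p × Fin q, φ (x.1, y.2) = tMul (φ x) (φ y))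
    (hrank : ∀ x, trank (φ x) = r) :
    r + l ≤ n ∧ q ≤ piComp r (n - l) := by
  classical
  have star : ∀ (i k : Fin p) (j m : Fin q) (a : Fin n),
      φ (i, j) (φ (k, m) a) = φ (k, j) a := by
    intro i k j m a
    have h := congrFun (hhom (k, m) (i, j)) a
    simpa [tMul] using h.symm
  have h0p : 0 < p := by omega
  have h0q : 0 < q := by omega
  set i0 : Fin p := ⟨0, h0p⟩ with hi0
  set j0 : Fin q := ⟨0, h0q⟩ with hj0
  set W : Finset (Fin n) := Finset.univ.filter (fun a => ∃ i j c, φ (i, j) c = a) with hW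
  set B : Finset (Fin n) := Finset.univ.image (φ (i0, j0)) with hB
  have memW : ∀ (i : Fin p) (j : Fin q) (c : Fin n), φ (i, j) c ∈ W := by
    intro i j c
    rw [hW, Finset.mem_filter]
    exact ⟨Finset.mem_univ _, i, j, c, rfl⟩
  have hBW : B ⊆ W := by
    intro b hb
    rw [hB, Finset.mem_image] at hb
    obtain ⟨c, _, hc⟩ := hb
    exact hc ▸ memW i0 j0 c
  have hBcard : B.card = r := hrank (i0, j0)
  have hBfix : ∀ b ∈ B, φ (i0, j0) b = b := by
    intro b hb
    rw [hB, Finset.mem_image] at hb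
    obtain ⟨c, _, rfl⟩ := hb
    exact star i0 i0 j0 j0 c
  set C : Fin n → Finset (Fin n) := fun b => W.filter (fun a => φ (i0, j0) a = b) with hC
  have hmemB : ∀ (i : Fin p) (j : Fin q) (a : Fin n), φ (i0, j0) (φ (i, j) a) ∈ B := by
    intro i j a
    rw [hB, Finset.mem_image]
    exact ⟨φ (i, j) a, Finset.mem_univ _, rfl⟩
  have hWcard : W.card = ∑ b ∈ B, (C b).card := by
    apply Finset.card_eq_sum_card_fiberwise
    intro a ha
    rw [hB, Finset.mem_coe, Finset.mem_image]
    exact ⟨a, Finset.mem_univ _, rfl⟩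
  have hCb : ∀ b ∈ B, b ∈ C b := by
    intro b hb
    rw [hC]
    exact Finset.mem_filter.mpr ⟨hBW hb, hBfix b hb⟩
  -- q ≤ product of class sizes
  have hq_le : q ≤ ∏ b ∈ B, (C b).card := by
    have hmem : ∀ (j : Fin q) (b : ↥B), φ (i0, j) b.1 ∈ C b.1 := by
      intro j b
      rw [hC]
      refine Finset.mem_filter.mpr ⟨memW i0 j b.1, ?_⟩
      rw [star i0 i0 j0 j b.1, hBfix b.1 b.2]
    let F : Fin q → (∀ b : ↥B, ↥(C b.1)) := fun j b => ⟨φ (i0, j) b.1, hmem j b⟩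
    have hFinj : Function.Injective F := by
      intro j j' h
      have heq : φ (i0, j) = φ (i0, j') := by
        funext a
        have hb : φ (i0, j0) a ∈ B := by
          rw [hB, Finset.mem_image]; exact ⟨a, Finset.mem_univ _, rfl⟩
        have h2 : (F j ⟨φ (i0, j0) a, hb⟩).1 = (F j' ⟨φ (i0, j0) a, hb⟩).1 := by rw [h]
        simpa [F, star i0 i0 j j0 a, star i0 i0 j' j0 a] using h2
      have := hinj heq
      simpa using congrArg Prod.snd this
    calc q = Fintype.card (Fin q) := (Fintype.card_fin q).symm
      _ ≤ Fintype.card (∀ b : ↥B, ↥(C b.1)) := Fintype.card_le_of_injective F hFinj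
      _ = ∏ b : ↥B, (C b.1).card := by simp [Fintype.card_pi, Fintype.card_coe]
      _ = ∏ b ∈ B, (C b).card := Finset.prod_coe_sort B (fun b => (C b).card)
  -- p ≤ r ^ |V|
  set V : Finset (Fin n) := Wᶜ with hV
  have hp_le : p ≤ r ^ V.card := by
    have hmB : ∀ (i : Fin p) (a : Fin n), φ (i, j0) a ∈ B := by
      intro i a
      rw [hB, Finset.mem_image]
      exact ⟨φ (i, j0) a, Finset.mem_univ _, star i0 i j0 j0 a⟩
    let G : Fin p → (↥V → ↥B) := fun i v => ⟨φ (i, j0) v.1, hmB i v.1⟩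
    have hGinj : Function.Injective G := by
      intro i i' h
      have heq : φ (i, j0) = φ (i', j0) := by
        funext a
        by_cases ha : a ∈ W
        · rw [hW, Finset.mem_filter] at ha
          obtain ⟨-, k, m, c, rfl⟩ := ha
          rw [star, star]
        · have hav : a ∈ V := by rw [hV, Finset.mem_compl]; exact ha
          exact congrArg Subtype.val (congrFun h ⟨a, hav⟩)
      have := hinj heq
      simpa using congrArg Prod.fst this
    calc p = Fintype.card (Fin p) := (Fintype.card_fin p).symm
      _ ≤ Fintype.card (↥V → ↥B) := Fintype.card_le_of_injective G hGinj
      _ = B.card ^ V.card := by rw [Fintype.card_fun, Fintype.card_coe, Fintype.card_coe]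
      _ = r ^ V.card := by rw [hBcard]
  have hlV : l ≤ V.card := hl ▸ Nat.sInf_le hp_le
  have hVW : V.card = n - W.card := by
    rw [hV, Finset.card_compl, Fintype.card_fin]
  have hWn : W.card ≤ n := by
    simpa using Finset.card_le_univ W
  have hrW : r ≤ W.card := hBcard ▸ Finset.card_le_card hBW
  have part1 : r + l ≤ n := by omega
  refine ⟨part1, ?_⟩
  -- build the composition
  have hBfin : Fintype.card ↥B = r := by rw [Fintype.card_coe, hBcard]
  let ψ : ↥B ≃ Fin r := Fintype.equivFinOfCardEq hBfin
  let t0 : Fin r := ⟨0, hr1⟩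
  let s : Fin r → ℕ := fun t => (C (ψ.symm t).1).card + (if t = t0 then V.card - l else 0)
  have hs1 : ∀ t, 1 ≤ s t := by
    intro t
    have h1 : 0 < (C (ψ.symm t).1).card :=
      Finset.card_pos.mpr ⟨_, hCb _ (ψ.symm t).2⟩
    have : (C (ψ.symm t).1).card ≤ s t := Nat.le_add_right _ _
    omega
  have hsum0 : ∑ t, (C (ψ.symm t).1).card = ∑ b ∈ B, (C b).card := by
    rw [Equiv.sum_comp ψ.symm (fun b : ↥B => (C b.1).card)]
    exact Finset.sum_coe_sort B (fun b => (C b).card)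
  have hsum : ∑ t, s t = n - l := by
    have h1 : ∑ t, s t = (∑ t, (C (ψ.symm t).1).card)
        + (∑ t : Fin r, if t = t0 then V.card - l else 0) := Finset.sum_add_distrib
    have h2 : (∑ t : Fin r, if t = t0 then V.card - l else 0) = V.card - l := by
      simp [Finset.sum_ite_eq']
    rw [h1, h2, hsum0, ← hWcard]
    omega
  have hprod : q ≤ ∏ t, s t := by
    refine le_trans ?_ (Finset.prod_le_prod' (fun t _ => Nat.le_add_right _ _))
    have h1 : ∏ t, (C (ψ.symm t).1).card = ∏ b ∈ B, (C b).card := by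
      rw [Equiv.prod_comp ψ.symm (fun b : ↥B => (C b.1).card)]
      exact Finset.prod_coe_sort B (fun b => (C b).card)
    rw [h1]
    exact hq_le
  have hmemS : (∏ t, s t) ∈
      {m | ∃ u : Fin r → ℕ, (∀ i, 1 ≤ u i) ∧ (∑ i, u i) = n - l ∧ m = ∏ i, u i} :=
    ⟨s, hs1, hsum, rfl⟩
  have hbdd : BddAbove
      {m | ∃ u : Fin r → ℕ, (∀ i, 1 ≤ u i) ∧ (∑ i, u i) = n - l ∧ m = ∏ i, u i} := by
    refine ⟨(n - l) ^ r, ?_⟩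
    rintro m ⟨u, hu1, husum, rfl⟩
    calc ∏ i, u i ≤ ∏ _i : Fin r, (n - l) := by
          refine Finset.prod_le_prod' (fun i _ => ?_)
          exact husum ▸ Finset.single_le_sum (fun _ _ => Nat.zero_le _) (Finset.mem_univ i)
      _ = (n - l) ^ r := by simp [Finset.prod_const]
  exact le_trans hprod (le_csSup hbdd hmemS)
end

section
/- Let p, q ≥ 2 and n ≥ 1 be integers. Then T_n contains a subsemigroup isomorphic to the p×q rectangular band if and only if there exists an integer r ≥ 2 such that r + l ≤ n and π_r(n − l) ≥ q, where l is the least nonnegative integer with r^l ≥ p. Consequently, the minimum transformation degree of a p×q rectangular band equals the minimum over r ≥ 2 of the least n with π_r(n − ⌈log_r p⌉) ≥ q. -/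
lemma piComp_bddAbove (r n : ℕ) :
    BddAbove {m | ∃ s : Fin r → ℕ, (∀ i, 1 ≤ s i) ∧ (∑ i, s i) = n ∧ m = ∏ i, s i} := by
  refine ⟨n ^ r, fun m hm => ?_⟩
  obtain ⟨s, h1, h2, rfl⟩ := hm
  calc ∏ i, s i ≤ ∏ _i : Fin r, n := by
        refine Finset.prod_le_prod (fun i _ => Nat.zero_le _) (fun i _ => ?_)
        rw [← h2]
        exact Finset.single_le_sum (fun j _ => Nat.zero_le _) (Finset.mem_univ i)
    _ = n ^ r := by simp [Finset.prod_const]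

lemma le_piComp {q r n : ℕ} (s : Fin r → ℕ) (h1 : ∀ i, 1 ≤ s i) (h2 : ∑ i, s i = n)
    (h3 : q ≤ ∏ i, s i) : q ≤ piComp r n :=
  h3.trans (le_csSup (piComp_bddAbove r n) ⟨s, h1, h2, rfl⟩)

lemma exists_of_le_piComp {q r n : ℕ} (hq : 1 ≤ q) (h : q ≤ piComp r n) :
    ∃ s : Fin r → ℕ, (∀ i, 1 ≤ s i) ∧ (∑ i, s i) = n ∧ q ≤ ∏ i, s i := by
  set S := {m | ∃ s : Fin r → ℕ, (∀ i, 1 ≤ s i) ∧ (∑ i, s i) = n ∧ m = ∏ i, s i} with hS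
  have hne : S.Nonempty := by
    by_contra h'
    rw [Set.not_nonempty_iff_eq_empty] at h'
    rw [piComp, ← hS, h', csSup_empty] at h
    simp at h
    omega
  obtain ⟨s, h1, h2, h3⟩ := Nat.sSup_mem hne (piComp_bddAbove r n)
  exact ⟨s, h1, h2, h3 ▸ h⟩

lemma r_le_of_le_piComp {q r n : ℕ} (hq : 1 ≤ q) (h : q ≤ piComp r n) : r ≤ n := by
  obtain ⟨s, h1, h2, _⟩ := exists_of_le_piComp hq h
  calc r = ∑ _i : Fin r, 1 := by simp
    _ ≤ ∑ i, s i := Finset.sum_le_sum fun i _ => h1 i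
    _ = n := h2

lemma sInf_pow_mem {p r : ℕ} (hr : 2 ≤ r) : p ≤ r ^ sInf {m | p ≤ r ^ m} := by
  have hne : {m | p ≤ r ^ m}.Nonempty :=
    ⟨p, (Nat.lt_two_pow_self (n := p)).le.trans (Nat.pow_le_pow_left hr p)⟩
  exact Nat.sInf_mem hne

lemma band_backward (p q n r : ℕ) (hp : 2 ≤ p) (hq : 1 ≤ q) (hr : 2 ≤ r)
    (h1 : r + sInf {m | p ≤ r ^ m} ≤ n)
    (h2 : q ≤ piComp r (n - sInf {m | p ≤ r ^ m})) :
    ∃ φ : Fin p × Fin q → (Fin n → Fin n), Function.Injective φ ∧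
      ∀ x y : Fin p × Fin q, φ (x.1, y.2) = tMul (φ x) (φ y) := by
  classical
  set l := sInf {m | p ≤ r ^ m} with hl
  have hlmem : p ≤ r ^ l := sInf_pow_mem hr
  obtain ⟨s, hs1, hs2, hs3⟩ := exists_of_le_piComp (by omega : (1:ℕ) ≤ q) h2
  have hcard : Fintype.card (Fin l ⊕ (Σ i : Fin r, Fin (s i))) = n := by
    simp only [Fintype.card_sum, Fintype.card_sigma, Fintype.card_fin]
    rw [hs2]; omega
  let e : (Fin l ⊕ (Σ i : Fin r, Fin (s i))) ≃ Fin n := Fintype.equivFinOfCardEq hcard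
  obtain ⟨dig⟩ : Nonempty (Fin p ↪ (Fin l → Fin r)) := by
    apply Function.Embedding.nonempty_of_card_le
    simp only [Fintype.card_fun, Fintype.card_fin]
    exact hlmem
  obtain ⟨col⟩ : Nonempty (Fin q ↪ (∀ i : Fin r, Fin (s i))) := by
    apply Function.Embedding.nonempty_of_card_le
    simp only [Fintype.card_pi, Fintype.card_fin]
    exact le_trans hs3 (le_of_eq rfl)
  let idx : Fin p → Fin n → Fin r := fun a x => Sum.elim (dig a) Sigma.fst (e.symm x)
  refine ⟨fun ab x => e (Sum.inr ⟨idx ab.1 x, col ab.2 (idx ab.1 x)⟩), ?_, ?_⟩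
  · rintro ⟨a, b⟩ ⟨a', b'⟩ h
    have hb : b = b' := by
      apply col.injective; funext i
      have h0 := congrFun h (e (Sum.inr ⟨i, ⟨0, hs1 i⟩⟩))
      simp only [idx] at h0
      rw [Equiv.symm_apply_apply] at h0
      have h1' := Sum.inr.inj (e.injective h0)
      exact eq_of_heq (Sigma.mk.inj_iff.mp h1').2
    have ha : a = a' := by
      apply dig.injective; funext j
      have h0 := congrFun h (e (Sum.inl j))
      simp only [idx] at h0
      rw [Equiv.symm_apply_apply] at h0
      exact congrArg Sigma.fst (Sum.inr.inj (e.injective h0))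
    rw [ha, hb]
  · intro x y
    funext z
    simp only [tMul, idx]
    rw [Equiv.symm_apply_apply]
    rfl

set_option maxHeartbeats 1000000 in
lemma band_forward (p q n : ℕ) (hp : 2 ≤ p) (hq : 2 ≤ q) (hn : 1 ≤ n)
    (φ : Fin p × Fin q → (Fin n → Fin n)) (hinj : Function.Injective φ)
    (hrel : ∀ x y : Fin p × Fin q, φ (x.1, y.2) = tMul (φ x) (φ y)) :
    ∃ r, 2 ≤ r ∧ r + sInf {m | p ≤ r ^ m} ≤ n ∧
      q ≤ piComp r (n - sInf {m | p ≤ r ^ m}) := by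
  classical
  -- the trace map
  set t : Fin p → Fin n → (Fin q → Fin n) := fun a x d => φ (a, d) x with ht
  -- basic relation
  have hR : ∀ (a b c d : _) (x : Fin n), φ (a, d) x = φ (c, d) (φ (a, b) x) :=
    fun a b c d x => congrFun (hrel (a, b) (c, d)) x
  have hA : ∀ a c b x, t a (φ (c, b) x) = t c x := by
    intro a c b x; funext d
    exact (hR c b a d x).symm
  have a0 : Fin p := ⟨0, by omega⟩
  have b0 : Fin q := ⟨0, by omega⟩
  set T : Finset (Fin q → Fin n) := Finset.image (fun x => t a0 x) Finset.univ with hT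
  have hTmem : ∀ a x, t a x ∈ T := by
    intro a x
    rw [hT, Finset.mem_image]
    exact ⟨φ (a, b0) x, Finset.mem_univ _, hA a0 a b0 x⟩
  set k := T.card with hk
  -- injectivity transfer
  have hinj1 : ∀ a a', (∀ x, t a x = t a' x) → a = a' := by
    intro a a' h
    have : φ (a, b0) = φ (a', b0) := funext fun x => congrFun (h x) b0
    exact (Prod.ext_iff.mp (hinj this)).1
  have hinj2 : ∀ d d', (∀ τ ∈ T, τ d = τ d') → d = d' := by
    intro d d' h
    have : φ (a0, d) = φ (a0, d') := funext fun x => h _ (hTmem a0 x)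
    exact (Prod.ext_iff.mp (hinj this)).2
  have hk2 : 2 ≤ k := by
    by_contra hcon
    have hone : ∀ τ ∈ T, ∀ τ' ∈ T, τ = τ' := Finset.card_le_one.mp (by omega)
    have : (⟨0, by omega⟩ : Fin p) = ⟨1, by omega⟩ :=
      hinj1 _ _ (fun x => hone _ (hTmem _ x) _ (hTmem _ x))
    simp [Fin.ext_iff] at this
  -- cores
  set D : (Fin q → Fin n) → Finset (Fin n) :=
    fun τ => Finset.univ.filter (fun x => ∀ a, t a x = τ) with hD
  have hcore : ∀ a b x, φ (a, b) x ∈ D (t a x) := by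
    intro a b x
    rw [hD]
    simp only [Finset.mem_filter, Finset.mem_univ, true_and]
    intro a'
    exact hA a' a b x
  have hDmem : ∀ τ, ∀ x ∈ D τ, ∀ a, t a x = τ := by
    intro τ x hx a
    rw [hD] at hx
    exact (Finset.mem_filter.mp hx).2 a
  have hDne : ∀ τ ∈ T, (D τ).Nonempty := by
    intro τ hτ
    rw [hT, Finset.mem_image] at hτ
    obtain ⟨x, -, rfl⟩ := hτ
    exact ⟨φ (a0, b0) x, hcore a0 b0 x⟩
  have hmem2 : ∀ τ ∈ T, ∀ d, τ d ∈ D τ := by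
    intro τ hτ d
    rw [hT, Finset.mem_image] at hτ
    obtain ⟨x, -, rfl⟩ := hτ
    exact hcore a0 d x
  set Dall : Finset (Fin n) := T.biUnion D with hDall
  have hdisj : ∀ τ ∈ T, ∀ τ' ∈ T, τ ≠ τ' → Disjoint (D τ) (D τ') := by
    intro τ _ τ' _ hne
    rw [Finset.disjoint_left]
    intro x hx hx'
    exact hne ((hDmem τ x hx a0).symm.trans (hDmem τ' x hx' a0))
  have hcardD : Dall.card = ∑ τ ∈ T, (D τ).card := Finset.card_biUnion hdisj
  -- q ≤ ∏
  have hqprod : q ≤ ∏ τ ∈ T, (D τ).card := by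
    have hψ : Function.Injective
        (fun (d : Fin q) (τ : ↥T) => (⟨τ.1 d, hmem2 τ.1 τ.2 d⟩ : ↥(D τ.1))) := by
      intro d d' h
      apply hinj2
      intro τ hτ
      exact Subtype.ext_iff.mp (congrFun h ⟨τ, hτ⟩)
    calc q = Fintype.card (Fin q) := (Fintype.card_fin q).symm
      _ ≤ Fintype.card (∀ τ : ↥T, ↥(D τ.1)) :=
          Fintype.card_le_of_injective _ hψ
      _ = ∏ τ : ↥T, (D τ.1).card := by
          rw [Fintype.card_pi]
          exact Finset.prod_congr rfl fun τ _ => Fintype.card_coe _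
      _ = ∏ τ ∈ T, (D τ).card := Finset.prod_coe_sort T (fun τ => (D τ).card)
  -- p ≤ k ^ (n - Dall.card)
  have hppow : p ≤ k ^ (n - Dall.card) := by
    have hmap : Function.Injective
        (fun (a : Fin p) (x : ↥(Dallᶜ)) => (⟨t a x.1, hTmem a x.1⟩ : ↥T)) := by
      intro a a' h
      apply hinj1
      intro x
      by_cases hx : x ∈ Dall
      · obtain ⟨τ, -, hxτ⟩ := Finset.mem_biUnion.mp hx
        rw [hDmem τ x hxτ a, hDmem τ x hxτ a']
      · exact Subtype.ext_iff.mp (congrFun h ⟨x, Finset.mem_compl.mpr hx⟩)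
    calc p = Fintype.card (Fin p) := (Fintype.card_fin p).symm
      _ ≤ Fintype.card (↥(Dallᶜ) → ↥T) :=
          Fintype.card_le_of_injective _ hmap
      _ = k ^ (n - Dall.card) := by
          rw [Fintype.card_fun, Fintype.card_coe, Fintype.card_coe, Finset.card_compl,
            Fintype.card_fin]
  set l := sInf {m | p ≤ k ^ m} with hl
  have hlle : l ≤ n - Dall.card := Nat.sInf_le hppow
  have hDn : Dall.card ≤ n := by
    calc Dall.card ≤ Finset.univ.card := Finset.card_le_univ _
      _ = n := by simp
  have hkD : k ≤ Dall.card := by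
    rw [hcardD]
    calc k = ∑ _τ ∈ T, 1 := by simp [hk]
      _ ≤ ∑ τ ∈ T, (D τ).card :=
          Finset.sum_le_sum (fun τ hτ => Finset.card_pos.mpr (hDne τ hτ))
  refine ⟨k, hk2, by omega, ?_⟩
  have hD'le : Dall.card ≤ n - l := by omega
  let eT : ↥T ≃ Fin k := T.equivFin
  have hi0 : 0 < k := by omega
  set i0 : Fin k := ⟨0, hi0⟩ with hi0'
  set pad := (n - l) - Dall.card with hpad
  set s : Fin k → ℕ := fun i => (D (eT.symm i).1).card + (if i = i0 then pad else 0) with hs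
  have hsum0 : ∑ i, (D (eT.symm i).1).card = Dall.card :=
    (Equiv.sum_comp eT.symm (fun τ : ↥T => (D τ.1).card)).trans
      ((Finset.sum_coe_sort T (fun τ => (D τ).card)).trans hcardD.symm)
  apply le_piComp s
  · intro i
    calc 1 ≤ (D (eT.symm i).1).card := Finset.card_pos.mpr (hDne _ (eT.symm i).2)
      _ ≤ s i := Nat.le_add_right _ _
  · have hsplit : ∑ i, s i = Dall.card + pad := by
      rw [hs, Finset.sum_add_distrib, hsum0,
        Finset.sum_ite_eq' Finset.univ i0 (fun _ => pad)]
      simp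
    omega
  · calc q ≤ ∏ τ ∈ T, (D τ).card := hqprod
      _ = ∏ i, (D (eT.symm i).1).card := by
          rw [← Finset.prod_coe_sort T (fun τ => (D τ).card)]
          exact (Equiv.prod_comp eT.symm (fun τ : ↥T => (D τ.1).card)).symm
      _ ≤ ∏ i, s i :=
          Finset.prod_le_prod (fun _ _ => Nat.zero_le _)
            (fun i _ => Nat.le_add_right _ _)

/-- For `p, q ≥ 2`: `T_n` contains a `p × q` rectangular band iff there is `r ≥ 2` with
`r + l_r ≤ n` and `π_r(n - l_r) ≥ q`, where `l_r = ⌈log_r p⌉` is the least `l` with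
`r^l ≥ p`.  Consequently, the minimum transformation degree of a `p × q` rectangular band
equals the minimum over `r ≥ 2` of the least `n` with `π_r(n - ⌈log_r p⌉) ≥ q`. -/
theorem rectangular_band_degree (p q n : ℕ) (hp : 2 ≤ p) (hq : 2 ≤ q) (hn : 1 ≤ n) :
    ((∃ φ : Fin p × Fin q → (Fin n → Fin n), Function.Injective φ ∧
        ∀ x y : Fin p × Fin q, φ (x.1, y.2) = tMul (φ x) (φ y))
      ↔ ∃ r, 2 ≤ r ∧ r + sInf {m | p ≤ r ^ m} ≤ n ∧
          q ≤ piComp r (n - sInf {m | p ≤ r ^ m})) ∧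
    sInf {m | 1 ≤ m ∧ ∃ φ : Fin p × Fin q → (Fin m → Fin m), Function.Injective φ ∧
        ∀ x y : Fin p × Fin q, φ (x.1, y.2) = tMul (φ x) (φ y)}
      = sInf {m | ∃ r, 2 ≤ r ∧ q ≤ piComp r (m - sInf {k | p ≤ r ^ k})} := by
  constructor
  · constructor
    · rintro ⟨φ, h1, h2⟩
      exact band_forward p q n hp hq hn φ h1 h2
    · rintro ⟨r, hr, h1, h2⟩
      exact band_backward p q n r hp (by omega) hr h1 h2
  · have hAB : {m | 1 ≤ m ∧ ∃ φ : Fin p × Fin q → (Fin m → Fin m), Function.Injective φ ∧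
        ∀ x y : Fin p × Fin q, φ (x.1, y.2) = tMul (φ x) (φ y)}
        = {m | ∃ r, 2 ≤ r ∧ q ≤ piComp r (m - sInf {k | p ≤ r ^ k})} := by
      ext m
      simp only [Set.mem_setOf_eq]
      constructor
      · rintro ⟨hm, φ, h1, h2⟩
        obtain ⟨r, hr, -, h⟩ := band_forward p q m hp hq hm φ h1 h2
        exact ⟨r, hr, h⟩
      · rintro ⟨r, hr, hc⟩
        have key : r ≤ m - sInf {k | p ≤ r ^ k} :=
          r_le_of_le_piComp (by omega) hc
        have hrl : r + sInf {k | p ≤ r ^ k} ≤ m := by omega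
        exact ⟨by omega, band_backward p q m r hp (by omega) hr hrl hc⟩
    rw [hAB]
end

section
/- Let G be a finite group, let p, q, n ≥ 1 be integers, and let B denote the p×q rectangular band. Then T_n contains a subsemigroup isomorphic to the direct product B × G if and only if there exists an integer 1 ≤ r ≤ n such that G embeds into the symmetric group on r letters and there is an injective semigroup homomorphism from B into T_n whose image consists of transformations of rank r. -/
lemma trank_tMul_le_left {n : ℕ} (f g : Fin n → Fin n) : trank (tMul f g) ≤ trank f := by
  have hsub : Finset.univ.image (tMul f g) ⊆ (Finset.univ.image f).image g := by
    intro x hx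
    simp only [Finset.mem_image] at *
    obtain ⟨y, -, rfl⟩ := hx
    exact ⟨f y, ⟨y, Finset.mem_univ y, rfl⟩, rfl⟩
  calc trank (tMul f g) ≤ ((Finset.univ.image f).image g).card := Finset.card_le_card hsub
    _ ≤ (Finset.univ.image f).card := Finset.card_image_le

lemma trank_tMul_le_right {n : ℕ} (f g : Fin n → Fin n) : trank (tMul f g) ≤ trank g := by
  apply Finset.card_le_card
  intro x hx
  simp only [Finset.mem_image] at *
  obtain ⟨y, -, rfl⟩ := hx
  exact ⟨f y, Finset.mem_univ _, rfl⟩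

lemma fwd_dir (G : Type) [Group G] [Fintype G]
    (p q n : ℕ) (hp : 1 ≤ p) (hq : 1 ≤ q) (hn : 1 ≤ n)
    (ψ : (Fin p × Fin q) × G → (Fin n → Fin n)) (hinj : Function.Injective ψ)
    (hhom : ∀ x y : (Fin p × Fin q) × G, ψ ((x.1.1, y.1.2), x.2 * y.2) = tMul (ψ x) (ψ y)) :
    ∃ r, 1 ≤ r ∧ r ≤ n ∧
          (∃ θ : G →* Equiv.Perm (Fin r), Function.Injective θ) ∧
          (∃ φ : Fin p × Fin q → (Fin n → Fin n), Function.Injective φ ∧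
            (∀ x y : Fin p × Fin q, φ (x.1, y.2) = tMul (φ x) (φ y)) ∧
            ∀ x, trank (φ x) = r) := by
  have i0 : Fin p := ⟨0, hp⟩
  have j0 : Fin q := ⟨0, hq⟩
  set e : Fin n → Fin n := ψ ((i0, j0), 1) with he_def
  set r : ℕ := trank e with hr_def
  -- all elements of the image of ψ have the same rank
  have rank_le : ∀ a b : (Fin p × Fin q) × G, trank (ψ a) ≤ trank (ψ b) := by
    rintro ⟨⟨i, j⟩, g⟩ ⟨⟨k, l⟩, h⟩
    have step1 : trank (ψ ((i, j), g)) ≤ trank (ψ ((k, j), h * 1)) := by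
      have := hhom ((i, l), g * (h * 1)⁻¹) ((k, j), h * 1)
      simp only at this
      rw [inv_mul_cancel_right] at this
      rw [this]
      exact trank_tMul_le_right _ _
    have step2 : trank (ψ ((k, j), h * 1)) ≤ trank (ψ ((k, l), h)) := by
      have := hhom ((k, l), h) ((i, j), 1)
      simp only at this
      rw [this]
      exact trank_tMul_le_left _ _
    exact le_trans step1 step2
  have hrank : ∀ a, trank (ψ a) = r := fun a =>
    le_antisymm (rank_le a ((i0, j0), 1)) (rank_le ((i0, j0), 1) a)
  have hnfin : (0 : ℕ) < n := hn
  have hr1 : 1 ≤ r := by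
    rw [hr_def]
    have : (Finset.univ : Finset (Fin n)).Nonempty := ⟨⟨0, hn⟩, Finset.mem_univ _⟩
    have := this.image e
    exact Finset.card_pos.mpr this
  have hrn : r ≤ n := by
    rw [hr_def]
    calc trank e ≤ Fintype.card (Fin n) := Finset.card_le_univ _
      _ = n := Fintype.card_fin n
  -- the set S
  set S : Finset (Fin n) := Finset.univ.image e with hS_def
  have hScard : S.card = r := rfl
  -- multiplication of the f_g's
  have hmul : ∀ (g h : G) (x : Fin n),
      ψ ((i0, j0), h) (ψ ((i0, j0), g) x) = ψ ((i0, j0), g * h) x := by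
    intro g h x
    have := hhom ((i0, j0), g) ((i0, j0), h)
    simp only at this
    rw [this]; rfl
  have himg : ∀ (g : G) (x : Fin n), ψ ((i0, j0), g) x ∈ S := by
    intro g x
    have h1 : e (ψ ((i0, j0), g) x) = ψ ((i0, j0), g) x := by
      have := hmul g 1 x
      rwa [mul_one] at this
    rw [← h1]
    exact Finset.mem_image.mpr ⟨_, Finset.mem_univ _, rfl⟩
  have fixe : ∀ s ∈ S, e s = s := by
    intro s hs
    obtain ⟨y, -, rfl⟩ := Finset.mem_image.mp hs
    have := hmul (1 : G) 1 y
    rwa [mul_one] at this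
  -- the maps on S
  have θmem : ∀ (g : G) (s : ↥S), ψ ((i0, j0), g) ↑s ∈ S := fun g s => himg g s
  let θ₀ : G → ↥S → ↥S := fun g s => ⟨ψ ((i0, j0), g) ↑s, θmem g s⟩
  have θ₀mul : ∀ (g h : G) (s : ↥S), θ₀ h (θ₀ g s) = θ₀ (g * h) s := by
    intro g h s
    apply Subtype.ext
    exact hmul g h ↑s
  have θ₀one : ∀ s : ↥S, θ₀ 1 s = s := by
    intro s
    apply Subtype.ext
    exact fixe ↑s s.2
  let permS : G → Equiv.Perm ↥S := fun g =>
    { toFun := θ₀ g⁻¹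
      invFun := θ₀ g
      left_inv := fun s => by rw [θ₀mul, inv_mul_cancel, θ₀one]
      right_inv := fun s => by rw [θ₀mul, mul_inv_cancel, θ₀one] }
  have hcard : Fintype.card ↥S = r := by rw [Fintype.card_coe]; exact hScard
  let eqS : ↥S ≃ Fin r := Fintype.equivFinOfCardEq hcard
  let θ : G →* Equiv.Perm (Fin r) :=
    { toFun := fun g => eqS.symm.trans ((permS g).trans eqS)
      map_one' := by
        apply Equiv.ext
        intro t
        simp only [Equiv.trans_apply, Equiv.Perm.one_apply]
        show eqS (θ₀ 1⁻¹ (eqS.symm t)) = t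
        rw [inv_one, θ₀one, Equiv.apply_symm_apply]
      map_mul' := by
        intro g h
        apply Equiv.ext
        intro t
        simp only [Equiv.trans_apply, Equiv.Perm.mul_apply]
        show eqS (θ₀ (g * h)⁻¹ (eqS.symm t)) = eqS (θ₀ g⁻¹ (eqS.symm (eqS (θ₀ h⁻¹ (eqS.symm t)))))
        rw [Equiv.symm_apply_apply, θ₀mul, mul_inv_rev] }
  have hθinj : Function.Injective θ := by
    rw [injective_iff_map_eq_one]
    intro g hg
    have hfix : ∀ s : ↥S, θ₀ g⁻¹ s = s := by
      intro s
      have h := congrArg (fun π : Equiv.Perm (Fin r) => π (eqS s)) hg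
      simp only [Equiv.Perm.one_apply] at h
      have h2 : eqS (θ₀ g⁻¹ (eqS.symm (eqS s))) = eqS s := h
      rw [Equiv.symm_apply_apply] at h2
      exact eqS.injective h2
    have hfun : ψ ((i0, j0), g⁻¹) = ψ ((i0, j0), 1) := by
      funext x
      have h1 : ψ ((i0, j0), g⁻¹) x = ψ ((i0, j0), g⁻¹) (e x) := by
        have := hmul (1 : G) g⁻¹ x
        rw [one_mul] at this
        exact this.symm
      have hex : e x ∈ S := Finset.mem_image.mpr ⟨x, Finset.mem_univ _, rfl⟩
      have h2 : ψ ((i0, j0), g⁻¹) (e x) = e x := congrArg Subtype.val (hfix ⟨e x, hex⟩)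
      have h3 : ψ ((i0, j0), 1) x = e x := rfl
      rw [h1, h2, h3]
    have := hinj hfun
    have : g⁻¹ = 1 := by
      have h4 := congrArg Prod.snd this
      exact h4
    rwa [inv_eq_one] at this
  refine ⟨r, hr1, hrn, ⟨θ, hθinj⟩, ⟨fun b => ψ (b, 1), ?_, ?_, ?_⟩⟩
  · intro b b' hbb
    have := hinj hbb
    exact (Prod.ext_iff.mp this).1
  · intro x y
    have := hhom (x, 1) (y, 1)
    simp only [one_mul] at this
    exact this
  · intro x
    exact hrank (x, 1)

lemma idem_ext {n : ℕ} (e f : Fin n → Fin n)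
    (he : ∀ x, e (e x) = e x) (hf : ∀ x, f (f x) = f x)
    (hker : ∀ x y, e x = e y ↔ f x = f y)
    (himg : Finset.univ.image e = Finset.univ.image f) : e = f := by
  funext x
  have h1 : f (e x) = f x := (hker (e x) x).mp (he x)
  have h2 : e x ∈ Finset.univ.image f := by
    rw [← himg]; exact Finset.mem_image.mpr ⟨x, Finset.mem_univ _, rfl⟩
  obtain ⟨y, -, hy⟩ := Finset.mem_image.mp h2
  have h3 : f (e x) = e x := by rw [← hy, hf]
  rw [← h3, h1]

lemma bwd_dir (G : Type) [Group G] [Fintype G]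
    (p q n : ℕ) (hp : 1 ≤ p) (hq : 1 ≤ q) (hn : 1 ≤ n)
    (r : ℕ) (hr1 : 1 ≤ r) (hrn : r ≤ n)
    (θ : G →* Equiv.Perm (Fin r)) (hθ : Function.Injective θ)
    (φ : Fin p × Fin q → (Fin n → Fin n)) (hφinj : Function.Injective φ)
    (hφhom : ∀ x y : Fin p × Fin q, φ (x.1, y.2) = tMul (φ x) (φ y))
    (hφrank : ∀ x, trank (φ x) = r) :
    ∃ ψ : (Fin p × Fin q) × G → (Fin n → Fin n), Function.Injective ψ ∧
        ∀ x y : (Fin p × Fin q) × G, ψ ((x.1.1, y.1.2), x.2 * y.2) = tMul (ψ x) (ψ y) := by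
  have i0 : Fin p := ⟨0, hp⟩
  have j0 : Fin q := ⟨0, hq⟩
  -- pointwise homomorphism law
  have hφ : ∀ (i : Fin p) (j : Fin q) (k : Fin p) (l : Fin q) (x : Fin n),
      φ (k, l) (φ (i, j) x) = φ (i, l) x := by
    intro i j k l x
    have := hφhom (i, j) (k, l)
    exact (congrFun this x).symm
  -- idempotents
  have hidem : ∀ (i : Fin p) (j : Fin q) (x : Fin n), φ (i, j) (φ (i, j) x) = φ (i, j) x :=
    fun i j x => hφ i j i j x
  -- the image sets
  set S : Fin q → Finset (Fin n) := fun j => Finset.univ.image (φ (i0, j)) with hS_def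
  have hScard : ∀ j, (S j).card = r := fun j => hφrank (i0, j)
  have memS : ∀ (i : Fin p) (j : Fin q) (x : Fin n), φ (i, j) x ∈ S j := by
    intro i j x
    have h1 : φ (i0, j) (φ (i, j) x) = φ (i, j) x := hφ i j i0 j x
    rw [← h1]
    exact Finset.mem_image.mpr ⟨_, Finset.mem_univ _, rfl⟩
  have fixS : ∀ (j : Fin q) (s : Fin n), s ∈ S j → ∀ k : Fin p, φ (k, j) s = s := by
    intro j s hs k
    obtain ⟨y, -, rfl⟩ := Finset.mem_image.mp hs
    exact hφ i0 j k j y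
  -- image of φ (i,j) equals S j
  have imgφ : ∀ (i : Fin p) (j : Fin q), Finset.univ.image (φ (i, j)) = S j := by
    intro i j
    apply Finset.Subset.antisymm
    · intro x hx
      obtain ⟨y, -, rfl⟩ := Finset.mem_image.mp hx
      exact memS i j y
    · intro s hs
      have := fixS j s hs i
      exact Finset.mem_image.mpr ⟨s, Finset.mem_univ _, this⟩
  -- the identification of S j0 with Fin r
  have hcard0 : Fintype.card ↥(S j0) = r := by rw [Fintype.card_coe]; exact hScard j0
  let α : ↥(S j0) ≃ Fin r := Fintype.equivFinOfCardEq hcard0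
  let a : Fin n → Fin r := fun x => α ⟨φ (i0, j0) x, memS i0 j0 x⟩
  let b : Fin q → Fin r → Fin n := fun j t => φ (i0, j) ((α.symm t : ↥(S j0)) : Fin n)
  have bmem : ∀ j t, b j t ∈ S j := fun j t => memS i0 j _
  have I1 : ∀ j t, a (b j t) = t := by
    intro j t
    show α ⟨φ (i0, j0) (φ (i0, j) ((α.symm t : ↥(S j0)) : Fin n)), _⟩ = t
    have h1 : φ (i0, j0) (φ (i0, j) ((α.symm t : ↥(S j0)) : Fin n))
        = φ (i0, j0) ((α.symm t : ↥(S j0)) : Fin n) := hφ i0 j i0 j0 _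
    have h2 : φ (i0, j0) ((α.symm t : ↥(S j0)) : Fin n) = ((α.symm t : ↥(S j0)) : Fin n) :=
      fixS j0 _ (α.symm t).2 i0
    have h3 : (⟨φ (i0, j0) (φ (i0, j) ((α.symm t : ↥(S j0)) : Fin n)), memS i0 j0 _⟩ : ↥(S j0))
        = α.symm t := by
      apply Subtype.ext
      exact h1.trans h2
    rw [h3, Equiv.apply_symm_apply]
  have I2 : ∀ j x, b j (a x) = φ (i0, j) x := by
    intro j x
    show φ (i0, j) ((α.symm (α ⟨φ (i0, j0) x, _⟩) : ↥(S j0)) : Fin n) = φ (i0, j) x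
    rw [Equiv.symm_apply_apply]
    exact hφ i0 j0 i0 j x
  have binj : ∀ j, Function.Injective (b j) := by
    intro j t t' h
    have := congrArg a h
    rwa [I1, I1] at this
  have φb : ∀ (i : Fin p) (j : Fin q) (t : Fin r), φ (i, j) (b j t) = b j t :=
    fun i j t => fixS j _ (bmem j t) i
  have φklb : ∀ (k : Fin p) (l j : Fin q) (t : Fin r), φ (k, l) (b j t) = b l t := by
    intro k l j t
    show φ (k, l) (φ (i0, j) _) = φ (i0, l) _
    exact hφ i0 j k l _
  have aφ : ∀ (i : Fin p) (j : Fin q) (x : Fin n), a (φ (i, j) x) = α ⟨φ (i, j0) x, memS i j0 x⟩ := by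
    intro i j x
    show α ⟨φ (i0, j0) (φ (i, j) x), _⟩ = α ⟨φ (i, j0) x, _⟩
    congr 1
    apply Subtype.ext
    exact hφ i j i0 j0 x
  -- the embedding
  refine ⟨fun x => fun z => b x.1.2 (θ x.2⁻¹ (a (φ x.1 z))), ?_, ?_⟩
  · -- injectivity
    rintro ⟨⟨i, j⟩, g⟩ ⟨⟨k, l⟩, g'⟩ hF
    simp only at hF
    -- the function
    set F : Fin n → Fin n := fun z => b j (θ g⁻¹ (a (φ (i, j) z))) with hFdef
    have hF2 : ∀ z, F z = b l (θ g'⁻¹ (a (φ (k, l) z))) := fun z => congrFun hF z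
    -- θ g (θ g⁻¹ u) = u
    have θcancel : ∀ (g : G) (u : Fin r), θ g (θ g⁻¹ u) = u := by
      intro g u
      rw [← Equiv.Perm.mul_apply, ← map_mul, mul_inv_cancel, map_one, Equiv.Perm.one_apply]
    have θcancel' : ∀ (g : G) (u : Fin r), θ g⁻¹ (θ g u) = u := by
      intro g u
      rw [← Equiv.Perm.mul_apply, ← map_mul, inv_mul_cancel, map_one, Equiv.Perm.one_apply]
    -- evaluating F on b j t
    have Fb : ∀ t, F (b j t) = b j (θ g⁻¹ t) := by
      intro t
      rw [hFdef]
      simp only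
      rw [φb, I1]
    have Fb' : ∀ t, F (b l t) = b l (θ g'⁻¹ t) := by
      intro t
      rw [hF2, φb, I1]
    -- recovery of φ (i,j) from F
    have rec1 : ∀ z, φ (i, j) z = b j (θ g (a (F z))) := by
      intro z
      rw [hFdef]
      simp only
      rw [I1, θcancel, I2]
      exact (hφ i j i0 j z).symm
    have rec2 : ∀ z, φ (k, l) z = b l (θ g' (a (F z))) := by
      intro z
      rw [hF2 z, I1, θcancel, I2]
      exact (hφ k l i0 l z).symm
    -- image of F is S j and also S l
    have imF : ∀ (j' : Fin q) (i' : Fin p) (g'' : G),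
        (∀ z, F z = b j' (θ g''⁻¹ (a (φ (i', j') z)))) → Finset.univ.image F = S j' := by
      intro j' i' g'' hdes
      apply Finset.Subset.antisymm
      · intro x hx
        obtain ⟨y, -, rfl⟩ := Finset.mem_image.mp hx
        rw [hdes y]
        exact bmem j' _
      · intro s hs
        refine Finset.mem_image.mpr ⟨b j' (θ g'' (a s)), Finset.mem_univ _, ?_⟩
        rw [hdes, φb, I1, θcancel']
        rw [I2]
        exact fixS j' s hs i0
    have himj : Finset.univ.image F = S j := imF j i g (fun z => rfl)
    have himl : Finset.univ.image F = S l := imF l k g' hF2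
    -- j = l
    have hjl : j = l := by
      have hSS : S j = S l := himj ▸ himl
      have heq : φ (i0, j) = φ (i0, l) := by
        apply idem_ext _ _ (hidem i0 j) (hidem i0 l)
        · intro x y
          constructor
          · intro h
            have := congrArg (φ (i0, l)) h
            rwa [hφ i0 j i0 l, hφ i0 j i0 l] at this
          · intro h
            have := congrArg (φ (i0, j)) h
            rwa [hφ i0 l i0 j, hφ i0 l i0 j] at this
        · rw [imgφ, imgφ, hSS]
      have := hφinj heq
      exact (Prod.ext_iff.mp this).2
    subst hjl
    -- i = k
    have hik : i = k := by
      have heq : φ (i, j) = φ (k, j) := by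
        apply idem_ext _ _ (hidem i j) (hidem k j)
        · intro x y
          constructor
          · intro h
            have h1 : F x = F y := by rw [hFdef]; simp only [h]
            rw [rec2 x, rec2 y, h1]
          · intro h
            have h1 : F x = F y := by rw [hF2 x, hF2 y, h]
            rw [rec1 x, rec1 y, h1]
        · rw [imgφ, imgφ]
      have := hφinj heq
      exact (Prod.ext_iff.mp this).1
    subst hik
    -- g = g'
    have hgg : g = g' := by
      have hperm : θ g⁻¹ = θ g'⁻¹ := by
        apply Equiv.ext
        intro t
        have := (Fb t).symm.trans (Fb' t)
        exact binj j this
      have := hθ hperm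
      rwa [inv_inj] at this
    subst hgg
    rfl
  · -- homomorphism law
    rintro ⟨⟨i, j⟩, g⟩ ⟨⟨k, l⟩, h⟩
    funext z
    show b l (θ (g * h)⁻¹ (a (φ (i, l) z)))
      = b l (θ h⁻¹ (a (φ (k, l) (b j (θ g⁻¹ (a (φ (i, j) z)))))))
    rw [φklb, I1]
    have h1 : a (φ (i, l) z) = a (φ (i, j) z) := by rw [aφ, aφ]
    rw [h1, mul_inv_rev, map_mul, Equiv.Perm.mul_apply]

/-- For a finite group `G` and the `p × q` rectangular band `B`, the semigroup `T_n`
contains a copy of the rectangular group `B × G` iff there is `1 ≤ r ≤ n` such that `G`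
embeds in the symmetric group on `r` letters and `B` embeds in `T_n` via an injective
semigroup homomorphism whose image consists of rank-`r` transformations. -/
theorem rectangular_group_embeds_iff (G : Type) [Group G] [Fintype G]
    (p q n : ℕ) (hp : 1 ≤ p) (hq : 1 ≤ q) (hn : 1 ≤ n) :
    (∃ ψ : (Fin p × Fin q) × G → (Fin n → Fin n), Function.Injective ψ ∧
        ∀ x y : (Fin p × Fin q) × G, ψ ((x.1.1, y.1.2), x.2 * y.2) = tMul (ψ x) (ψ y))
      ↔ ∃ r, 1 ≤ r ∧ r ≤ n ∧
          (∃ θ : G →* Equiv.Perm (Fin r), Function.Injective θ) ∧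
          (∃ φ : Fin p × Fin q → (Fin n → Fin n), Function.Injective φ ∧
            (∀ x y : Fin p × Fin q, φ (x.1, y.2) = tMul (φ x) (φ y)) ∧
            ∀ x, trank (φ x) = r) := by
  constructor
  · rintro ⟨ψ, hinj, hhom⟩
    exact fwd_dir G p q n hp hq hn ψ hinj hhom
  · rintro ⟨r, hr1, hrn, ⟨θ, hθ⟩, ⟨φ, hφinj, hφhom, hφrank⟩⟩
    exact bwd_dir G p q n hp hq hn r hr1 hrn θ hθ φ hφinj hφhom hφrank
end

section
/- Let X be a set, let ζ : X → X satisfy ζ∘ζ = ζ, and let S be a set of self-maps of X. Then S is a null semigroup under the operation (f*g)(x) = g(f(x)) with zero element ζ (i.e. ζ ∈ S and f*g = ζ for all f, g ∈ S) if and only if ζ ∈ S and there exists a family of sets (W_z), indexed by the points z in the image of ζ, such that z ∈ W_z ⊆ ζ^{-1}(z) for each z in the image of ζ, and every f ∈ S satisfies f(ζ^{-1}(z)) ⊆ W_z and f(W_z) = {z} for all z in the image of ζ. -/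
/-- Classification of null subsemigroups of the full transformation semigroup `T_X`
(with operation `(f * g) x = g (f x)`) having a prescribed idempotent zero `ζ`:
a set `S` of self-maps of `X` is a null semigroup with zero `ζ` iff `ζ ∈ S` and there is a
family of sets `W z` (`z` ranging over the image of `ζ`) with `z ∈ W z ⊆ ζ⁻¹(z)`, such
that every `f ∈ S` maps `ζ⁻¹(z)` into `W z` and maps `W z` onto `{z}`. -/
theorem null_subsemigroup_iff {X : Type} (ζ : X → X) (hζ : ζ ∘ ζ = ζ)
    (S : Set (X → X)) :
    (ζ ∈ S ∧ ∀ f ∈ S, ∀ g ∈ S, (fun x => g (f x)) = ζ)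
    ↔ (ζ ∈ S ∧ ∃ W : X → Set X,
        (∀ z ∈ Set.range ζ, z ∈ W z ∧ W z ⊆ ζ ⁻¹' {z}) ∧
        ∀ f ∈ S, ∀ z ∈ Set.range ζ, f '' (ζ ⁻¹' {z}) ⊆ W z ∧ f '' (W z) = {z}) := by
  have hζfix : ∀ z ∈ Set.range ζ, ζ z = z := by
    rintro z ⟨y, rfl⟩
    exact congrFun hζ y
  constructor
  · rintro ⟨hζS, hnull⟩
    refine ⟨hζS, fun z => {z} ∪ ⋃ f ∈ S, f '' (ζ ⁻¹' {z}), ?_, ?_⟩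
    · intro z hz
      refine ⟨Or.inl rfl, ?_⟩
      rintro w (hw | hw)
      · rw [Set.mem_singleton_iff] at hw
        subst hw
        exact hζfix w hz
      · simp only [Set.mem_iUnion] at hw
        obtain ⟨f, hf, x, hx, rfl⟩ := hw
        have := congrFun (hnull f hf ζ hζS) x
        simpa [this] using hx
    · intro f hf z hz
      constructor
      · intro w hw
        exact Or.inr (Set.mem_iUnion.2 ⟨f, Set.mem_iUnion.2 ⟨hf, hw⟩⟩)
      · apply Set.eq_singleton_iff_unique_mem.2
        constructor
        · refine ⟨z, Or.inl rfl, ?_⟩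
          have h1 := congrFun (hnull ζ hζS f hf) z
          have h2 := hζfix z hz
          calc f z = f (ζ z) := by rw [h2]
            _ = ζ z := h1
            _ = z := h2
        · rintro y ⟨w, (hw | hw), rfl⟩
          · rw [Set.mem_singleton_iff] at hw
            subst hw
            have h1 := congrFun (hnull ζ hζS f hf) w
            have h2 := hζfix w hz
            calc f w = f (ζ w) := by rw [h2]
              _ = ζ w := h1
              _ = w := h2
          · simp only [Set.mem_iUnion] at hw
            obtain ⟨g, hg, x, hx, rfl⟩ := hw
            have := congrFun (hnull g hg f hf) x
            rw [this]
            exact hx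
  · rintro ⟨hζS, W, hW, hmaps⟩
    refine ⟨hζS, fun f hf g hg => funext fun x => ?_⟩
    have hz : ζ x ∈ Set.range ζ := ⟨x, rfl⟩
    have h1 : f x ∈ W (ζ x) :=
      (hmaps f hf (ζ x) hz).1 ⟨x, rfl, rfl⟩
    have h2 : g (f x) ∈ ({ζ x} : Set X) := by
      rw [← (hmaps g hg (ζ x) hz).2]
      exact ⟨f x, h1, rfl⟩
    exact h2
end

section
/- For integers 1 ≤ r ≤ n, the maximum cardinality of a subset S of T_n that is a null semigroup under the operation of T_n and whose zero element has rank r, equals ξ(n − r + 1). -/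
/-- `xiFun n` is `ξ(n) = max { t^(n-t) : 1 ≤ t ≤ n }`. -/
def xiFun (n : ℕ) : ℕ := (Finset.Icc 1 n).sup fun t => t ^ (n - t)

/-- The encoding of the extremal null semigroup. -/
def enc (n r t : ℕ) (hr1 : 1 ≤ r) (hrn : r ≤ n) (htm : t ≤ n - r + 1)
    (c : Fin (n - r + 1 - t) → Fin t) : Fin n → Fin n := fun x =>
  if h1 : (x : ℕ) < r then x
  else if h2 : (x : ℕ) < r - 1 + t then ⟨r - 1, by omega⟩
  else ⟨r - 1 + (c ⟨(x : ℕ) - (r - 1 + t), by have := x.isLt; omega⟩ : Fin t), by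
    have hx := x.isLt
    have := (c ⟨(x : ℕ) - (r - 1 + t), by omega⟩).isLt
    omega⟩

lemma enc_lt {n r t : ℕ} (hr1 : 1 ≤ r) (hrn : r ≤ n) (htm : t ≤ n - r + 1)
    (c : Fin (n - r + 1 - t) → Fin t) (x : Fin n) (h : (x : ℕ) < r) :
    enc n r t hr1 hrn htm c x = x := by
  simp only [enc, dif_pos h]

lemma enc_hi {n r t : ℕ} (hr1 : 1 ≤ r) (hrn : r ≤ n) (htm : t ≤ n - r + 1)
    (ht1 : 1 ≤ t) (c : Fin (n - r + 1 - t) → Fin t) (x : Fin n)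
    (h : r - 1 + t ≤ (x : ℕ)) :
    ((enc n r t hr1 hrn htm c x : Fin n) : ℕ)
      = r - 1 + (c ⟨(x : ℕ) - (r - 1 + t), by have := x.isLt; omega⟩ : Fin t) := by
  have h1 : ¬ ((x : ℕ) < r) := by omega
  have h2 : ¬ ((x : ℕ) < r - 1 + t) := by omega
  simp only [enc, dif_neg h1, dif_neg h2]

lemma enc_fix {n r t : ℕ} (hr1 : 1 ≤ r) (hrn : r ≤ n) (htm : t ≤ n - r + 1)
    (c : Fin (n - r + 1 - t) → Fin t) (x : Fin n)
    (hx1 : r - 1 ≤ (x : ℕ)) (hx2 : (x : ℕ) < r - 1 + t) :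
    ((enc n r t hr1 hrn htm c x : Fin n) : ℕ) = r - 1 := by
  rcases lt_or_ge (x : ℕ) r with h | h
  · rw [enc_lt hr1 hrn htm c x h]
    omega
  · unfold enc
    rw [dif_neg (by omega : ¬ ((x : ℕ) < r)), dif_pos hx2]

lemma enc_range {n r t : ℕ} (hr1 : 1 ≤ r) (hrn : r ≤ n) (htm : t ≤ n - r + 1)
    (ht1 : 1 ≤ t) (c : Fin (n - r + 1 - t) → Fin t) (x : Fin n)
    (hx : r - 1 ≤ (x : ℕ)) :
    r - 1 ≤ ((enc n r t hr1 hrn htm c x : Fin n) : ℕ) ∧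
      ((enc n r t hr1 hrn htm c x : Fin n) : ℕ) < r - 1 + t := by
  unfold enc
  split_ifs with h1 h2
  · constructor <;> omega
  · simp only [Fin.val_mk]
    omega
  · simp only [Fin.val_mk]
    have := (c ⟨(x : ℕ) - (r - 1 + t), by have := x.isLt; omega⟩).isLt
    omega

/-- For `1 ≤ r ≤ n`, the maximum cardinality of a null subsemigroup of `T_n` whose zero
element has rank `r` equals `ξ(n - r + 1)`. -/
theorem max_null_subsemigroup_rank_r (n r : ℕ) (hr1 : 1 ≤ r) (hrn : r ≤ n) :
    IsGreatest {k | ∃ S : Finset (Fin n → Fin n), S.card = k ∧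
        ∃ z ∈ S, trank z = r ∧ ∀ f ∈ S, ∀ g ∈ S, tMul f g = z}
      (xiFun (n - r + 1)) := by
  have hm1 : 1 ≤ n - r + 1 := by omega
  constructor
  · -- membership: the construction
    obtain ⟨t, htmem, hts⟩ := Finset.exists_mem_eq_sup (Finset.Icc 1 (n - r + 1))
      ⟨1, by simp [hm1]⟩ (fun t => t ^ (n - r + 1 - t))
    rw [Finset.mem_Icc] at htmem
    obtain ⟨ht1, htm⟩ := htmem
    have hinj : Function.Injective (enc n r t hr1 hrn htm) := by
      intro c c' h
      funext i
      have hlt : r - 1 + t + (i : ℕ) < n := by have := i.isLt; omega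
      have hcong := congrArg Fin.val (congrFun h ⟨r - 1 + t + (i : ℕ), hlt⟩)
      rw [enc_hi hr1 hrn htm ht1 c _ (by simp), enc_hi hr1 hrn htm ht1 c' _ (by simp)] at hcong
      have hj : (⟨(r - 1 + t + (i : ℕ)) - (r - 1 + t), by omega⟩ :
          Fin (n - r + 1 - t)) = i := by
        apply Fin.ext
        simp
      rw [hj] at hcong
      exact Fin.ext (by omega)
    set z : Fin n → Fin n := enc n r t hr1 hrn htm (fun _ => ⟨0, ht1⟩) with hz
    refine ⟨Finset.image (enc n r t hr1 hrn htm) Finset.univ, ?_, z,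
      Finset.mem_image_of_mem _ (Finset.mem_univ _), ?_, ?_⟩
    · rw [Finset.card_image_of_injective _ hinj, Finset.card_univ, Fintype.card_fun,
        Fintype.card_fin, Fintype.card_fin]
      rw [xiFun, hts]
    · -- rank of z is r
      have himg : Finset.univ.image z = Finset.univ.image (Fin.castLE hrn) := by
        ext y
        simp only [Finset.mem_image, Finset.mem_univ, true_and]
        constructor
        · rintro ⟨x, rfl⟩
          by_cases hx : (x : ℕ) < r
          · exact ⟨⟨(x : ℕ), hx⟩, by rw [hz, enc_lt hr1 hrn htm _ x hx]; rfl⟩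
          · have hv : ((z x : Fin n) : ℕ) = r - 1 := by
              rcases lt_or_ge (x : ℕ) (r - 1 + t) with h | h
              · exact enc_fix hr1 hrn htm _ x (by omega) h
              · rw [hz, enc_hi hr1 hrn htm ht1 _ x h]
                rfl
            exact ⟨⟨r - 1, by omega⟩, Fin.ext (by simp [hv.symm])⟩
        · rintro ⟨i, rfl⟩
          exact ⟨Fin.castLE hrn i, by
            rw [hz, enc_lt hr1 hrn htm _ _ (by simp)]⟩
      rw [trank, himg, Finset.card_image_of_injective _ (Fin.castLE_injective hrn),
        Finset.card_univ, Fintype.card_fin]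
    · -- null property
      rintro f hf g hg
      rw [Finset.mem_image] at hf hg
      obtain ⟨c, -, rfl⟩ := hf
      obtain ⟨c', -, rfl⟩ := hg
      funext x
      apply Fin.ext
      show ((enc n r t hr1 hrn htm c' (enc n r t hr1 hrn htm c x) : Fin n) : ℕ) = _
      by_cases hx : (x : ℕ) < r - 1
      · rw [enc_lt hr1 hrn htm c x (by omega), enc_lt hr1 hrn htm c' x (by omega),
          hz, enc_lt hr1 hrn htm _ x (by omega)]
      · have hrange := enc_range hr1 hrn htm ht1 c x (by omega)
        rw [enc_fix hr1 hrn htm c' _ hrange.1 hrange.2]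
        have : ((z x : Fin n) : ℕ) = r - 1 := by
          rcases lt_or_ge (x : ℕ) (r - 1 + t) with h | h
          · exact enc_fix hr1 hrn htm _ x (by omega) h
          · rw [hz, enc_hi hr1 hrn htm ht1 _ x h]
            rfl
        rw [hz] at this ⊢
        omega
  · -- upper bound
    rintro k ⟨S, rfl, z, hzS, hzr, hnull⟩
    classical
    set T : Finset (Fin n) := S.sup (fun f => Finset.univ.image f) with hT
    have hmemT : ∀ y : Fin n, y ∈ T ↔ ∃ f ∈ S, ∃ x, f x = y := by
      intro y
      rw [hT, Finset.mem_sup]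
      simp
    have hzz : ∀ x, z (z x) = z x := fun x => congrFun (hnull z hzS z hzS) x
    have hker : ∀ f ∈ S, ∀ x, z (f x) = z x := fun f hf x =>
      congrFun (hnull f hf z hzS) x
    have hImT : ∀ f ∈ S, ∀ x, f x ∈ T := by
      intro f hf x
      rw [hmemT]
      exact ⟨f, hf, x, rfl⟩
    have hTval : ∀ f ∈ S, ∀ y ∈ T, f y = z y := by
      intro f hf y hy
      rw [hmemT] at hy
      obtain ⟨f', hf', x, rfl⟩ := hy
      calc f (f' x) = z x := congrFun (hnull f' hf' f hf) x
        _ = z (f' x) := (hker f' hf' x).symm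
    set A : Finset (Fin n) := Finset.univ.image z with hA
    have hAcard : A.card = r := hzr
    have hAT : A ⊆ T := by
      intro a ha
      rw [hmemT]
      rw [hA, Finset.mem_image] at ha
      obtain ⟨x, -, rfl⟩ := ha
      exact ⟨z, hzS, x, rfl⟩
    have hzfix : ∀ a ∈ A, z a = a := by
      intro a ha
      rw [hA, Finset.mem_image] at ha
      obtain ⟨x, -, rfl⟩ := ha
      exact hzz x
    have hrT : r ≤ T.card := hAcard ▸ Finset.card_le_card hAT
    have hTn : T.card ≤ n := by
      simpa using (Finset.card_le_univ T)
    set u : ℕ := T.card - r + 1 with hu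
    have hu1 : 1 ≤ u := by omega
    have hum : u ≤ n - r + 1 := by omega
    set D : Fin n → Finset (Fin n) := fun x =>
      if x ∈ T then {z x} else T.filter (fun y => z y = z x) with hD
    have hsub : S ⊆ Fintype.piFinset D := by
      intro f hf
      rw [Fintype.mem_piFinset]
      intro x
      rw [hD]
      by_cases hx : x ∈ T
      · simp only [if_pos hx, Finset.mem_singleton]
        exact hTval f hf x hx
      · simp only [if_neg hx, Finset.mem_filter]
        exact ⟨hImT f hf x, hker f hf x⟩
    have hDle : ∀ x : Fin n, (D x).card ≤ if x ∈ T then 1 else u := by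
      intro x
      rw [hD]
      by_cases hx : x ∈ T
      · simp [if_pos hx]
      · simp only [if_neg hx]
        have hsub2 : T.filter (fun y => z y = z x) ⊆ T \ (A.erase (z x)) := by
          intro y hy
          rw [Finset.mem_filter] at hy
          rw [Finset.mem_sdiff]
          refine ⟨hy.1, fun hc => ?_⟩
          rw [Finset.mem_erase] at hc
          exact hc.1 ((hzfix y hc.2).symm.trans hy.2)
        have hzxA : z x ∈ A := by
          rw [hA]
          exact Finset.mem_image_of_mem z (Finset.mem_univ x)
        have herase : (A.erase (z x)).card = r - 1 := by
          rw [Finset.card_erase_of_mem hzxA, hAcard]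
        have hsd : (T \ (A.erase (z x))).card = T.card - (r - 1) := by
          rw [Finset.card_sdiff_of_subset ((Finset.erase_subset _ _).trans hAT), herase]
        calc (T.filter (fun y => z y = z x)).card
            ≤ (T \ (A.erase (z x))).card := Finset.card_le_card hsub2
          _ = T.card - (r - 1) := hsd
          _ ≤ u := by omega
    calc S.card ≤ (Fintype.piFinset D).card := Finset.card_le_card hsub
      _ = ∏ x : Fin n, (D x).card := Fintype.card_piFinset D
      _ ≤ ∏ x : Fin n, (if x ∈ T then 1 else u) :=
          Finset.prod_le_prod' (fun i _ => hDle i)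
      _ = u ^ ((Finset.univ.filter (fun x => ¬ x ∈ T)).card) := by
          rw [Finset.prod_ite]
          simp [Finset.prod_const]
      _ = u ^ (n - T.card) := by
          congr 1
          have : Finset.univ.filter (fun x => ¬ x ∈ T) = Tᶜ := by
            ext y; simp [Finset.mem_compl]
          rw [this, Finset.card_compl, Fintype.card_fin]
      _ = u ^ ((n - r + 1) - u) := by congr 1; omega
      _ ≤ xiFun (n - r + 1) := by
          rw [xiFun]
          exact Finset.le_sup (f := fun t => t ^ (n - r + 1 - t))
            (Finset.mem_Icc.mpr ⟨hu1, hum⟩)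
end

section
/- If S is a null semigroup of finite cardinality p ≥ 1, then the minimum transformation degree of S equals the least n ≥ 1 with ξ(n) ≥ p. Equivalently, T_n contains a null subsemigroup of cardinality p if and only if ξ(n) ≥ p. -/
lemma null_le_xi {n p : ℕ} (hn : 1 ≤ n) (T : Finset (Fin n → Fin n))
    (hT : T.card = p) (w : Fin n → Fin n) (hw : w ∈ T)
    (hnull : ∀ f ∈ T, ∀ g ∈ T, tMul f g = w) : p ≤ xiFun n := by
  classical
  set B : Finset (Fin n) := Finset.univ.filter (fun y => ∀ g ∈ T, g y = w y) with hB
  have hmemB : ∀ y, y ∈ B ↔ ∀ g ∈ T, g y = w y := by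
    intro y; simp [hB]
  have hmap : ∀ f ∈ T, ∀ x, f x ∈ B := by
    intro f hf x
    rw [hmemB]
    intro g hg
    have h1 : g (f x) = w x := congrFun (hnull f hf g hg) x
    have h2 : w (f x) = w x := congrFun (hnull f hf w hw) x
    rw [h1, h2]
  have hagree : ∀ f ∈ T, ∀ y, y ∈ B → f y = w y := by
    intro f hf y hy; exact (hmemB y).mp hy f hf
  have hBne : 1 ≤ B.card := by
    have : w ⟨0, hn⟩ ∈ B := hmap w hw ⟨0, hn⟩
    exact Finset.card_pos.mpr ⟨_, this⟩
  have hBle : B.card ≤ n := by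
    simpa using Finset.card_le_card (Finset.subset_univ B)
  -- the injection
  set Φ : (Fin n → Fin n) → ({x : Fin n // x ∉ B} → {y : Fin n // y ∈ B}) :=
    fun f x => if h : f x.val ∈ B then ⟨f x.val, h⟩ else ⟨w ⟨0, hn⟩, hmap w hw ⟨0, hn⟩⟩
    with hΦ
  have hinj : Set.InjOn Φ T := by
    intro f hf g hg hfg
    funext x
    by_cases hx : x ∈ B
    · rw [hagree f hf x hx, hagree g hg x hx]
    · have h1 : f x ∈ B := hmap f hf x
      have h2 : g x ∈ B := hmap g hg x
      have := congrFun hfg ⟨x, hx⟩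
      simp only [hΦ, dif_pos h1, dif_pos h2] at this
      exact congrArg Subtype.val this
  have hcard1 : T.card ≤ Fintype.card ({x : Fin n // x ∉ B} → {y : Fin n // y ∈ B}) := by
    have := Finset.card_le_card_of_injOn Φ (fun a _ => Finset.mem_univ (Φ a)) hinj
    simpa using this
  have hcard2 : Fintype.card ({x : Fin n // x ∉ B} → {y : Fin n // y ∈ B})
      = B.card ^ (n - B.card) := by
    rw [Fintype.card_fun]
    congr 1
    · exact Fintype.card_coe B
    · rw [Fintype.card_subtype_compl]
      simp [Fintype.card_coe]
  have hfinal : B.card ^ (n - B.card) ≤ xiFun n := by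
    unfold xiFun
    exact Finset.le_sup (f := fun t => t ^ (n - t)) (Finset.mem_Icc.mpr ⟨hBne, hBle⟩)
  calc p = T.card := hT.symm
    _ ≤ _ := hcard1
    _ = B.card ^ (n - B.card) := hcard2
    _ ≤ xiFun n := hfinal

lemma xi_to_null {n p : ℕ} (hn : 1 ≤ n) (hp : 1 ≤ p) (hpx : p ≤ xiFun n) :
    ∃ T : Finset (Fin n → Fin n), T.card = p ∧
      ∃ w ∈ T, ∀ f ∈ T, ∀ g ∈ T, tMul f g = w := by
  classical
  obtain ⟨t, htmem, hsup⟩ := Finset.exists_mem_eq_sup (Finset.Icc 1 n)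
    ⟨1, Finset.mem_Icc.mpr ⟨le_refl 1, hn⟩⟩ (fun t => t ^ (n - t))
  rw [Finset.mem_Icc] at htmem
  obtain ⟨ht1, htn⟩ := htmem
  have hpt : p ≤ t ^ (n - t) := by rwa [xiFun, hsup] at hpx
  set z0 : Fin n := ⟨0, hn⟩ with hz0
  set e : (Fin (n - t) → Fin t) → (Fin n → Fin n) :=
    fun u x => if h : t ≤ x.val then
      Fin.castLE htn (u ⟨x.val - t, Nat.sub_lt_sub_right h x.isLt⟩) else z0
    with he
  have hlt : ∀ u x, (e u x).val < t := by
    intro u x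
    by_cases h : t ≤ x.val
    · simp only [he, dif_pos h]
      exact (u _).isLt
    · simp only [he, dif_neg h]
      exact lt_of_lt_of_le (Nat.pos_of_ne_zero (by omega)) (le_refl t) |>.trans_le (le_refl t)
  have heinj : Function.Injective e := by
    intro u v huv
    funext i
    have hx : t + i.val < n := by
      have := i.isLt; omega
    have h1 := congrFun huv ⟨t + i.val, hx⟩
    have ht' : t ≤ t + i.val := Nat.le_add_right t i.val
    simp only [he, dif_pos ht'] at h1
    have h2 : (⟨t + i.val - t, Nat.sub_lt_sub_right ht' hx⟩ : Fin (n - t)) = i := by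
      apply Fin.ext; simp
    rw [h2] at h1
    exact Fin.castLE_injective htn h1
  set F : Finset (Fin n → Fin n) := Finset.univ.image e with hF
  have hFcard : F.card = t ^ (n - t) := by
    rw [hF, Finset.card_image_of_injective _ heinj, Finset.card_univ, Fintype.card_fun]
    simp
  have hwF : (fun _ : Fin n => z0) ∈ F := by
    rw [hF, Finset.mem_image]
    refine ⟨fun _ => ⟨0, ht1⟩, Finset.mem_univ _, ?_⟩
    funext x
    by_cases h : t ≤ x.val
    · simp only [he, dif_pos h]
      apply Fin.ext; simp [Fin.castLE, hz0]
    · simp only [he, dif_neg h]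
  have hnullF : ∀ f ∈ F, ∀ g ∈ F, tMul f g = fun _ => z0 := by
    intro f hf g hg
    rw [hF, Finset.mem_image] at hf hg
    obtain ⟨u, -, rfl⟩ := hf
    obtain ⟨v, -, rfl⟩ := hg
    funext x
    have : ¬ t ≤ (e u x).val := not_le.mpr (hlt u x)
    show e v (e u x) = z0
    exact dif_neg this
  -- choose subset of size p containing the zero
  have hcard_erase : p - 1 ≤ (F.erase (fun _ => z0)).card := by
    rw [Finset.card_erase_of_mem hwF, hFcard]
    omega
  obtain ⟨T', hT'sub, hT'card⟩ := Finset.exists_subset_card_eq hcard_erase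
  refine ⟨insert (fun _ => z0) T', ?_, (fun _ => z0), Finset.mem_insert_self _ _, ?_⟩
  · rw [Finset.card_insert_of_notMem (fun h => Finset.notMem_erase _ _ (hT'sub h)),
      hT'card]
    omega
  · intro f hf g hg
    have hfF : f ∈ F := by
      rcases Finset.mem_insert.mp hf with h | h
      · rw [h]; exact hwF
      · exact Finset.mem_of_mem_erase (hT'sub h)
    have hgF : g ∈ F := by
      rcases Finset.mem_insert.mp hg with h | h
      · rw [h]; exact hwF
      · exact Finset.mem_of_mem_erase (hT'sub h)
    exact hnullF f hfF g hgF

/-- If `S` is a null semigroup of cardinality `p ≥ 1` (with multiplication `mul` constantly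
equal to a zero `z`), then its minimum transformation degree equals the least `n ≥ 1` with
`ξ(n) ≥ p`.  Equivalently, `T_n` contains a null subsemigroup of cardinality `p` iff
`ξ(n) ≥ p`. -/
theorem null_semigroup_degree (S : Type) [Fintype S] (mul : S → S → S) (z : S)
    (hz : ∀ x y, mul x y = z) (p : ℕ) (hp : 1 ≤ p) (hcard : Fintype.card S = p) :
    sInf {n | 1 ≤ n ∧ ∃ φ : S → (Fin n → Fin n), Function.Injective φ ∧
        ∀ x y, φ (mul x y) = tMul (φ x) (φ y)}
      = sInf {n | 1 ≤ n ∧ p ≤ xiFun n} ∧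
    ∀ n, 1 ≤ n →
      ((∃ T : Finset (Fin n → Fin n), T.card = p ∧
          ∃ w ∈ T, ∀ f ∈ T, ∀ g ∈ T, tMul f g = w)
        ↔ p ≤ xiFun n) := by
  classical
  have key : ∀ n, 1 ≤ n →
      ((∃ T : Finset (Fin n → Fin n), T.card = p ∧
          ∃ w ∈ T, ∀ f ∈ T, ∀ g ∈ T, tMul f g = w)
        ↔ p ≤ xiFun n) := by
    intro n hn
    constructor
    · rintro ⟨T, hT, w, hw, hnull⟩
      exact null_le_xi hn T hT w hw hnull
    · intro h
      exact xi_to_null hn hp h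
  refine ⟨?_, key⟩
  congr 1
  ext n
  simp only [Set.mem_setOf_eq]
  constructor
  · rintro ⟨hn, φ, hinj, hhom⟩
    refine ⟨hn, (key n hn).mp ?_⟩
    refine ⟨Finset.univ.image φ, ?_, φ z,
      Finset.mem_image_of_mem φ (Finset.mem_univ z), ?_⟩
    · rw [Finset.card_image_of_injective _ hinj, Finset.card_univ, hcard]
    · intro f hf g hg
      obtain ⟨x, -, rfl⟩ := Finset.mem_image.mp hf
      obtain ⟨y, -, rfl⟩ := Finset.mem_image.mp hg
      rw [← hhom, hz]
  · rintro ⟨hn, hxi⟩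
    obtain ⟨T, hT, w, hwT, hnull⟩ := (key n hn).mpr hxi
    refine ⟨hn, ?_⟩
    have hcards : Fintype.card S = Fintype.card {f // f ∈ T} := by
      rw [Fintype.card_coe, hT, hcard]
    obtain e := Fintype.equivOfCardEq hcards
    set e' := e.trans (Equiv.swap (e z) ⟨w, hwT⟩) with he'
    refine ⟨fun s => (e' s).val, ?_, ?_⟩
    · intro a b hab
      exact e'.injective (Subtype.ext hab)
    · intro x y
      rw [hz]
      have h1 : (e' z).val = w := by
        simp [he', Equiv.trans_apply, Equiv.swap_apply_left]
      show (e' z).val = tMul (e' x).val (e' y).val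
      rw [h1]
      exact (hnull _ (e' x).2 _ (e' y).2).symm
end

section
/- For every integer n ≥ 3, the number of maximal null subsemigroups of T_n whose zero element has rank 1 equals n·(2^{n−1} − 2). (A null subsemigroup is maximal if it is not properly contained in another null subsemigroup of T_n.) -/
/-- A null subsemigroup of `T_n`: a set of transformations containing an element `z`
such that all products equal `z`. -/
def IsNullSub {n : ℕ} (S : Finset (Fin n → Fin n)) : Prop :=
  ∃ z ∈ S, ∀ f ∈ S, ∀ g ∈ S, tMul f g = z

namespace NullAux
variable {n : ℕ}

/-- The candidate maximal null subsemigroup: maps with image inside `A` sending `A` to `a`. -/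
def M (a : Fin n) (A : Finset (Fin n)) : Finset (Fin n → Fin n) :=
  Finset.univ.filter (fun f => (∀ x, f x ∈ A) ∧ ∀ x ∈ A, f x = a)

lemma mem_M {a : Fin n} {A : Finset (Fin n)} {f : Fin n → Fin n} :
    f ∈ M a A ↔ (∀ x, f x ∈ A) ∧ ∀ x ∈ A, f x = a := by simp [M]

lemma const_mem_M {a : Fin n} {A : Finset (Fin n)} (h : a ∈ A) :
    (fun _ => a) ∈ M a A := mem_M.2 ⟨fun _ => h, fun _ _ => rfl⟩

def step (a b : Fin n) (A : Finset (Fin n)) : Fin n → Fin n :=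
  fun x => if x ∈ A then a else b

lemma step_mem_M {a b : Fin n} {A : Finset (Fin n)} (ha : a ∈ A) (hb : b ∈ A) :
    step a b A ∈ M a A := by
  refine mem_M.2 ⟨fun x => ?_, fun x hx => ?_⟩
  · unfold step; split <;> assumption
  · simp [step, hx]

lemma M_null {a : Fin n} {A : Finset (Fin n)} :
    ∀ f ∈ M a A, ∀ g ∈ M a A, tMul f g = fun _ => a := by
  intro f hf g hg
  funext x
  exact (mem_M.1 hg).2 _ ((mem_M.1 hf).1 x)

lemma exists_not_mem_of_ne_univ {A : Finset (Fin n)} (h : A ≠ Finset.univ) :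
    ∃ c, c ∉ A := by
  by_contra hc
  push_neg at hc
  exact h (Finset.eq_univ_iff_forall.2 hc)

lemma exists_ne_mem {a : Fin n} {A : Finset (Fin n)} (ha : a ∈ A) (h : A ≠ {a}) :
    ∃ b ∈ A, b ≠ a := by
  by_contra hb
  push_neg at hb
  exact h (Finset.Subset.antisymm (fun x hx => Finset.mem_singleton.2 (hb x hx))
    (Finset.singleton_subset_iff.2 ha))

/-- Maximality of `M a A` for `{a} ⊊ A ⊊ univ`. -/
lemma subset_M_of_null_superset {a : Fin n} {A : Finset (Fin n)}
    (ha : a ∈ A) (h1 : A ≠ {a}) (h2 : A ≠ Finset.univ)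
    {T : Finset (Fin n → Fin n)} (hT : IsNullSub T) (hsub : M a A ⊆ T) :
    T ⊆ M a A := by
  obtain ⟨w, hwT, hw⟩ := hT
  have hca : (fun _ => a : Fin n → Fin n) ∈ T := hsub (const_mem_M ha)
  have hwa : w = fun _ => a := by
    have h := hw _ hca _ hca
    rw [← h]; rfl
  obtain ⟨b, hbA, hba⟩ := exists_ne_mem ha h1
  obtain ⟨c0, hc0⟩ := exists_not_mem_of_ne_univ h2
  intro g hg
  refine mem_M.2 ⟨fun x => ?_, fun y hy => ?_⟩
  · have hf : step a b A ∈ T := hsub (step_mem_M ha hbA)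
    have h := hw g hg _ hf
    rw [hwa] at h
    have hx := congrFun h x
    by_contra hgx
    simp [tMul, step, hgx] at hx
    exact hba hx
  · have hh : step a y A ∈ T := hsub (step_mem_M ha hy)
    have h := hw _ hh g hg
    rw [hwa] at h
    have hx := congrFun h c0
    simpa [tMul, step, hc0] using hx

/-- Every maximal null subsemigroup with rank-one zero is some `M a A`
with `{a} ⊊ A ⊊ univ`. -/
lemma structure_lemma (hn : 3 ≤ n) {S : Finset (Fin n → Fin n)}
    (hS : ∃ z ∈ S, trank z = 1 ∧ ∀ f ∈ S, ∀ g ∈ S, tMul f g = z)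
    (hmax : ∀ T : Finset (Fin n → Fin n), IsNullSub T → S ⊆ T → S = T) :
    ∃ a : Fin n, ∃ A : Finset (Fin n),
      a ∈ A ∧ A ≠ {a} ∧ A ≠ Finset.univ ∧ S = M a A := by
  classical
  obtain ⟨z, hzS, hz1, hz⟩ := hS
  obtain ⟨a, haz⟩ := Finset.card_eq_one.1 hz1
  have hza : ∀ x, z x = a := by
    intro x
    have : z x ∈ Finset.univ.image z := Finset.mem_image_of_mem z (Finset.mem_univ x)
    rw [haz] at this
    exact Finset.mem_singleton.1 this
  have hzc : z = fun _ => a := funext hza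
  set A : Finset (Fin n) := S.biUnion (fun f => Finset.univ.image f) with hA
  have memA : ∀ y : Fin n, y ∈ A ↔ ∃ f ∈ S, ∃ x, f x = y := by
    intro y; simp [hA]
  have haA : a ∈ A := (memA a).2 ⟨z, hzS, ⟨0, by omega⟩, hza _⟩
  have hsubM : S ⊆ M a A := by
    intro f hf
    refine mem_M.2 ⟨fun x => (memA _).2 ⟨f, hf, x, rfl⟩, fun y hy => ?_⟩
    obtain ⟨g, hg, x, hgx⟩ := (memA y).1 hy
    have := hz g hg f hf
    rw [hzc] at this
    have := congrFun this x
    simpa [tMul, hgx] using this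
  have hAuniv : A ≠ Finset.univ := by
    intro hAu
    have hconst : ∀ f ∈ S, f = fun _ => a := by
      intro f hf
      funext x
      exact (mem_M.1 (hsubM hf)).2 x (hAu ▸ Finset.mem_univ x)
    have hAsub : A ⊆ {a} := by
      intro y hy
      obtain ⟨f, hf, x, hfx⟩ := (memA y).1 hy
      rw [hconst f hf] at hfx
      simp [← hfx]
    have := Finset.card_le_card (hAu ▸ hAsub)
    rw [Finset.card_univ, Fintype.card_fin, Finset.card_singleton] at this
    omega
  have hSM : S = M a A := hmax _ ⟨_, const_mem_M haA, M_null⟩ hsubM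
  refine ⟨a, A, haA, ?_, hAuniv, hSM⟩
  intro hAa
  have hnt : Nontrivial (Fin n) := Fin.nontrivial_iff_two_le.2 (by omega)
  obtain ⟨b, hba⟩ := exists_ne a
  set A' : Finset (Fin n) := {a, b} with hA'
  have haA' : a ∈ A' := by simp [hA']
  have hbA' : b ∈ A' := by simp [hA']
  have hA'u : A' ≠ Finset.univ := by
    intro h
    have := congrArg Finset.card h
    rw [Finset.card_univ, Fintype.card_fin] at this
    have h2 : A'.card ≤ 2 := by
      rw [hA']
      exact (Finset.card_insert_le _ _).trans (by simp)
    omega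
  have hSsub' : S ⊆ M a A' := by
    intro f hf
    have hf' := mem_M.1 (hsubM hf)
    have : f = fun _ => a := by
      funext x
      have := hf'.1 x
      rw [hAa] at this
      exact Finset.mem_singleton.1 this
    rw [this]
    exact const_mem_M haA'
  have hSA' : S = M a A' := hmax _ ⟨_, const_mem_M haA', M_null⟩ hSsub'
  have hstep : step a b A' ∈ S := hSA' ▸ step_mem_M haA' hbA'
  obtain ⟨c0, hc0⟩ := exists_not_mem_of_ne_univ hA'u
  have := (mem_M.1 (hsubM hstep)).1 c0
  rw [hAa] at this
  have hb : step a b A' c0 = b := by simp [step, hc0]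
  rw [hb] at this
  exact hba (Finset.mem_singleton.1 this)

lemma M_inj {a a' : Fin n} {A A' : Finset (Fin n)}
    (ha : a ∈ A) (h2 : A ≠ Finset.univ)
    (ha' : a' ∈ A') (h2' : A' ≠ Finset.univ)
    (h : M a A = M a' A') : a = a' ∧ A = A' := by
  have haa : a = a' := by
    have hc : (fun _ => a : Fin n → Fin n) ∈ M a' A' := h ▸ const_mem_M ha
    exact (mem_M.1 hc).2 a' ha'
  subst haa
  have key : ∀ (B B' : Finset (Fin n)), a ∈ B → B ≠ Finset.univ → a ∈ B' →
      M a B = M a B' → B ⊆ B' := by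
    intro B B' hB hBu hB' hMM y hy
    obtain ⟨c0, hc0⟩ := exists_not_mem_of_ne_univ hBu
    have hst : step a y B ∈ M a B' := hMM ▸ step_mem_M hB hy
    have := (mem_M.1 hst).1 c0
    simpa [step, hc0] using this
  exact ⟨rfl, Finset.Subset.antisymm (key A A' ha h2 ha' h) (key A' A ha' h2' ha h.symm)⟩

lemma card_filter_mem (a : Fin n) :
    (Finset.univ.filter (fun A : Finset (Fin n) => a ∈ A)).card = 2 ^ (n - 1) := by
  classical
  have h := Finset.card_bij'
    (i := fun (A : Finset (Fin n)) (_ : A ∈ Finset.univ.filter (fun A => a ∈ A)) => A.erase a)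
    (j := fun (B : Finset (Fin n)) (_ : B ∈ (Finset.univ.erase a).powerset) => insert a B)
    (hi := ?_) (hj := ?_) (left_inv := ?_) (right_inv := ?_)
  · rw [h, Finset.card_powerset, Finset.card_erase_of_mem (Finset.mem_univ a),
      Finset.card_univ, Fintype.card_fin]
  · intro A hA
    simp only [Finset.mem_powerset]
    exact Finset.erase_subset_erase a (Finset.subset_univ A)
  · intro B hB
    simp
  · intro A hA
    simp only [Finset.mem_filter] at hA
    exact Finset.insert_erase hA.2
  · intro B hB
    simp only [Finset.mem_powerset] at hB
    have : a ∉ B := fun hab => (Finset.mem_erase.1 (hB hab)).1 rfl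
    exact Finset.erase_insert this

lemma card_Da (hn : 3 ≤ n) (a : Fin n) :
    (Finset.univ.filter (fun A : Finset (Fin n) =>
      a ∈ A ∧ A ≠ {a} ∧ A ≠ Finset.univ)).card = 2 ^ (n - 1) - 2 := by
  classical
  have hne : ({a} : Finset (Fin n)) ≠ Finset.univ := by
    intro h
    have := congrArg Finset.card h
    rw [Finset.card_singleton, Finset.card_univ, Fintype.card_fin] at this
    omega
  have hset : (Finset.univ.filter (fun A : Finset (Fin n) =>
      a ∈ A ∧ A ≠ {a} ∧ A ≠ Finset.univ))
      = (Finset.univ.filter (fun A : Finset (Fin n) => a ∈ A)) \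
        {({a} : Finset (Fin n)), Finset.univ} := by
    ext A
    simp only [Finset.mem_filter, Finset.mem_univ, true_and, Finset.mem_sdiff,
      Finset.mem_insert, Finset.mem_singleton]
    constructor
    · rintro ⟨h1, h2, h3⟩; exact ⟨h1, by tauto⟩
    · rintro ⟨h1, h2⟩
      push_neg at h2
      exact ⟨h1, h2.1, h2.2⟩
  rw [hset, Finset.card_sdiff_of_subset, card_filter_mem a]
  · congr 1
    rw [Finset.card_insert_of_notMem (by simpa using hne), Finset.card_singleton]
  · intro B hB
    simp only [Finset.mem_insert, Finset.mem_singleton] at hB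
    rcases hB with rfl | rfl <;> simp

/-- The parameter set. -/
def D (n : ℕ) : Finset (Fin n × Finset (Fin n)) :=
  Finset.univ.filter (fun p => p.1 ∈ p.2 ∧ p.2 ≠ {p.1} ∧ p.2 ≠ Finset.univ)

lemma card_D (hn : 3 ≤ n) : (D n).card = n * (2 ^ (n - 1) - 2) := by
  classical
  rw [D, Finset.card_filter, Fintype.sum_prod_type]
  have h : ∀ a : Fin n, (∑ A : Finset (Fin n),
      if a ∈ A ∧ A ≠ {a} ∧ A ≠ Finset.univ then 1 else 0) = 2 ^ (n - 1) - 2 := by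
    intro a
    rw [← Finset.card_filter]
    exact card_Da hn a
  rw [Finset.sum_congr rfl (fun a _ => h a), Finset.sum_const, Finset.card_univ,
    Fintype.card_fin, smul_eq_mul]

end NullAux

/-- For `n ≥ 3`, the number of maximal null subsemigroups of `T_n` whose zero element has
rank `1` equals `n * (2^(n-1) - 2)`. -/
theorem count_maximal_null_rank_one (n : ℕ) (hn : 3 ≤ n) :
    Set.ncard {S : Finset (Fin n → Fin n) |
        (∃ z ∈ S, trank z = 1 ∧ ∀ f ∈ S, ∀ g ∈ S, tMul f g = z) ∧
        ∀ T : Finset (Fin n → Fin n), IsNullSub T → S ⊆ T → S = T}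
      = n * (2 ^ (n - 1) - 2) := by
  classical
  have hne : Nonempty (Fin n) := ⟨⟨0, by omega⟩⟩
  have hset : {S : Finset (Fin n → Fin n) |
        (∃ z ∈ S, trank z = 1 ∧ ∀ f ∈ S, ∀ g ∈ S, tMul f g = z) ∧
        ∀ T : Finset (Fin n → Fin n), IsNullSub T → S ⊆ T → S = T}
      = ↑((NullAux.D n).image (fun p => NullAux.M p.1 p.2)) := by
    ext S
    simp only [Set.mem_setOf_eq, Finset.coe_image, Set.mem_image, Finset.mem_coe,
      NullAux.D, Finset.mem_filter, Finset.mem_univ, true_and]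
    constructor
    · rintro ⟨h1, h2⟩
      obtain ⟨a, A, ha, hA1, hA2, hS⟩ := NullAux.structure_lemma hn h1 h2
      exact ⟨(a, A), ⟨ha, hA1, hA2⟩, hS.symm⟩
    · rintro ⟨⟨a, A⟩, ⟨ha, hA1, hA2⟩, rfl⟩
      constructor
      · refine ⟨fun _ => a, NullAux.const_mem_M ha, ?_, NullAux.M_null⟩
        unfold trank
        rw [Finset.image_const Finset.univ_nonempty, Finset.card_singleton]
      · intro T hT hsub
        exact Finset.Subset.antisymm hsub
          (NullAux.subset_M_of_null_superset ha hA1 hA2 hT hsub)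
  rw [hset, Set.ncard_coe_finset, Finset.card_image_of_injOn, NullAux.card_D hn]
  intro p hp q hq h
  simp only [Finset.coe_filter, NullAux.D, Set.mem_setOf_eq, Finset.mem_coe,
    Finset.mem_filter, Finset.mem_univ, true_and] at hp hq
  obtain ⟨heq1, heq2⟩ := NullAux.M_inj hp.1 hp.2.2 hq.1 hq.2.2 h
  exact Prod.ext heq1 heq2
end

section
/- For every integer n ≥ 4, the maximum cardinality of a 3-nilpotent subsemigroup of T_n equals max{t^{n−t}·ξ(t) : 1 ≤ t ≤ n}. -/
namespace ThreeNilAux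

/-- Any admissible pair value is at most the target supremum. -/
lemma val_le_sup (n t s : ℕ) (hs : 1 ≤ s) (hst : s ≤ t) (htn : t ≤ n) :
    t ^ (n - t) * s ^ (t - s) ≤ (Finset.Icc 1 n).sup fun t => t ^ (n - t) * xiFun t := by
  have h1 : s ^ (t - s) ≤ xiFun t :=
    Finset.le_sup (f := fun r => r ^ (t - r)) (Finset.mem_Icc.mpr ⟨hs, hst⟩)
  calc t ^ (n - t) * s ^ (t - s) ≤ t ^ (n - t) * xiFun t := Nat.mul_le_mul_left _ h1
    _ ≤ _ := Finset.le_sup (f := fun t => t ^ (n - t) * xiFun t)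
        (Finset.mem_Icc.mpr ⟨hs.trans hst, htn⟩)

lemma two_pow_le (n : ℕ) (hn : 3 ≤ n) : 2 ^ (n - 2) ≤ 3 ^ (n - 3) * 2 ^ (3 - 2) := by
  have h : n - 2 = (n - 3) + 1 := by omega
  rw [h, pow_succ]
  have h2 := Nat.pow_le_pow_left (by norm_num : (2:ℕ) ≤ 3) (n - 3)
  simpa using Nat.mul_le_mul_right 2 h2

/-- Degenerate values `t^(n-t)` are dominated by a strictly admissible pair. -/
lemma collapsedDom (n t : ℕ) (hn : 4 ≤ n) (ht : 1 ≤ t) (htn : t ≤ n) :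
    ∃ t' s', 2 ≤ s' ∧ s' < t' ∧ t' < n ∧
      t ^ (n - t) ≤ t' ^ (n - t') * s' ^ (t' - s') := by
  rcases lt_or_ge t 3 with h3 | h3
  · refine ⟨3, 2, le_rfl, by omega, by omega, ?_⟩
    calc t ^ (n - t) ≤ 2 ^ (n - 2) := by
          interval_cases t
          · simpa using Nat.one_le_two_pow
          · exact le_rfl
      _ ≤ 3 ^ (n - 3) * 2 ^ (3 - 2) := two_pow_le n (by omega)
  · rcases lt_or_eq_of_le htn with h | rfl
    · exact ⟨t, 2, le_rfl, by omega, h,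
        Nat.le_mul_of_pos_right _ (Nat.pow_pos (by norm_num))⟩
    · refine ⟨3, 2, le_rfl, by omega, by omega, ?_⟩
      simp only [Nat.sub_self, pow_zero]
      exact Nat.one_le_iff_ne_zero.mpr (by positivity)

/-- Every admissible value is dominated by a strictly admissible value. -/
lemma dom (n t s : ℕ) (hn : 4 ≤ n) (hs : 1 ≤ s) (hst : s ≤ t) (htn : t ≤ n) :
    ∃ t' s', 2 ≤ s' ∧ s' < t' ∧ t' < n ∧
      t ^ (n - t) * s ^ (t - s) ≤ t' ^ (n - t') * s' ^ (t' - s') := by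
  rcases eq_or_lt_of_le hst with rfl | hlt
  · simpa using collapsedDom n s hn hs htn
  rcases eq_or_lt_of_le hs with hs1 | hs2
  · -- s = 1
    rw [← hs1, one_pow, mul_one]
    exact collapsedDom n t hn (by omega) htn
  rcases eq_or_lt_of_le htn with rfl | htlt
  · -- t = n
    simp only [Nat.sub_self, pow_zero, one_mul]
    rcases lt_or_ge s 3 with h3 | h3
    · have hs2' : s = 2 := by omega
      subst hs2'
      exact ⟨3, 2, le_rfl, by omega, by omega, two_pow_le t (by omega)⟩
    · exact ⟨s, 2, le_rfl, by omega, hlt,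
        Nat.le_mul_of_pos_right _ (Nat.pow_pos (by norm_num))⟩
  · exact ⟨t, s, hs2, hlt, htlt, le_rfl⟩

/-- The construction attaining the bound, for a strictly admissible pair. -/
lemma construction (n t s : ℕ) (h2s : 2 ≤ s) (hst : s < t) (htn : t < n) :
    ∃ S : Finset (Fin n → Fin n), S.card = t ^ (n - t) * s ^ (t - s) ∧
      (∀ f ∈ S, ∀ g ∈ S, tMul f g ∈ S) ∧
      ∃ z ∈ S, (∀ f ∈ S, ∀ g ∈ S, ∀ h ∈ S, tMul (tMul f g) h = z) ∧
        ∃ f ∈ S, ∃ g ∈ S, tMul f g ≠ z := by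
  have hsn : s < n := hst.trans htn
  have h0n : 0 < n := by omega
  obtain ⟨p, hp⟩ : ∃ p : Fin n, (p : ℕ) = 0 := ⟨⟨0, h0n⟩, rfl⟩
  obtain ⟨sF, hsFv⟩ : ∃ y : Fin n, (y : ℕ) = s := ⟨⟨s, hsn⟩, rfl⟩
  obtain ⟨tF, htFv⟩ : ∃ y : Fin n, (y : ℕ) = t := ⟨⟨t, htn⟩, rfl⟩
  obtain ⟨oneF, honeF⟩ : ∃ y : Fin n, (y : ℕ) = 1 := ⟨⟨1, by omega⟩, rfl⟩
  set T : Fin n → Finset (Fin n) := fun x =>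
    if (x : ℕ) < s then {p} else if (x : ℕ) < t then Finset.Iio sF else Finset.Iio tF with hT
  have hTs : ∀ x : Fin n, (x : ℕ) < s → T x = {p} := by
    intro x h; simp only [hT]; rw [if_pos h]
  have hTm : ∀ x : Fin n, ¬ (x : ℕ) < s → (x : ℕ) < t → T x = Finset.Iio sF := by
    intro x h1 h2; simp only [hT]; rw [if_neg h1, if_pos h2]
  have hTl : ∀ x : Fin n, ¬ (x : ℕ) < t → T x = Finset.Iio tF := by
    intro x h1; simp only [hT]; rw [if_neg (by omega), if_neg h1]
  -- membership helpers
  have hA : ∀ f ∈ Fintype.piFinset T, ∀ x : Fin n, (f x : ℕ) < t := by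
    intro f hf x
    have h := Fintype.mem_piFinset.mp hf x
    rcases Nat.lt_or_ge (x : ℕ) s with hxs | hxs
    · rw [hTs x hxs, Finset.mem_singleton] at h
      rw [h]; omega
    · rcases Nat.lt_or_ge (x : ℕ) t with hxt | hxt
      · rw [hTm x (by omega) hxt, Finset.mem_Iio, Fin.lt_def, hsFv] at h; omega
      · rw [hTl x (by omega), Finset.mem_Iio, Fin.lt_def, htFv] at h; omega
  have hB : ∀ f ∈ Fintype.piFinset T, ∀ x : Fin n, (x : ℕ) < t → (f x : ℕ) < s := by
    intro f hf x hx
    have h := Fintype.mem_piFinset.mp hf x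
    rcases Nat.lt_or_ge (x : ℕ) s with hxs | hxs
    · rw [hTs x hxs, Finset.mem_singleton] at h
      rw [h]; omega
    · rw [hTm x (by omega) hx, Finset.mem_Iio, Fin.lt_def, hsFv] at h; omega
  have hC : ∀ f ∈ Fintype.piFinset T, ∀ x : Fin n, (x : ℕ) < s → f x = p := by
    intro f hf x hx
    have h := Fintype.mem_piFinset.mp hf x
    rw [hTs x hx, Finset.mem_singleton] at h
    exact h
  refine ⟨Fintype.piFinset T, ?_, ?_, ?_⟩
  · -- cardinality
    rw [Fintype.card_piFinset]
    have hcard : ∀ x : Fin n, (T x).card =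
        (fun i => if i < s then 1 else if i < t then s else t) (x : ℕ) := by
      intro x
      rcases Nat.lt_or_ge (x : ℕ) s with hxs | hxs
      · rw [hTs x hxs, Finset.card_singleton]
        simp only [if_pos hxs]
      · rcases Nat.lt_or_ge (x : ℕ) t with hxt | hxt
        · rw [hTm x (by omega) hxt, Fin.card_Iio, hsFv]
          simp only [if_neg (by omega : ¬ (x:ℕ) < s), if_pos hxt]
        · rw [hTl x (by omega), Fin.card_Iio, htFv]
          simp only [if_neg (by omega : ¬ (x:ℕ) < s), if_neg (by omega : ¬ (x:ℕ) < t)]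
    calc ∏ x : Fin n, (T x).card
        = ∏ x : Fin n, (fun i => if i < s then 1 else if i < t then s else t) (x : ℕ) :=
          Finset.prod_congr rfl fun x _ => hcard x
      _ = ∏ i ∈ Finset.range n, (if i < s then 1 else if i < t then s else t) :=
          Fin.prod_univ_eq_prod_range (fun i => if i < s then 1 else if i < t then s else t) n
      _ = t ^ (n - t) * s ^ (t - s) := by
          rw [Finset.range_eq_Ico,
            ← Finset.prod_Ico_consecutive _ (Nat.zero_le t) (le_of_lt htn),
            ← Finset.prod_Ico_consecutive _ (Nat.zero_le s) (le_of_lt hst)]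
          have e1 : ∏ i ∈ Finset.Ico 0 s,
              (if i < s then 1 else if i < t then s else t) = 1 := by
            apply Finset.prod_eq_one
            intro i hi
            rw [Finset.mem_Ico] at hi
            rw [if_pos hi.2]
          have e2 : ∏ i ∈ Finset.Ico s t,
              (if i < s then 1 else if i < t then s else t) = s ^ (t - s) := by
            rw [Finset.prod_congr rfl fun i hi => ?_, Finset.prod_const, Nat.card_Ico]
            rw [Finset.mem_Ico] at hi
            rw [if_neg (by omega), if_pos hi.2]
          have e3 : ∏ i ∈ Finset.Ico t n,
              (if i < s then 1 else if i < t then s else t) = t ^ (n - t) := by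
            rw [Finset.prod_congr rfl fun i hi => ?_, Finset.prod_const, Nat.card_Ico]
            rw [Finset.mem_Ico] at hi
            rw [if_neg (by omega), if_neg (by omega)]
          rw [e1, e2, e3, one_mul, mul_comm]
  · -- closure
    intro f hf g hg
    rw [Fintype.mem_piFinset]
    intro x
    rcases Nat.lt_or_ge (x : ℕ) s with hxs | hxs
    · rw [hTs x hxs, Finset.mem_singleton]
      show g (f x) = p
      rw [hC f hf x hxs, hC g hg p (by omega)]
    · rcases Nat.lt_or_ge (x : ℕ) t with hxt | hxt
      · rw [hTm x (by omega) hxt, Finset.mem_Iio, Fin.lt_def, hsFv]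
        show ((g (f x) : ℕ)) < s
        have hfx : (f x : ℕ) < s := hB f hf x hxt
        rw [hC g hg (f x) hfx]; omega
      · rw [hTl x (by omega), Finset.mem_Iio, Fin.lt_def, htFv]
        show ((g (f x) : ℕ)) < t
        have hfx : (f x : ℕ) < t := hA f hf x
        have := hB g hg (f x) hfx
        omega
  · -- zero element and witnesses
    have hzmem : (fun _ : Fin n => p) ∈ Fintype.piFinset T := by
      rw [Fintype.mem_piFinset]
      intro x
      rcases Nat.lt_or_ge (x : ℕ) s with hxs | hxs
      · rw [hTs x hxs]; exact Finset.mem_singleton_self p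
      · rcases Nat.lt_or_ge (x : ℕ) t with hxt | hxt
        · rw [hTm x (by omega) hxt, Finset.mem_Iio, Fin.lt_def, hsFv]; omega
        · rw [hTl x (by omega), Finset.mem_Iio, Fin.lt_def, htFv]; omega
    refine ⟨fun _ => p, hzmem, ?_, ?_⟩
    · intro f hf g hg h hh
      funext x
      show h (g (f x)) = p
      have hfx : (f x : ℕ) < t := hA f hf x
      have hgx : (g (f x) : ℕ) < s := hB g hg (f x) hfx
      exact hC h hh _ hgx
    · -- witness of non-2-nilpotency
      refine ⟨fun x => if (x : ℕ) < t then p else sF, ?_,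
        fun x => if (x : ℕ) < s then p else if (x : ℕ) < t then oneF else p, ?_, ?_⟩
      · rw [Fintype.mem_piFinset]
        intro x
        rcases Nat.lt_or_ge (x : ℕ) s with hxs | hxs
        · rw [hTs x hxs, if_pos (by omega : (x:ℕ) < t)]
          exact Finset.mem_singleton_self p
        · rcases Nat.lt_or_ge (x : ℕ) t with hxt | hxt
          · rw [hTm x (by omega) hxt, if_pos hxt, Finset.mem_Iio, Fin.lt_def, hsFv]; omega
          · rw [hTl x (by omega), if_neg (by omega : ¬ (x:ℕ) < t),
              Finset.mem_Iio, Fin.lt_def, htFv, hsFv]; omega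
      · rw [Fintype.mem_piFinset]
        intro x
        rcases Nat.lt_or_ge (x : ℕ) s with hxs | hxs
        · rw [hTs x hxs, if_pos hxs]
          exact Finset.mem_singleton_self p
        · rcases Nat.lt_or_ge (x : ℕ) t with hxt | hxt
          · rw [hTm x (by omega) hxt, if_neg (by omega : ¬ (x:ℕ) < s), if_pos hxt,
              Finset.mem_Iio, Fin.lt_def, hsFv, honeF]; omega
          · rw [hTl x (by omega), if_neg (by omega : ¬ (x:ℕ) < s),
              if_neg (by omega : ¬ (x:ℕ) < t), Finset.mem_Iio, Fin.lt_def, htFv]; omega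
      · intro hcontra
        have hev := congrFun hcontra tF
        have e1 : tMul (fun x : Fin n => if (x : ℕ) < t then p else sF)
            (fun x : Fin n => if (x : ℕ) < s then p else if (x : ℕ) < t then oneF else p)
            tF = oneF := by
          show (fun x : Fin n => if (x : ℕ) < s then p else if (x : ℕ) < t then oneF else p)
              (if (tF : ℕ) < t then p else sF) = oneF
          rw [if_neg (by omega : ¬ (tF : ℕ) < t)]
          show (if (sF : ℕ) < s then p else if (sF : ℕ) < t then oneF else p) = oneF
          rw [if_neg (by omega : ¬ (sF : ℕ) < s), if_pos (by omega : (sF : ℕ) < t)]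
        rw [e1] at hev
        have : (1 : ℕ) = 0 := by rw [← honeF, ← hp, hev]
        omega

/-- Upper bound: any subset all of whose triple products collapse has small cardinality. -/
lemma upper (n : ℕ) (hn : 4 ≤ n) (S : Finset (Fin n → Fin n)) (z : Fin n → Fin n)
    (hz : z ∈ S) (htriple : ∀ f ∈ S, ∀ g ∈ S, ∀ h ∈ S, tMul (tMul f g) h = z) :
    S.card ≤ (Finset.Icc 1 n).sup fun t => t ^ (n - t) * xiFun t := by
  classical
  set A : Finset (Fin n) := S.biUnion (fun f => Finset.image f Finset.univ) with hAdef
  set B : Finset (Fin n) := S.biUnion (fun f => S.biUnion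
    (fun g => Finset.image (tMul f g) Finset.univ)) with hBdef
  have hfA : ∀ f ∈ S, ∀ x : Fin n, f x ∈ A := by
    intro f hf x
    rw [hAdef, Finset.mem_biUnion]
    exact ⟨f, hf, Finset.mem_image_of_mem f (Finset.mem_univ x)⟩
  have hmemB : ∀ f ∈ S, ∀ g ∈ S, ∀ x : Fin n, tMul f g x ∈ B := by
    intro f hf g hg x
    rw [hBdef, Finset.mem_biUnion]
    refine ⟨f, hf, ?_⟩
    rw [Finset.mem_biUnion]
    exact ⟨g, hg, Finset.mem_image_of_mem _ (Finset.mem_univ x)⟩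
  have hBA : B ⊆ A := by
    intro x hx
    rw [hBdef, Finset.mem_biUnion] at hx
    obtain ⟨f, hf, hx⟩ := hx
    rw [Finset.mem_biUnion] at hx
    obtain ⟨g, hg, hx⟩ := hx
    rw [Finset.mem_image] at hx
    obtain ⟨y, _, hy⟩ := hx
    rw [← hy]
    exact hfA g hg (f y)
  have hBne : B.Nonempty := ⟨tMul z z ⟨0, by omega⟩, hmemB z hz z hz _⟩
  have hfB : ∀ f ∈ S, ∀ x ∈ A, f x ∈ B := by
    intro f hf x hx
    rw [hAdef, Finset.mem_biUnion] at hx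
    obtain ⟨g, hg, hx⟩ := hx
    rw [Finset.mem_image] at hx
    obtain ⟨y, _, hy⟩ := hx
    have : f x = tMul g f y := by rw [tMul, ← hy]
    rw [this]
    exact hmemB g hg f hf y
  have hagree : ∀ f ∈ S, ∀ f' ∈ S, ∀ x ∈ B, f x = f' x := by
    intro f hf f' hf' x hx
    rw [hBdef, Finset.mem_biUnion] at hx
    obtain ⟨g, hg, hx⟩ := hx
    rw [Finset.mem_biUnion] at hx
    obtain ⟨h, hh, hx⟩ := hx
    rw [Finset.mem_image] at hx
    obtain ⟨y, _, hy⟩ := hx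
    have e1 : f x = tMul (tMul g h) f y := by rw [tMul, tMul, ← hy]; rfl
    have e2 : f' x = tMul (tMul g h) f' y := by rw [tMul, tMul, ← hy]; rfl
    rw [e1, e2, htriple g hg h hh f hf, htriple g hg h hh f' hf']
  -- the injection
  let F : {f // f ∈ S} →
      ((↥(Finset.univ \ A) → ↥A) × (↥(A \ B) → ↥B)) := fun f =>
    (fun x => ⟨f.1 x.1, hfA f.1 f.2 x.1⟩,
     fun x => ⟨f.1 x.1, hfB f.1 f.2 x.1 (Finset.mem_sdiff.mp x.2).1⟩)
  have hFinj : Function.Injective F := by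
    intro f f' hff
    have h1 := congrArg Prod.fst hff
    have h2 := congrArg Prod.snd hff
    apply Subtype.ext
    funext x
    by_cases hxB : x ∈ B
    · exact hagree f.1 f.2 f'.1 f'.2 x hxB
    by_cases hxA : x ∈ A
    · have := congrFun h2 ⟨x, Finset.mem_sdiff.mpr ⟨hxA, hxB⟩⟩
      exact congrArg Subtype.val this
    · have := congrFun h1 ⟨x, Finset.mem_sdiff.mpr ⟨Finset.mem_univ x, hxA⟩⟩
      exact congrArg Subtype.val this
  have hcard : S.card ≤ A.card ^ (n - A.card) * B.card ^ (A.card - B.card) := by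
    have hle := Fintype.card_le_of_injective F hFinj
    rw [Fintype.card_coe] at hle
    rw [Fintype.card_prod, Fintype.card_fun, Fintype.card_fun,
      Fintype.card_coe, Fintype.card_coe, Fintype.card_coe, Fintype.card_coe,
      Finset.card_sdiff_of_subset (Finset.subset_univ A), Finset.card_sdiff_of_subset hBA,
      Finset.card_univ, Fintype.card_fin] at hle
    exact hle
  refine hcard.trans (val_le_sup n A.card B.card ?_ ?_ ?_)
  · exact Finset.card_pos.mpr hBne
  · exact Finset.card_le_card hBA
  · exact (Finset.card_le_univ A).trans_eq (Fintype.card_fin n)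

end ThreeNilAux

/-- For `n ≥ 4`, the maximum cardinality of a `3`-nilpotent subsemigroup of `T_n`
(a multiplicatively closed subset having an element `z` with `x*y*w = z` for all members
`x, y, w` but `x*y ≠ z` for some members `x, y`) equals
`max { t^(n-t) * ξ(t) : 1 ≤ t ≤ n }`. -/
theorem max_three_nilpotent_subsemigroup (n : ℕ) (hn : 4 ≤ n) :
    IsGreatest {k | ∃ S : Finset (Fin n → Fin n), S.card = k ∧
        (∀ f ∈ S, ∀ g ∈ S, tMul f g ∈ S) ∧
        ∃ z ∈ S, (∀ f ∈ S, ∀ g ∈ S, ∀ h ∈ S, tMul (tMul f g) h = z) ∧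
          ∃ f ∈ S, ∃ g ∈ S, tMul f g ≠ z}
      ((Finset.Icc 1 n).sup fun t => t ^ (n - t) * xiFun t) := by
  constructor
  · -- membership: the construction
    obtain ⟨t0, ht0, hMt0⟩ := Finset.exists_mem_eq_sup (Finset.Icc 1 n)
      ⟨1, Finset.mem_Icc.mpr ⟨le_rfl, by omega⟩⟩ (fun t => t ^ (n - t) * xiFun t)
    rw [Finset.mem_Icc] at ht0
    obtain ⟨s0, hs0, hxi⟩ := Finset.exists_mem_eq_sup (Finset.Icc 1 t0)
      ⟨1, Finset.mem_Icc.mpr ⟨le_rfl, ht0.1⟩⟩ (fun r => r ^ (t0 - r))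
    rw [Finset.mem_Icc] at hs0
    obtain ⟨t, s, h2s, hst, htn, hle⟩ := ThreeNilAux.dom n t0 s0 hn hs0.1 hs0.2 ht0.2
    have hMval : t ^ (n - t) * s ^ (t - s) =
        (Finset.Icc 1 n).sup fun t => t ^ (n - t) * xiFun t := by
      refine le_antisymm (ThreeNilAux.val_le_sup n t s (by omega) (by omega) (by omega)) ?_
      rw [hMt0]
      calc t0 ^ (n - t0) * xiFun t0 = t0 ^ (n - t0) * s0 ^ (t0 - s0) := by
            rw [xiFun, ← hxi]
        _ ≤ t ^ (n - t) * s ^ (t - s) := hle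
    obtain ⟨S, hScard, hclosed, hz⟩ := ThreeNilAux.construction n t s h2s hst htn
    exact ⟨S, by rw [hScard, hMval], hclosed, hz⟩
  · -- upper bound
    rintro k ⟨S, rfl, _, z, hz, htriple, -⟩
    exact ThreeNilAux.upper n hn S z hz htriple
end

section
/- For integers m, p, q ≥ 1, T_m contains a subsemigroup isomorphic to a p×q right null semigroup if and only if there exist an integer r ≥ 1 and positive integers s_1,…,s_r and t_1,…,t_r with t_i ≤ s_i for all i, s_1 + ⋯ + s_r = m, t_1⋯t_r ≥ p, and t_1^{s_1−t_1}⋯t_r^{s_r−t_r} ≥ q. -/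
set_option maxHeartbeats 1000000 in
set_option synthInstance.maxHeartbeats 1000000 in
/-- `T_m` contains a `p × q` right null semigroup (the direct product of a `p`-element
right zero semigroup and a `q`-element null semigroup, i.e. `Fin p × Fin q` with
multiplication `(a,b)·(c,d) = (c, 0)`) iff there are compositions `σ = (s₁,…,s_r)` of `m`
and `τ = (t₁,…,t_r)` with `τ ≼ σ`, `∏τ ≥ p` and `∏ tᵢ^(sᵢ-tᵢ) ≥ q`. -/
theorem right_null_in_Tm_iff (m p q : ℕ) (hm : 1 ≤ m) (hp : 1 ≤ p) (hq : 1 ≤ q) :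
    (∃ φ : Fin p × Fin q → (Fin m → Fin m), Function.Injective φ ∧
        ∀ x y : Fin p × Fin q, φ (y.1, (⟨0, hq⟩ : Fin q)) = tMul (φ x) (φ y))
      ↔ ∃ r : ℕ, 1 ≤ r ∧ ∃ s t : Fin r → ℕ,
          (∀ i, 1 ≤ t i) ∧ (∀ i, t i ≤ s i) ∧ (∑ i, s i) = m ∧
          p ≤ ∏ i, t i ∧ q ≤ ∏ i, (t i) ^ (s i - t i) := by
  classical
  constructor
  · rintro ⟨φ, hinj, hlaw⟩
    -- Key identity: φ(c,0) w = φ(c,d) (φ x w) for all x, c, d, w.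
    have K : ∀ (x : Fin p × Fin q) (c : Fin p) (d : Fin q) (w : Fin m),
        φ (c, ⟨0, hq⟩) w = φ (c, d) (φ x w) := fun x c d w =>
      congrFun (hlaw x (c, d)) w
    set z0 : Fin p × Fin q := (⟨0, hp⟩, ⟨0, hq⟩) with hz0
    set e : Fin m → Fin m := φ z0 with he
    have hee : ∀ (x : Fin p × Fin q) (w : Fin m), e (φ x w) = e w :=
      fun x w => (K x ⟨0, hp⟩ ⟨0, hq⟩ w).symm
    have hidem : ∀ w, e (e w) = e w := fun w => hee z0 w
    set I : Finset (Fin m) := Finset.univ.image e with hI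
    have hr1 : 1 ≤ I.card := by
      refine Finset.card_pos.mpr ⟨e ⟨0, hm⟩, ?_⟩
      exact Finset.mem_image_of_mem e (Finset.mem_univ _)
    set r : ℕ := I.card with hr
    set ι := I.equivFin with hι
    set v : Fin r → Fin m := fun j => ((ι.symm j : I) : Fin m) with hv
    have hvI : ∀ j, v j ∈ I := fun j => (ι.symm j).2
    have hev : ∀ j, e (v j) = v j := by
      intro j
      obtain ⟨w, -, hw⟩ := Finset.mem_image.mp (hvI j)
      rw [← hw, hidem]
    -- each element's block index
    have hmem : ∀ w : Fin m, e w ∈ I := fun w => Finset.mem_image_of_mem e (Finset.mem_univ _)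
    set jdx : Fin m → Fin r := fun w => ι ⟨e w, hmem w⟩ with hjdx
    have hvjdx : ∀ w, v (jdx w) = e w := by
      intro w
      show ((ι.symm (ι ⟨e w, hmem w⟩) : I) : Fin m) = e w
      rw [Equiv.symm_apply_apply]
    set B : Fin r → Finset (Fin m) := fun j => Finset.univ.filter (fun x => e x = v j) with hB
    set A : Fin r → Finset (Fin m) :=
      fun j => (B j).filter (fun x => ∃ z w, φ z w = x) with hA
    have hmemB : ∀ j x, x ∈ B j ↔ e x = v j := by
      intro j x; simp [hB]
    have hmemA : ∀ j x, x ∈ A j ↔ (e x = v j ∧ ∃ z w, φ z w = x) := by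
      intro j x; simp [hA, hB]
    have hAB : ∀ j, A j ⊆ B j := fun j => Finset.filter_subset _ _
    refine ⟨r, hr1, (fun j => (B j).card), (fun j => (A j).card), ?_, ?_, ?_, ?_, ?_⟩
    · -- 1 ≤ t j
      intro j
      refine Finset.card_pos.mpr ⟨v j, (hmemA j (v j)).mpr ⟨hev j, ?_⟩⟩
      obtain ⟨w, -, hw⟩ := Finset.mem_image.mp (hvI j)
      exact ⟨z0, w, hw⟩
    · exact fun j => Finset.card_le_card (hAB j)
    · -- sum of block sizes is m
      have h1 : (Finset.univ : Finset (Fin m)).card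
          = ∑ b ∈ I, (Finset.univ.filter (fun x => e x = b)).card :=
        Finset.card_eq_sum_card_fiberwise (fun x _ => hmem x)
      have h2 : ∑ b ∈ I, (Finset.univ.filter (fun x => e x = b)).card
          = ∑ j : Fin r, (B j).card := by
        rw [← Finset.sum_coe_sort I (fun b => (Finset.univ.filter (fun x => e x = b)).card)]
        exact (Equiv.sum_comp ι.symm
          (fun b : I => (Finset.univ.filter (fun x => e x = (b : Fin m))).card)).symm
      rw [← h1] at h2
      simpa using h2.symm
    · -- p ≤ ∏ card (A j)
      have hF : ∀ (c : Fin p) (j : Fin r), φ (c, ⟨0, hq⟩) (v j) ∈ A j := by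
        intro c j
        refine (hmemA j _).mpr ⟨?_, (c, ⟨0, hq⟩), v j, rfl⟩
        rw [hee, hev]
      have hFinj : Function.Injective
          (fun c : Fin p => (fun j => (⟨φ (c, ⟨0, hq⟩) (v j), hF c j⟩ : A j))) := by
        intro c c' hcc
        have hvals : ∀ j, φ (c, ⟨0, hq⟩) (v j) = φ (c', ⟨0, hq⟩) (v j) := by
          intro j
          have := congrFun hcc j
          exact congrArg Subtype.val this
        have : φ (c, ⟨0, hq⟩) = φ (c', ⟨0, hq⟩) := by
          funext w
          have h1 : φ (c, ⟨0, hq⟩) w = φ (c, ⟨0, hq⟩) (e w) := by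
            have := K z0 c ⟨0, hq⟩ w
            simpa [he] using this
          have h2 : φ (c', ⟨0, hq⟩) w = φ (c', ⟨0, hq⟩) (e w) := by
            have := K z0 c' ⟨0, hq⟩ w
            simpa [he] using this
          rw [h1, h2, ← hvjdx w, hvals]
        have := hinj this
        exact (Prod.mk.injEq _ _ _ _).mp this |>.1
      have hcard := Fintype.card_le_of_injective _ hFinj
      simpa [Fintype.card_pi, Fintype.card_coe] using hcard
    · -- q ≤ ∏ card (A j) ^ (card (B j) - card (A j))
      have hG : ∀ (d : Fin q) (j : Fin r) (x : (B j \ A j : Finset (Fin m))),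
          φ (⟨0, hp⟩, d) (x : Fin m) ∈ A j := by
        intro d j x
        have hxB : (x : Fin m) ∈ B j := (Finset.mem_sdiff.mp x.2).1
        refine (hmemA j _).mpr ⟨?_, (⟨0, hp⟩, d), x, rfl⟩
        rw [hee, (hmemB j _).mp hxB]
      have hGinj : Function.Injective
          (fun d : Fin q => (fun j => (fun x : (B j \ A j : Finset (Fin m)) =>
            (⟨φ (⟨0, hp⟩, d) (x : Fin m), hG d j x⟩ : A j)))) := by
        intro d d' hdd
        have hvals : ∀ (j : Fin r) (x : (B j \ A j : Finset (Fin m))),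
            φ (⟨0, hp⟩, d) (x : Fin m) = φ (⟨0, hp⟩, d') (x : Fin m) := by
          intro j x
          have := congrFun (congrFun hdd j) x
          exact congrArg Subtype.val this
        have : φ (⟨0, hp⟩, d) = φ (⟨0, hp⟩, d') := by
          funext w
          by_cases hw : ∃ z u, φ z u = w
          · obtain ⟨z, u, rfl⟩ := hw
            rw [← K z ⟨0, hp⟩ d u, ← K z ⟨0, hp⟩ d' u]
          · have hwmem : w ∈ B (jdx w) \ A (jdx w) := by
              refine Finset.mem_sdiff.mpr ⟨(hmemB _ _).mpr (hvjdx w).symm, ?_⟩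
              intro hwA
              exact hw ((hmemA _ _).mp hwA).2
            exact hvals (jdx w) ⟨w, hwmem⟩
        have := hinj this
        exact (Prod.mk.injEq _ _ _ _).mp this |>.2
      have hcard := Fintype.card_le_of_injective _ hGinj
      have hc2 : Fintype.card (∀ j : Fin r, (↥(B j \ A j) → ↥(A j)))
          = ∏ j, (A j).card ^ ((B j).card - (A j).card) := by
        rw [Fintype.card_pi]
        refine Finset.prod_congr rfl fun j _ => ?_
        rw [Fintype.card_fun, Fintype.card_coe, Fintype.card_coe,
          Finset.card_sdiff_of_subset (hAB j)]
      rw [← hc2]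
      simpa using hcard
  · rintro ⟨r, hr, s, t, ht1, hts, hsum, hpt, hqt⟩
    haveI : ∀ i : Fin r, NeZero (t i) := fun i => ⟨by have := ht1 i; omega⟩
    -- the carrier
    have hcardX : Fintype.card (Σ i : Fin r, (ZMod (t i) ⊕ Fin (s i - t i))) = m := by
      rw [Fintype.card_sigma, ← hsum]
      refine Finset.sum_congr rfl fun i _ => ?_
      rw [Fintype.card_sum, ZMod.card, Fintype.card_fin]
      have := hts i; omega
    obtain ⟨E⟩ : Nonempty ((Σ i : Fin r, (ZMod (t i) ⊕ Fin (s i - t i))) ≃ Fin m) := ⟨Fintype.equivFinOfCardEq hcardX⟩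
    -- encodings
    obtain ⟨P⟩ : Nonempty (Fin p ↪ ∀ i : Fin r, ZMod (t i)) := by
      refine Function.Embedding.nonempty_of_card_le ?_
      simpa [Fintype.card_pi, ZMod.card] using hpt
    obtain ⟨Q⟩ : Nonempty (Fin q ↪ ∀ i : Fin r, Fin (s i - t i) → ZMod (t i)) := by
      refine Function.Embedding.nonempty_of_card_le ?_
      simpa [Fintype.card_pi, Fintype.card_fun, ZMod.card] using hqt
    set ψ : Fin p × Fin q → (Σ i : Fin r, (ZMod (t i) ⊕ Fin (s i - t i))) → (Σ i : Fin r, (ZMod (t i) ⊕ Fin (s i - t i))) := fun ab x =>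
      match x with
      | ⟨i, Sum.inl _⟩ => ⟨i, Sum.inl (P ab.1 i)⟩
      | ⟨i, Sum.inr w⟩ => ⟨i, Sum.inl (P ab.1 i + (Q ab.2 i w - Q ⟨0, hq⟩ i w))⟩
      with hψ
    have hψlaw : ∀ (x y : Fin p × Fin q) (u : (Σ i : Fin r, (ZMod (t i) ⊕ Fin (s i - t i)))), ψ (y.1, ⟨0, hq⟩) u = ψ y (ψ x u) := by
      intro x y u
      obtain ⟨i, w⟩ := u
      cases w with
      | inl z => simp [hψ]
      | inr w => simp [hψ]
    have hψinj : Function.Injective ψ := by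
      intro ⟨a, b⟩ ⟨a', b'⟩ hab
      have ha : a = a' := by
        apply P.injective
        funext i
        have h0 := congrFun hab ⟨i, Sum.inl 0⟩
        simp only [hψ] at h0
        have h1 := eq_of_heq (Sigma.mk.inj_iff.mp h0).2
        exact Sum.inl.inj h1
      subst ha
      have hb : b = b' := by
        apply Q.injective
        funext i w
        have h0 := congrFun hab ⟨i, Sum.inr w⟩
        simp only [hψ] at h0
        have h1 := Sum.inl.inj (eq_of_heq (Sigma.mk.inj_iff.mp h0).2)
        have h3 : Q b i w - Q ⟨0, hq⟩ i w = Q b' i w - Q ⟨0, hq⟩ i w :=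
          add_left_cancel h1
        exact sub_left_injective h3
      rw [hb]
    refine ⟨fun z => fun x => E (ψ z (E.symm x)), ?_, ?_⟩
    · intro z z' hzz
      apply hψinj
      funext u
      have := congrFun hzz (E u)
      simpa using E.injective (by simpa using this)
    · intro x y
      funext w
      show E (ψ (y.1, ⟨0, hq⟩) (E.symm w)) = E (ψ y (E.symm (E (ψ x (E.symm w)))))
      rw [E.symm_apply_apply, hψlaw x y]
end

section
/- For integers p, q ≥ 2, the minimum transformation degree of a p×q right null semigroup equals min{2A + 3B + C + D : A, B, C, D integers, 0 ≤ A ≤ 2, B ≥ 0, D ≥ 0, C ≥ 2, 2^A·3^B·C ≥ p, and C^D ≥ q}. -/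
set_option maxHeartbeats 1000000

lemma two_three (m : ℕ) : ∃ a b : ℕ, m ≤ 2^a * 3^b ∧ 2*a + 3*b ≤ m := by
  induction m using Nat.strong_induction_on with
  | _ m ih =>
    by_cases hm : m ≤ 4
    · interval_cases m
      · exact ⟨0, 0, by norm_num⟩
      · exact ⟨0, 0, by norm_num⟩
      · exact ⟨1, 0, by norm_num⟩
      · exact ⟨0, 1, by norm_num⟩
      · exact ⟨2, 0, by norm_num⟩
    · obtain ⟨a, b, h1, h2⟩ := ih (m - 3) (by omega)
      refine ⟨a, b + 1, ?_, by omega⟩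
      have : 2^a * 3^(b+1) = (2^a * 3^b) * 3 := by ring
      rw [this]
      omega

lemma prod23 {ι : Type*} (S : Finset ι) (u : ι → ℕ) :
    ∃ a b : ℕ, (∏ s ∈ S, u s) ≤ 2^a * 3^b ∧ 2*a + 3*b ≤ ∑ s ∈ S, u s := by
  classical
  induction S using Finset.induction_on with
  | empty => exact ⟨0, 0, by simp⟩
  | @insert i S' hi ih =>
    obtain ⟨a1, b1, h1, h2⟩ := two_three (u i)
    obtain ⟨a2, b2, h3, h4⟩ := ih
    refine ⟨a1 + a2, b1 + b2, ?_, ?_⟩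
    · rw [Finset.prod_insert hi, pow_add, pow_add]
      calc u i * ∏ s ∈ S', u s ≤ (2^a1 * 3^b1) * (2^a2 * 3^b2) := Nat.mul_le_mul h1 h3
        _ = 2^a1 * 2^a2 * (3^b1 * 3^b2) := by ring
    · rw [Finset.sum_insert hi]; omega

lemma reduceA (a b : ℕ) : ∃ A B : ℕ, A ≤ 2 ∧ 2^a * 3^b ≤ 2^A * 3^B ∧ 2*A + 3*B ≤ 2*a + 3*b := by
  induction a using Nat.strong_induction_on generalizing b with
  | _ a ih =>
    by_cases ha : a ≤ 2
    · exact ⟨a, b, ha, le_rfl, le_rfl⟩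
    · obtain ⟨c, rfl⟩ : ∃ c, a = c + 3 := ⟨a - 3, by omega⟩
      obtain ⟨A, B, hA, h1, h2⟩ := ih c (by omega) (b + 2)
      refine ⟨A, B, hA, ?_, by omega⟩
      have e2 : 2^c * 3^(b+2) = 9 * (2^c * 3^b) := by ring
      calc 2^(c+3) * 3^b = 8 * (2^c * 3^b) := by ring
        _ ≤ 9 * (2^c * 3^b) := by omega
        _ = 2^c * 3^(b+2) := e2.symm
        _ ≤ 2^A * 3^B := h1

lemma key_numeric {ι κ : Type*} [DecidableEq ι] (S : Finset ι) (u : ι → ℕ) (V : Finset κ)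
    (g : κ → ι) (hg : ∀ v ∈ V, g v ∈ S) (p q : ℕ) (hp2 : 2 ≤ p)
    (hp : p ≤ ∏ s ∈ S, u s) (hq : q ≤ ∏ v ∈ V, u (g v)) :
    ∃ A B C D : ℕ, A ≤ 2 ∧ 2 ≤ C ∧ p ≤ 2^A * 3^B * C ∧ q ≤ C^D ∧
      2*A + 3*B + C + D ≤ (∑ s ∈ S, u s) + V.card := by
  classical
  set C := S.sup u with hC
  have hle : ∀ s ∈ S, u s ≤ C := fun s hs => Finset.le_sup hs
  have hSne : S.Nonempty := by
    by_contra h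
    rw [Finset.not_nonempty_iff_eq_empty] at h
    simp [h] at hp; omega
  obtain ⟨i, hi, hiC⟩ : ∃ i ∈ S, u i = C := by
    obtain ⟨i, hi, h⟩ := Finset.exists_mem_eq_sup S hSne u
    exact ⟨i, hi, h.symm⟩
  have hC2 : 2 ≤ C := by
    by_contra h
    have : ∏ s ∈ S, u s ≤ 1 := Finset.prod_le_one (fun _ _ => Nat.zero_le _)
      (fun s hs => by have := hle s hs; omega)
    omega
  obtain ⟨a, b, h1, h2⟩ := prod23 (S.erase i) u
  obtain ⟨A, B, hA, h3, h4⟩ := reduceA a b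
  refine ⟨A, B, C, V.card, hA, hC2, ?_, ?_, ?_⟩
  · calc p ≤ ∏ s ∈ S, u s := hp
      _ = u i * ∏ s ∈ S.erase i, u s := (Finset.mul_prod_erase S u hi).symm
      _ ≤ C * (2^A * 3^B) := by
          rw [hiC]; exact Nat.mul_le_mul le_rfl (h1.trans h3)
      _ = 2^A * 3^B * C := by ring
  · calc q ≤ ∏ v ∈ V, u (g v) := hq
      _ ≤ ∏ _v ∈ V, C := Finset.prod_le_prod (fun _ _ => Nat.zero_le _)
          (fun v hv => hle _ (hg v hv))
      _ = C ^ V.card := by rw [Finset.prod_const]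
  · have : ∑ s ∈ S, u s = u i + ∑ s ∈ S.erase i, u s := (Finset.add_sum_erase S u hi).symm
    omega

lemma lower (p q n : ℕ) (hp : 2 ≤ p) (hq : 2 ≤ q)
    (φ : Fin p × Fin q → (Fin n → Fin n)) (hinj : Function.Injective φ)
    (hom : ∀ x y : Fin p × Fin q, φ (y.1, (⟨0, Nat.lt_of_lt_of_le (by norm_num) hq⟩ : Fin q)) = tMul (φ x) (φ y)) :
    ∃ A B C D : ℕ, A ≤ 2 ∧ 2 ≤ C ∧ p ≤ 2^A * 3^B * C ∧ q ≤ C^D ∧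
      2*A + 3*B + C + D ≤ n := by
  classical
  set z0 : Fin q := (⟨0, Nat.lt_of_lt_of_le (by norm_num) hq⟩ : Fin q) with hz0
  set π : Fin n → (Fin p → Fin n) := fun z c => φ (c, z0) z with hπ
  set U : Finset (Fin n) :=
    Finset.image (fun w : (Fin p × Fin q) × Fin n => φ w.1 w.2) Finset.univ with hU
  have hUmem : ∀ x z, φ x z ∈ U := fun x z =>
    Finset.mem_image.mpr ⟨(x, z), Finset.mem_univ _, rfl⟩
  have h1 : ∀ (c : Fin p) (x : Fin p × Fin q) (z : Fin n),
      φ (c, z0) (φ x z) = φ (c, z0) z := by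
    intro c x z
    have := congrFun (hom x (c, z0)) z
    exact this.symm
  have h2 : ∀ (c : Fin p) (d : Fin q) (x : Fin p × Fin q) (z : Fin n),
      φ (c, d) (φ x z) = φ (c, z0) z := by
    intro c d x z
    have := congrFun (hom x (c, d)) z
    exact this.symm
  have hπφ : ∀ (x : Fin p × Fin q) (z : Fin n), π (φ x z) = π z := by
    intro x z
    funext c
    exact h1 c x z
  set S : Finset (Fin p → Fin n) := Finset.image π Finset.univ with hS
  set u : (Fin p → Fin n) → ℕ := fun s => (U.filter (fun z => π z = s)).card with hu
  -- representatives: for s ∈ S and c, s c is a member of the fiber of s inside U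
  have key : ∀ s ∈ S, ∀ c : Fin p, s c ∈ U.filter (fun z => π z = s) := by
    intro s hs c
    obtain ⟨z, _, rfl⟩ := Finset.mem_image.mp hs
    rw [Finset.mem_filter]
    exact ⟨hUmem (c, z0) z, hπφ (c, z0) z⟩
  -- p ≤ ∏ u
  have hpbound : p ≤ ∏ s ∈ S, u s := by
    set F : Fin p → (∀ s : {x // x ∈ S}, {z // z ∈ U.filter (fun z => π z = s.val)}) :=
      fun c s => ⟨s.val c, key s.val s.2 c⟩ with hF
    have hFinj : Function.Injective F := by
      intro c c' h
      have hval : ∀ s : {x // x ∈ S}, s.val c = s.val c' := by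
        intro s
        have := congrFun h s
        exact congrArg Subtype.val this
      have : φ (c, z0) = φ (c', z0) := by
        funext z
        have hz : π z ∈ S := Finset.mem_image.mpr ⟨z, Finset.mem_univ _, rfl⟩
        exact hval ⟨π z, hz⟩
      have := hinj this
      exact (Prod.mk.injEq _ _ _ _ ▸ this).1
    calc p = Fintype.card (Fin p) := (Fintype.card_fin p).symm
      _ ≤ Fintype.card (∀ s : {x // x ∈ S}, {z // z ∈ U.filter (fun z => π z = s.val)}) :=
          Fintype.card_le_of_injective F hFinj
      _ = ∏ s : {x // x ∈ S}, (U.filter (fun z => π z = s.val)).card := by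
          rw [Fintype.card_pi]
          apply Finset.prod_congr rfl
          intro s _
          exact Fintype.card_coe _
      _ = ∏ s ∈ S, u s := by
          rw [← Finset.prod_coe_sort S (fun s => u s)]
  -- q ≤ ∏ over V
  set V : Finset (Fin n) := Uᶜ with hV
  have hqbound : q ≤ ∏ v ∈ V, u (π v) := by
    set c0 : Fin p := (⟨0, by omega⟩ : Fin p) with hc0
    set G : Fin q → (∀ v : {x // x ∈ V}, {z // z ∈ U.filter (fun z => π z = π v.val)}) :=
      fun d v => ⟨φ (c0, d) v.val, by
        rw [Finset.mem_filter]
        exact ⟨hUmem (c0, d) v.val, hπφ (c0, d) v.val⟩⟩ with hG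
    have hGinj : Function.Injective G := by
      intro d d' h
      have hval : ∀ v ∈ V, φ (c0, d) v = φ (c0, d') v := by
        intro v hv
        have := congrFun h ⟨v, hv⟩
        exact congrArg Subtype.val this
      have : φ (c0, d) = φ (c0, d') := by
        funext z
        by_cases hz : z ∈ U
        · obtain ⟨w, _, rfl⟩ := Finset.mem_image.mp hz
          rw [h2 c0 d w.1 w.2, h2 c0 d' w.1 w.2]
        · exact hval z (Finset.mem_compl.mpr hz)
      have := hinj this
      exact (Prod.mk.injEq _ _ _ _ ▸ this).2
    calc q = Fintype.card (Fin q) := (Fintype.card_fin q).symm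
      _ ≤ Fintype.card (∀ v : {x // x ∈ V}, {z // z ∈ U.filter (fun z => π z = π v.val)}) :=
          Fintype.card_le_of_injective G hGinj
      _ = ∏ v : {x // x ∈ V}, u (π v.val) := by
          rw [Fintype.card_pi]
          apply Finset.prod_congr rfl
          intro v _
          exact Fintype.card_coe _
      _ = ∏ v ∈ V, u (π v) := by
          rw [← Finset.prod_coe_sort V (fun v => u (π v))]
  have hsum : (∑ s ∈ S, u s) + V.card = n := by
    have h3 : U.card = ∑ s ∈ S, u s := by
      apply Finset.card_eq_sum_card_fiberwise
      intro z _
      exact Finset.mem_image.mpr ⟨z, Finset.mem_univ _, rfl⟩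
    have h4 : U.card + Uᶜ.card = Fintype.card (Fin n) := Finset.card_add_card_compl U
    rw [← h3, hV]
    rw [Fintype.card_fin] at h4
    exact h4
  obtain ⟨A, B, C, D, hA, hC, hpc, hqc, hcost⟩ :=
    key_numeric S u V π (fun v _ => Finset.mem_image.mpr ⟨v, Finset.mem_univ _, rfl⟩)
      p q hp hpbound hqbound
  exact ⟨A, B, C, D, hA, hC, hpc, hqc, by omega⟩

lemma upper (p q : ℕ) (hp : 2 ≤ p) (hq : 2 ≤ q) (A B C D : ℕ) (hC : 2 ≤ C)
    (hpc : p ≤ 2^A * 3^B * C) (hqc : q ≤ C^D) :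
    ∃ φ : Fin p × Fin q → (Fin (2*A+3*B+C+D) → Fin (2*A+3*B+C+D)),
      Function.Injective φ ∧
      ∀ x y : Fin p × Fin q, φ (y.1, (⟨0, Nat.lt_of_lt_of_le (by norm_num) hq⟩ : Fin q)) = tMul (φ x) (φ y) := by
  classical
  haveI : NeZero C := ⟨by omega⟩
  have hcardX : Fintype.card ((Fin A × Fin 2) ⊕ ((Fin B × Fin 3) ⊕ (Fin C ⊕ Fin D)))
      = 2*A+3*B+C+D := by
    simp
    omega
  set e : ((Fin A × Fin 2) ⊕ ((Fin B × Fin 3) ⊕ (Fin C ⊕ Fin D))) ≃ Fin (2*A+3*B+C+D) :=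
    Fintype.equivFinOfCardEq hcardX with he
  have hcardT : Fintype.card ((Fin A → Fin 2) × ((Fin B → Fin 3) × Fin C)) = 2^A * 3^B * C := by
    simp
    ring
  set eT := Fintype.equivFinOfCardEq hcardT with heT
  set ι : Fin p → (Fin A → Fin 2) × ((Fin B → Fin 3) × Fin C) :=
    fun c => eT.symm (Fin.castLE hpc c) with hι
  have hιinj : Function.Injective ι := by
    intro c c' h
    have := eT.symm.injective h
    exact Fin.castLE_injective hpc this
  have hcardT' : Fintype.card (Fin D → Fin C) = C^D := by simp
  set eT' := Fintype.equivFinOfCardEq hcardT' with heT'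
  set ψ : Fin q → (Fin D → Fin C) := fun d => eT'.symm (Fin.castLE hqc d) with hψ
  have hψinj : Function.Injective ψ := by
    intro d d' h
    have := eT'.symm.injective h
    exact Fin.castLE_injective hqc this
  set z0 : Fin q := (⟨0, Nat.lt_of_lt_of_le (by norm_num) hq⟩ : Fin q) with hz0
  set r : Fin p → Fin C := fun c => (ι c).2.2 with hr
  set Ψ : Fin p → Fin q → (Fin D → Fin C) :=
    fun c d => Equiv.swap (ψ z0) (fun _ => r c) (ψ d) with hΨ
  have hΨ0 : ∀ c, Ψ c z0 = fun _ => r c := fun c => Equiv.swap_apply_left _ _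
  have hΨinj : ∀ c, Function.Injective (Ψ c) := fun c =>
    (Equiv.swap (ψ z0) (fun _ => r c)).injective.comp hψinj
  set φ' : Fin p × Fin q → ((Fin A × Fin 2) ⊕ ((Fin B × Fin 3) ⊕ (Fin C ⊕ Fin D))) →
      ((Fin A × Fin 2) ⊕ ((Fin B × Fin 3) ⊕ (Fin C ⊕ Fin D))) := fun s x =>
    match x with
    | .inl (i, _) => .inl (i, (ι s.1).1 i)
    | .inr (.inl (j, _)) => .inr (.inl (j, (ι s.1).2.1 j))
    | .inr (.inr (.inl _)) => .inr (.inr (.inl (r s.1)))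
    | .inr (.inr (.inr v)) => .inr (.inr (.inl (Ψ s.1 s.2 v))) with hφ'
  have hcomp : ∀ s t : Fin p × Fin q, ∀ x, φ' t (φ' s x) = φ' (t.1, z0) x := by
    intro s t x
    rcases x with ⟨i, _⟩ | (⟨j, _⟩ | (j | v))
    · rfl
    · rfl
    · rfl
    · show Sum.inr (Sum.inr (Sum.inl (r t.1))) = Sum.inr (Sum.inr (Sum.inl (Ψ t.1 z0 v)))
      rw [hΨ0 t.1]
  have hφ'inj : Function.Injective φ' := by
    intro s t h
    obtain ⟨c, d⟩ := s
    obtain ⟨c', d'⟩ := t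
    have hrr : (ι c).2.2 = (ι c').2.2 := by
      have h0 := congrFun h (Sum.inr (Sum.inr (Sum.inl (⟨0, by omega⟩ : Fin C))))
      simp only [hφ'] at h0
      have := Sum.inl.inj (Sum.inr.inj (Sum.inr.inj h0))
      exact this
    have h1 : (ι c).1 = (ι c').1 := by
      funext i
      have h0 := congrFun h (Sum.inl (i, 0))
      simp only [hφ'] at h0
      exact (Prod.ext_iff.mp (Sum.inl.inj h0)).2
    have h2 : (ι c).2.1 = (ι c').2.1 := by
      funext j
      have h0 := congrFun h (Sum.inr (Sum.inl (j, 0)))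
      simp only [hφ'] at h0
      exact (Prod.ext_iff.mp (Sum.inl.inj (Sum.inr.inj h0))).2
    have hcc : c = c' := by
      apply hιinj
      exact Prod.ext_iff.mpr ⟨h1, Prod.ext_iff.mpr ⟨h2, hrr⟩⟩
    subst hcc
    have hdd : d = d' := by
      apply hΨinj c
      funext v
      have h0 := congrFun h (Sum.inr (Sum.inr (Sum.inr v)))
      simp only [hφ'] at h0
      exact Sum.inl.inj (Sum.inr.inj (Sum.inr.inj h0))
    rw [hdd]
  refine ⟨fun s => fun w => e (φ' s (e.symm w)), ?_, ?_⟩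
  · intro s t h
    apply hφ'inj
    funext x
    have h5 := congrFun h (e x)
    simp only [Equiv.symm_apply_apply] at h5
    exact e.injective h5
  · intro x y
    funext w
    show e (φ' (y.1, z0) (e.symm w)) = e (φ' y (e.symm (e (φ' x (e.symm w)))))
    rw [Equiv.symm_apply_apply, hcomp x y (e.symm w)]


/-- For `p, q ≥ 2`, the minimum transformation degree of a `p × q` right null semigroup
(`Fin p × Fin q` with multiplication `(a,b)·(c,d) = (c, 0)`) equals
`min { 2A + 3B + C + D : 0 ≤ A ≤ 2, B, D ≥ 0, C ≥ 2, 2^A·3^B·C ≥ p, C^D ≥ q }`. -/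
theorem right_null_degree (p q : ℕ) (hp : 2 ≤ p) (hq : 2 ≤ q) :
    sInf {n | 1 ≤ n ∧ ∃ φ : Fin p × Fin q → (Fin n → Fin n), Function.Injective φ ∧
        ∀ x y : Fin p × Fin q, φ (y.1, (⟨0, by omega⟩ : Fin q)) = tMul (φ x) (φ y)}
      = sInf {k | ∃ A B C D : ℕ, A ≤ 2 ∧ 2 ≤ C ∧ p ≤ 2 ^ A * 3 ^ B * C ∧ q ≤ C ^ D ∧
          k = 2 * A + 3 * B + C + D} := by
  set LS : Set ℕ := {n | 1 ≤ n ∧ ∃ φ : Fin p × Fin q → (Fin n → Fin n), Function.Injective φ ∧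
      ∀ x y : Fin p × Fin q, φ (y.1, (⟨0, by omega⟩ : Fin q)) = tMul (φ x) (φ y)} with hLS
  set RS : Set ℕ := {k | ∃ A B C D : ℕ, A ≤ 2 ∧ 2 ≤ C ∧ p ≤ 2 ^ A * 3 ^ B * C ∧ q ≤ C ^ D ∧
      k = 2 * A + 3 * B + C + D} with hRS
  have hsub : ∀ k ∈ RS, k ∈ LS := by
    rintro k ⟨A, B, C, D, hA, hC, hpc, hqc, rfl⟩
    obtain ⟨φ, hinj, hhom⟩ := upper p q hp hq A B C D hC hpc hqc
    exact ⟨by omega, φ, hinj, hhom⟩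
  have hRSne : RS.Nonempty := by
    refine ⟨p + q, 0, 0, p, q, by omega, hp, by simpa using le_rfl, ?_, by omega⟩
    calc q ≤ 2 ^ q := Nat.le_of_lt (Nat.lt_two_pow_self (n := q))
      _ ≤ p ^ q := Nat.pow_le_pow_left hp q
  have hLSne : LS.Nonempty := ⟨sInf RS, hsub _ (Nat.sInf_mem hRSne)⟩
  apply le_antisymm
  · exact Nat.sInf_le (hsub _ (Nat.sInf_mem hRSne))
  · obtain ⟨hn1, φ, hinj, hhom⟩ := Nat.sInf_mem hLSne
    obtain ⟨A, B, C, D, hA, hC, hpc, hqc, hcost⟩ := lower p q (sInf LS) hp hq φ hinj hhom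
    calc sInf RS ≤ 2*A+3*B+C+D := Nat.sInf_le ⟨A, B, C, D, hA, hC, hpc, hqc, rfl⟩
      _ ≤ sInf LS := hcost
end

section
/- Let G be a finite group and let S = G ∪ {0} be the semigroup obtained from G by adjoining a zero element 0 (with 0·x = x·0 = 0·0 = 0 for all x ∈ G). Then the minimum transformation degree of S equals the minimum transformation degree of G plus 1: μ(S) = μ(G) + 1. -/
open Function

/-- Extend a faithful action on a finite type `X` with `card X ≤ m` to `Fin m`. -/
lemma extend_lemma {G : Type} {X : Type} [Fintype X] [DecidableEq X] {m : ℕ}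
    [Mul G] (hm : Fintype.card X ≤ m)
    (σ : G → X → X) (hσinj : Function.Injective σ)
    (hσmul : ∀ g h : G, σ (g * h) = fun x => σ h (σ g x)) :
    ∃ φ : G → Fin m → Fin m, Function.Injective φ ∧
      ∀ g h : G, φ (g * h) = tMul (φ g) (φ h) := by
  classical
  let ι : X → Fin m := fun x => Fin.castLE hm (Fintype.equivFin X x)
  have hι : Function.Injective ι := by
    intro a b hab
    have := Fin.castLE_injective hm hab
    exact (Fintype.equivFin X).injective this
  let φ' : G → Fin m → Fin m := fun g x => if h : ∃ y, ι y = x then ι (σ g h.choose) else x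
  have hkey : ∀ (g : G) (y : X), φ' g (ι y) = ι (σ g y) := by
    intro g y
    have h1 : ∃ y', ι y' = ι y := ⟨y, rfl⟩
    show dite _ _ _ = _
    rw [dif_pos h1]
    congr 1
    congr 1
    exact hι h1.choose_spec
  have hout : ∀ (g : G) (x : Fin m), (¬ ∃ y, ι y = x) → φ' g x = x := by
    intro g x hx
    show dite _ _ _ = _
    rw [dif_neg hx]
  refine ⟨φ', ?_, ?_⟩
  · intro g h hgh
    apply hσinj
    funext y
    apply hι
    rw [← hkey g y, ← hkey h y, hgh]
  · intro g h
    funext x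
    show φ' (g * h) x = φ' h (φ' g x)
    by_cases hx : ∃ y, ι y = x
    · obtain ⟨y, rfl⟩ := hx
      rw [hkey, hkey, hkey, hσmul]
    · rw [hout _ _ hx, hout _ _ hx, hout _ _ hx]

lemma down_lemma {G : Type} [Group G] [Fintype G] {n : ℕ}
    (ψ : WithZero G → Fin n → Fin n) (hinj : Function.Injective ψ)
    (hmul : ∀ x y : WithZero G, ψ (x * y) = tMul (ψ x) (ψ y)) :
    2 ≤ n ∧ ∃ φ : G → Fin (n-1) → Fin (n-1), Function.Injective φ ∧
      ∀ g h : G, φ (g * h) = tMul (φ g) (φ h) := by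
  classical
  have hzne1 : (0 : WithZero G) ≠ 1 := zero_ne_one
  have hn2 : 2 ≤ n := by
    by_contra hc
    push_neg at hc
    have : Subsingleton (Fin n → Fin n) := by
      interval_cases n
      · exact ⟨fun f g => funext fun x => x.elim0⟩
      · exact ⟨fun f g => funext fun x => Subsingleton.elim _ _⟩
    exact hzne1 (hinj (Subsingleton.elim _ _))
  refine ⟨hn2, ?_⟩
  set e := ψ 1 with he_def
  set z := ψ 0 with hz_def
  have he : ∀ x, e (e x) = e x := by
    intro x
    have := hmul 1 1
    rw [one_mul] at this
    exact (congrFun this x).symm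
  have hze : ∀ x, e (z x) = z x := by
    intro x
    have := hmul 0 1
    rw [mul_one] at this
    exact (congrFun this x).symm
  have hgz : ∀ (g : G) x, ψ g (z x) = z x := by
    intro g x
    have := hmul 0 g
    rw [zero_mul] at this
    exact (congrFun this x).symm
  have hg_range : ∀ (g : G) x, e (ψ g x) = ψ g x := by
    intro g x
    have := hmul g 1
    rw [mul_one] at this
    exact (congrFun this x).symm
  have hg_e : ∀ (g : G) x, ψ g (e x) = ψ g x := by
    intro g x
    have := hmul 1 g
    rw [one_mul] at this
    exact (congrFun this x).symm
  have hinv : ∀ (g : G) x, ψ ((g⁻¹ : G) : WithZero G) (ψ g x) = e x := by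
    intro g x
    have := hmul (g : WithZero G) ((g⁻¹ : G) : WithZero G)
    rw [← WithZero.coe_mul, mul_inv_cancel] at this
    exact (congrFun this x).symm
  have hgmul : ∀ (g h : G) x, ψ ((g * h : G) : WithZero G) x = ψ h (ψ g x) := by
    intro g h x
    have := hmul (g : WithZero G) (h : WithZero G)
    rw [← WithZero.coe_mul] at this
    exact congrFun this x
  -- Y : fixed points of e
  let Y := {x : Fin n // e x = x}
  have hnpos : 0 < n := by omega
  let i0 : Fin n := ⟨0, hnpos⟩
  let y0 : Y := ⟨z i0, hze i0⟩
  let X := {y : Y // y ≠ y0}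
  -- ψ g maps Y \ {y0} to itself
  have hne : ∀ (g : G) (y : Y), y ≠ y0 → ψ g y.1 ≠ z i0 := by
    intro g y hy hcontra
    apply hy
    have h1 : ψ ((g⁻¹ : G) : WithZero G) (ψ g y.1) = y.1 := by rw [hinv, y.2]
    rw [hcontra, hgz] at h1
    exact Subtype.ext h1.symm
  let σ : G → X → X := fun g p =>
    ⟨⟨ψ g p.1.1, hg_range g _⟩, fun hc => hne g p.1 p.2 (congrArg Subtype.val hc)⟩
  have hσinj : Function.Injective σ := by
    intro g h hgh
    have hYeq : ∀ y : Y, ψ g y.1 = ψ h y.1 := by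
      intro y
      by_cases hy : y = y0
      · rw [hy]
        show ψ g (z i0) = ψ h (z i0)
        rw [hgz, hgz]
      · have := congrArg (fun p => p.1.1) (congrFun hgh ⟨y, hy⟩)
        exact this
    have hfull : ψ (g : WithZero G) = ψ (h : WithZero G) := by
      funext x
      have h1 : ψ (g : WithZero G) x = ψ g (e x) := (hg_e g x).symm
      have h2 : ψ (h : WithZero G) x = ψ h (e x) := (hg_e h x).symm
      rw [h1, h2]
      exact hYeq ⟨e x, he x⟩
    exact WithZero.coe_inj.mp (hinj hfull)
  have hσmul : ∀ g h : G, σ (g * h) = fun x => σ h (σ g x) := by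
    intro g h
    funext p
    apply Subtype.ext
    apply Subtype.ext
    exact hgmul g h p.1.1
  have hcardY : Fintype.card Y ≤ n := by
    have := Fintype.card_subtype_le (fun x : Fin n => e x = x)
    simpa using this
  have hcardX : Fintype.card X ≤ n - 1 := by
    have h1 : Fintype.card X = Fintype.card Y - Fintype.card {y : Y // y = y0} := by
      have := Fintype.card_subtype_compl (fun y : Y => y = y0)
      simpa [X] using this
    have h2 : Fintype.card {y : Y // y = y0} = 1 := Fintype.card_subtype_eq y0
    omega
  exact extend_lemma hcardX σ hσinj hσmul

lemma up_lemma {G : Type} [Group G] {n : ℕ}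
    (φ : G → Fin n → Fin n) (hinj : Function.Injective φ) (hn : 1 ≤ n)
    (hmul : ∀ g h : G, φ (g * h) = tMul (φ g) (φ h)) :
    ∃ ψ : WithZero G → Fin (n+1) → Fin (n+1), Function.Injective ψ ∧
      ∀ x y : WithZero G, ψ (x * y) = tMul (ψ x) (ψ y) := by
  let ψ : WithZero G → Fin (n+1) → Fin (n+1) :=
    WithZero.recZeroCoe (fun _ => Fin.last n)
      (fun g => Fin.snoc (fun i => (φ g i).castSucc) (Fin.last n))
  have hψ0 : ψ 0 = fun _ => Fin.last n := rfl
  have hψc : ∀ g : G, ψ g = Fin.snoc (fun i => (φ g i).castSucc) (Fin.last n) := fun g => rfl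
  have hlast : ∀ x : WithZero G, ψ x (Fin.last n) = Fin.last n := by
    intro x
    induction x with
    | zero => rfl
    | coe g => rw [hψc]; simp [Fin.snoc_last]
  refine ⟨ψ, ?_, ?_⟩
  · intro x y hxy
    induction x with
    | zero =>
      induction y with
      | zero => rfl
      | coe h =>
        exfalso
        have := congrFun hxy ((⟨0, hn⟩ : Fin n).castSucc)
        rw [hψ0, hψc] at this
        simp only [Fin.snoc_castSucc] at this
        exact (Fin.castSucc_lt_last (φ h ⟨0, hn⟩)).ne this.symm
    | coe g =>
      induction y with
      | zero =>
        exfalso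
        have := congrFun hxy ((⟨0, hn⟩ : Fin n).castSucc)
        rw [hψ0, hψc] at this
        simp only [Fin.snoc_castSucc] at this
        exact (Fin.castSucc_lt_last (φ g ⟨0, hn⟩)).ne this
      | coe h =>
        have : φ g = φ h := by
          funext i
          have := congrFun hxy i.castSucc
          rw [hψc, hψc] at this
          simp only [Fin.snoc_castSucc] at this
          exact Fin.castSucc_injective n this
        rw [hinj this]
  · intro x y
    induction x with
    | zero =>
      rw [zero_mul]
      funext u
      show ψ 0 u = ψ y (ψ 0 u)
      rw [hψ0]
      exact (hlast y).symm
    | coe g =>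
      induction y with
      | zero =>
        rw [mul_zero]
        funext u
        rfl
      | coe h =>
        rw [← WithZero.coe_mul]
        funext u
        show ψ ((g*h : G) : WithZero G) u = ψ h (ψ g u)
        rw [hψc, hψc, hψc]
        refine Fin.lastCases ?_ ?_ u
        · simp [Fin.snoc_last]
        · intro i
          simp only [Fin.snoc_castSucc]
          rw [hmul]
          rfl

/-- For a finite group `G`, the minimum transformation degree of the semigroup `G ∪ {0}`
obtained by adjoining a zero (modelled as `WithZero G`) equals the minimum transformation
degree of `G` plus one. -/
theorem degree_group_with_zero (G : Type) [Group G] [Fintype G] :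
    sInf {n | 1 ≤ n ∧ ∃ φ : WithZero G → (Fin n → Fin n), Function.Injective φ ∧
        ∀ x y : WithZero G, φ (x * y) = tMul (φ x) (φ y)}
      = sInf {n | 1 ≤ n ∧ ∃ φ : G → (Fin n → Fin n), Function.Injective φ ∧
        ∀ x y : G, φ (x * y) = tMul (φ x) (φ y)} + 1 := by
  classical
  set A := {n | 1 ≤ n ∧ ∃ φ : WithZero G → (Fin n → Fin n), Function.Injective φ ∧
      ∀ x y : WithZero G, φ (x * y) = tMul (φ x) (φ y)} with hA_def
  set B := {n | 1 ≤ n ∧ ∃ φ : G → (Fin n → Fin n), Function.Injective φ ∧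
      ∀ x y : G, φ (x * y) = tMul (φ x) (φ y)} with hB_def
  -- B is nonempty (Cayley)
  have hBne : (Fintype.card G) ∈ B := by
    refine ⟨Fintype.card_pos, ?_⟩
    have := extend_lemma (G := G) (X := G) (m := Fintype.card G) le_rfl
      (fun g x => x * g)
      (fun g h hgh => by
        have := congrFun hgh 1
        simpa using this)
      (fun g h => by funext x; simp [mul_assoc])
    exact this
  have hBmem : sInf B ∈ B := Nat.sInf_mem ⟨_, hBne⟩
  obtain ⟨hB1, φ, hφinj, hφmul⟩ := hBmem
  obtain ⟨ψ, hψinj, hψmul⟩ := up_lemma φ hφinj hB1 (fun g h => hφmul g h)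
  have hAmem' : sInf B + 1 ∈ A := ⟨by omega, ψ, hψinj, hψmul⟩
  have hAmem : sInf A ∈ A := Nat.sInf_mem ⟨_, hAmem'⟩
  obtain ⟨hA1, χ, hχinj, hχmul⟩ := hAmem
  obtain ⟨h2, ρ, hρinj, hρmul⟩ := down_lemma χ hχinj hχmul
  have hBmem2 : sInf A - 1 ∈ B := ⟨by omega, ρ, hρinj, fun g h => hρmul g h⟩
  have h3 : sInf B ≤ sInf A - 1 := Nat.sInf_le hBmem2
  have h4 : sInf A ≤ sInf B + 1 := Nat.sInf_le hAmem'
  omega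
end
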